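/- arXiv:2404.00794 — 11 statements merged into one kernel-verified Lean document; each statement's English description precedes it below -/
import Mathlib

section
/- Let t > 1 be an integer and let c_1 < c_2 < ... < c_m be positive reals satisfying c_{i+1} < t·c_i for all i in [m-1]. Then for any positive real Q ≤ t·c_m, there exist integers b_1, ..., b_m ∈ [0, t-1] such that |∑_{i=1}^m b_i·c_i − Q| ≤ c_1. -/
private lemma greedy_aux (t : ℕ) (ht : 1 < t) (c : ℕ → ℝ) :
    ∀ m : ℕ, 1 ≤ m → (∀ i ∈ Finset.Icc 1 m, 0 < c i) →
    (∀ i ∈ Finset.Icc 1 (m - 1), c i < c (i + 1) ∧ c (i + 1) < t * c i) →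
    ∀ Q : ℝ, 0 < Q → Q ≤ t * c m →
    ∃ b : ℕ → ℕ, (∀ i ∈ Finset.Icc 1 m, b i ≤ t - 1) ∧
      |(∑ i ∈ Finset.Icc 1 m, (b i : ℝ) * c i) - Q| ≤ c 1 := by
  intro m hm
  induction m, hm using Nat.le_induction with
  | base =>
    intro hpos _ Q hQpos hQ
    have hc : 0 < c 1 := hpos 1 (by simp)
    set B := min (⌊Q / c 1⌋₊) (t - 1) with hB
    have hBle : (B : ℝ) * c 1 ≤ Q := by
      have h1 : (B : ℝ) ≤ ⌊Q / c 1⌋₊ := by exact_mod_cast min_le_left _ _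
      have h2 : (⌊Q / c 1⌋₊ : ℝ) ≤ Q / c 1 := Nat.floor_le (by positivity)
      calc (B : ℝ) * c 1 ≤ (Q / c 1) * c 1 := by
            apply mul_le_mul_of_nonneg_right (h1.trans h2) hc.le
        _ = Q := div_mul_cancel₀ _ hc.ne'
    have hup : Q - (B : ℝ) * c 1 ≤ c 1 := by
      rcases le_or_gt (⌊Q / c 1⌋₊) (t - 1) with h | h
      · have hBeq : B = ⌊Q / c 1⌋₊ := min_eq_left h
        have := Nat.lt_succ_floor (Q / c 1)
        have h3 : Q / c 1 < (B : ℝ) + 1 := by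
          rw [hBeq]; exact_mod_cast this
        have : Q < ((B : ℝ) + 1) * c 1 := by
          rwa [div_lt_iff₀ hc] at h3
        nlinarith
      · have hBeq : B = t - 1 := min_eq_right h.le
        have ht1 : ((t - 1 : ℕ) : ℝ) = (t : ℝ) - 1 := by
          have : 1 ≤ t := ht.le
          push_cast [this]; ring
        rw [hBeq, ht1]
        nlinarith
    refine ⟨fun _ => B, fun i _ => min_le_right _ _, ?_⟩
    simp only [Finset.Icc_self, Finset.sum_singleton]
    rw [abs_le]; constructor <;> nlinarith
  | succ m hm ih =>
    intro hpos hmono Q hQpos hQ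
    have hsub : Finset.Icc 1 m ⊆ Finset.Icc 1 (m + 1) :=
      Finset.Icc_subset_Icc_right (by omega)
    have hpos' : ∀ i ∈ Finset.Icc 1 m, 0 < c i := fun i hi => hpos i (hsub hi)
    have hmono' : ∀ i ∈ Finset.Icc 1 (m - 1), c i < c (i + 1) ∧ c (i + 1) < t * c i := by
      intro i hi
      exact hmono i (Finset.Icc_subset_Icc_right (by omega) hi)
    have hc1 : 0 < c 1 := hpos 1 (by simp)
    have hcm1 : 0 < c (m + 1) := hpos (m + 1) (by simp)
    have hstep : c (m + 1) < t * c m := by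
      have := hmono m (by simp [Nat.add_sub_cancel]; omega)
      exact this.2
    set B := min (⌊Q / c (m + 1)⌋₊) (t - 1) with hB
    have hBbd : B ≤ t - 1 := min_le_right _ _
    have hBle : (B : ℝ) * c (m + 1) ≤ Q := by
      have h1 : (B : ℝ) ≤ ⌊Q / c (m + 1)⌋₊ := by exact_mod_cast min_le_left _ _
      have h2 : (⌊Q / c (m + 1)⌋₊ : ℝ) ≤ Q / c (m + 1) := Nat.floor_le (by positivity)
      calc (B : ℝ) * c (m + 1) ≤ (Q / c (m + 1)) * c (m + 1) :=
            mul_le_mul_of_nonneg_right (h1.trans h2) hcm1.le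
        _ = Q := div_mul_cancel₀ _ hcm1.ne'
    have hup : Q - (B : ℝ) * c (m + 1) ≤ c (m + 1) := by
      rcases le_or_gt (⌊Q / c (m + 1)⌋₊) (t - 1) with h | h
      · have hBeq : B = ⌊Q / c (m + 1)⌋₊ := min_eq_left h
        have h3 : Q / c (m + 1) < (B : ℝ) + 1 := by
          rw [hBeq]; exact_mod_cast Nat.lt_succ_floor (Q / c (m + 1))
        have : Q < ((B : ℝ) + 1) * c (m + 1) := by rwa [div_lt_iff₀ hcm1] at h3
        nlinarith
      · have hBeq : B = t - 1 := min_eq_right h.le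
        have ht1 : ((t - 1 : ℕ) : ℝ) = (t : ℝ) - 1 := by
          have : 1 ≤ t := ht.le
          push_cast [this]; ring
        rw [hBeq, ht1]
        nlinarith
    set Q' := Q - (B : ℝ) * c (m + 1) with hQ'
    have hQ'0 : 0 ≤ Q' := by simp [hQ']; linarith
    rcases le_or_gt Q' (c 1) with hsmall | hbig
    · set b : ℕ → ℕ := fun i => if i = m + 1 then B else 0 with hb
      have hsum : ∑ i ∈ Finset.Icc 1 (m + 1), (b i : ℝ) * c i = (B : ℝ) * c (m + 1) := by
        rw [Finset.sum_Icc_succ_top (by omega : 1 ≤ m + 1)]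
        have h0 : ∀ i ∈ Finset.Icc 1 m, (b i : ℝ) * c i = 0 := by
          intro i hi
          simp only [Finset.mem_Icc] at hi
          have : i ≠ m + 1 := by omega
          simp [hb, this]
        rw [Finset.sum_congr rfl h0]
        simp [hb]
      refine ⟨b, ?_, ?_⟩
      · intro i _
        simp only [hb]
        split <;> omega
      · rw [hsum, abs_le]
        constructor <;> simp [hQ'] at hsmall hQ'0 ⊢ <;> linarith
    · have hQ'pos : 0 < Q' := lt_trans hc1 hbig
      have hQ'le : Q' ≤ t * c m := le_trans hup hstep.le
      obtain ⟨b', hb'bd, hb'⟩ := ih hpos' hmono' Q' hQ'pos hQ'le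
      set b : ℕ → ℕ := fun i => if i = m + 1 then B else b' i with hb
      have hsum : ∑ i ∈ Finset.Icc 1 (m + 1), (b i : ℝ) * c i
          = (∑ i ∈ Finset.Icc 1 m, (b' i : ℝ) * c i) + (B : ℝ) * c (m + 1) := by
        rw [Finset.sum_Icc_succ_top (by omega : 1 ≤ m + 1)]
        congr 1
        · apply Finset.sum_congr rfl
          intro i hi
          simp only [Finset.mem_Icc] at hi
          have : i ≠ m + 1 := by omega
          simp [hb, this]
        · simp [hb]
      refine ⟨b, ?_, ?_⟩
      · intro i hi
        simp only [hb, Finset.mem_Icc] at hi ⊢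
        split
        · exact hBbd
        · rcases Nat.lt_or_ge i (m + 1) with h | h
          · exact hb'bd i (by simp only [Finset.mem_Icc]; omega)
          · omega
      · rw [hsum]
        have heq : (∑ i ∈ Finset.Icc 1 m, (b' i : ℝ) * c i) + (B : ℝ) * c (m + 1) - Q
            = (∑ i ∈ Finset.Icc 1 m, (b' i : ℝ) * c i) - Q' := by
          simp [hQ']; ring
        rw [heq]
        exact hb'

theorem greedy_approx (t m : ℕ) (ht : 1 < t) (hm : 1 ≤ m) (c : ℕ → ℝ)
    (hpos : ∀ i ∈ Finset.Icc 1 m, 0 < c i)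
    (hmono : ∀ i ∈ Finset.Icc 1 (m - 1), c i < c (i + 1) ∧ c (i + 1) < t * c i)
    (Q : ℝ) (hQpos : 0 < Q) (hQ : Q ≤ t * c m) :
    ∃ b : ℕ → ℕ, (∀ i ∈ Finset.Icc 1 m, b i ≤ t - 1) ∧
      |(∑ i ∈ Finset.Icc 1 m, (b i : ℝ) * c i) - Q| ≤ c 1 := by
  exact greedy_aux t ht c m hm hpos hmono Q hQpos hQ
end

section
/- Let m, n ∈ ℕ and let x_1, ..., x_n be a sequence of nonnegative reals satisfying ∑_{j=1}^{i} j·x_j ≤ (i−1)·m for all i ∈ [n]. Then ∑_{j=1}^{n} x_j ≤ 2m·(1 + log₂ n). -/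
theorem weighted_sum_bound (m n : ℕ) (x : ℕ → ℝ)
    (hx : ∀ j ∈ Finset.Icc 1 n, 0 ≤ x j)
    (h : ∀ i ∈ Finset.Icc 1 n, ∑ j ∈ Finset.Icc 1 i, (j : ℝ) * x j ≤ ((i : ℝ) - 1) * m) :
    ∑ j ∈ Finset.Icc 1 n, x j ≤ 2 * m * (1 + Real.logb 2 n) := by
  have hM : (0 : ℝ) ≤ m := Nat.cast_nonneg m
  rcases Nat.eq_zero_or_pos n with hn | hn
  · subst hn
    simp
  set S : ℕ → ℝ := fun i => ∑ j ∈ Finset.Icc 1 i, (j : ℝ) * x j with hSdef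
  have hSnonneg : ∀ k, k ≤ n → 0 ≤ S k := by
    intro k hk
    apply Finset.sum_nonneg
    intro j hj
    have hj' : j ∈ Finset.Icc 1 n := by
      simp only [Finset.mem_Icc] at hj ⊢
      exact ⟨hj.1, hj.2.trans hk⟩
    exact mul_nonneg (Nat.cast_nonneg j) (hx j hj')
  have key : ∀ k, 1 ≤ k → k ≤ n →
      ∑ j ∈ Finset.Icc 1 k, x j ≤ S k / k + m * ((harmonic k : ℝ) - 1) := by
    intro k hk1
    induction k, hk1 using Nat.le_induction with
    | base =>
      intro _
      simp [hSdef, harmonic]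
    | succ k hk ih =>
      intro hkn
      have hkn' : k ≤ n := le_trans (Nat.le_succ k) hkn
      have ihk := ih hkn'
      have hkmem : k ∈ Finset.Icc 1 n := Finset.mem_Icc.mpr ⟨hk, hkn'⟩
      have hSk : S k ≤ ((k : ℝ) - 1) * m := h k hkmem
      have hkr : (1 : ℝ) ≤ (k : ℝ) := by exact_mod_cast hk
      have hkpos : (0 : ℝ) < (k : ℝ) := lt_of_lt_of_le one_pos hkr
      have hk1pos : (0 : ℝ) < (k : ℝ) + 1 := by linarith
      have hsplit : ∑ j ∈ Finset.Icc 1 (k + 1), x j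
          = ∑ j ∈ Finset.Icc 1 k, x j + x (k + 1) :=
        Finset.sum_Icc_succ_top (Nat.le_succ_of_le hk) x
      have hSsplit : S (k + 1) = S k + ((k : ℝ) + 1) * x (k + 1) := by
        have := Finset.sum_Icc_succ_top (Nat.le_succ_of_le hk)
          (fun j => (j : ℝ) * x j)
        simp only [hSdef] at this ⊢
        rw [this]
        push_cast
        ring
      have hxval : x (k + 1) = (S (k + 1) - S k) / ((k : ℝ) + 1) := by
        rw [hSsplit]
        field_simp
        ring
      have h1 : S k / (k : ℝ) ≤ S k / ((k : ℝ) + 1) + (m : ℝ) / ((k : ℝ) + 1) := by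
        rw [div_add_div _ _ (ne_of_gt hk1pos) (ne_of_gt hk1pos), div_le_div_iff₀ hkpos (by positivity)]
        have hSk' : S k ≤ (k : ℝ) * m := by nlinarith
        nlinarith
      have hharm : (harmonic (k + 1) : ℝ) = (harmonic k : ℝ) + 1 / ((k : ℝ) + 1) := by
        rw [harmonic_succ]
        push_cast
        ring
      rw [hsplit, hxval, hharm]
      have e1 : (S (k + 1) - S k) / ((k : ℝ) + 1)
          = S (k + 1) / ((k : ℝ) + 1) - S k / ((k : ℝ) + 1) := by ring
      have e2 : (m : ℝ) * ((harmonic k : ℝ) + 1 / ((k : ℝ) + 1) - 1)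
          = (m : ℝ) * ((harmonic k : ℝ) - 1) + (m : ℝ) / ((k : ℝ) + 1) := by ring
      push_cast
      rw [e1, e2]
      push_cast at ihk h1
      linarith
  have hmain := key n hn le_rfl
  have hnmem : n ∈ Finset.Icc 1 n := Finset.mem_Icc.mpr ⟨hn, le_rfl⟩
  have hSn : S n ≤ ((n : ℝ) - 1) * m := h n hnmem
  have hnr : (1 : ℝ) ≤ (n : ℝ) := by exact_mod_cast hn
  have hnpos : (0 : ℝ) < (n : ℝ) := lt_of_lt_of_le one_pos hnr
  have hSdiv : S n / (n : ℝ) ≤ (m : ℝ) := by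
    rw [div_le_iff₀ hnpos]
    nlinarith
  have hH : (harmonic n : ℝ) ≤ 1 + Real.log n := harmonic_le_one_add_log n
  have hlogn : 0 ≤ Real.log n := Real.log_nonneg hnr
  have hlog2 : 0 < Real.log 2 := Real.log_pos (by norm_num)
  have hlog2lt : Real.log 2 < 1 := by
    have := Real.log_two_lt_d9
    linarith
  have hlogb : Real.log n ≤ Real.logb 2 n := by
    rw [Real.logb, le_div_iff₀ hlog2]
    nlinarith
  have hlogbnn : 0 ≤ Real.logb 2 n := le_trans hlogn hlogb
  have : ∑ j ∈ Finset.Icc 1 n, x j ≤ (m : ℝ) * (harmonic n : ℝ) := by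
    calc ∑ j ∈ Finset.Icc 1 n, x j ≤ S n / n + m * ((harmonic n : ℝ) - 1) := hmain
      _ ≤ m + m * ((harmonic n : ℝ) - 1) := by linarith
      _ = (m : ℝ) * (harmonic n : ℝ) := by ring
  have hfin : (m : ℝ) * (harmonic n : ℝ) ≤ 2 * m * (1 + Real.logb 2 n) := by
    have h1 : (m : ℝ) * (harmonic n : ℝ) ≤ m * (1 + Real.log n) :=
      mul_le_mul_of_nonneg_left hH hM
    nlinarith
  linarith
end

section
/- Fix integers d ≥ 2, t ∈ [d], and let p(z) = a_d z^d + ... + a_1 z + a_0 ∈ ℤ[z] with a_d > 0. For k, s ∈ ℕ define m_s(k) = p(k+s) − p(k) and the sequence b^{t,s}_j equal to (−1)^r·binom(t,r) when j = r·s for r ∈ [t], and 0 otherwise. Then there exist integers h_{r,i} for t ≤ r ≤ d, 0 ≤ i ≤ d−t with r ≥ t+i, depending only on p, d, t (not on s, k), such that ∑_j b^{t,s}_j · m_j(k) = ∑_{i=0}^{d−t} ∑_{r=t+i}^{d} h_{r,i}·s^{r−i}·k^i for all s, k ∈ ℕ, and moreover h_{d,d−t} ≠ 0, and if t ≤ d−1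 then also h_{d,d−t−1} ≠ 0. -/
open Finset

private def Sb (t m : ℕ) : ℤ := ∑ r ∈ range (t+1), (-1)^r * (t.choose r : ℤ) * (r : ℤ)^m

private lemma Sb_rec (t m : ℕ) :
    Sb (t+1) m = - ∑ j ∈ range m, (m.choose j : ℤ) * Sb t j := by
  have h1 : ∀ r : ℕ, ((r:ℤ)+1)^m = ∑ j ∈ range (m+1), (m.choose j : ℤ) * (r:ℤ)^j := by
    intro r
    rw [add_pow]
    refine sum_congr rfl fun j _ => by ring
  have A : ∑ r ∈ range (t+1), (-1:ℤ)^r * (t.choose r : ℤ) * ((r:ℤ)+1)^m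
      = ∑ j ∈ range (m+1), (m.choose j : ℤ) * Sb t j := by
    simp only [h1, mul_sum]
    rw [sum_comm]
    refine sum_congr rfl fun j _ => by
      simp only [Sb, mul_sum]
      refine sum_congr rfl fun r _ => by ring
  have B : Sb (t+1) m = Sb t m - ∑ r ∈ range (t+1), (-1:ℤ)^r * (t.choose r : ℤ) * ((r:ℤ)+1)^m := by
    have e1 : Sb (t+1) m
        = (∑ r ∈ range (t+1), (-1:ℤ)^(r+1) * ((t+1).choose (r+1) : ℤ) * ((r:ℤ)+1)^m)
          + (-1:ℤ)^0 * ((t+1).choose 0 : ℤ) * (0:ℤ)^m := by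
      rw [Sb, Finset.sum_range_succ']
      push_cast
      ring_nf
    have e2 : Sb t m
        = (∑ r ∈ range t, (-1:ℤ)^(r+1) * (t.choose (r+1) : ℤ) * ((r:ℤ)+1)^m)
          + (-1:ℤ)^0 * ((t).choose 0 : ℤ) * (0:ℤ)^m := by
      rw [Sb, Finset.sum_range_succ']
      push_cast
      ring_nf
    have e3 : ∀ r, ((t+1).choose (r+1) : ℤ) = (t.choose r : ℤ) + (t.choose (r+1) : ℤ) := by
      intro r; rw [Nat.choose_succ_succ]; push_cast; ring
    rw [e1, e2]
    have e4 : (∑ r ∈ range (t+1), (-1:ℤ)^(r+1) * (t.choose (r+1) : ℤ) * ((r:ℤ)+1)^m)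
        = ∑ r ∈ range t, (-1:ℤ)^(r+1) * (t.choose (r+1) : ℤ) * ((r:ℤ)+1)^m := by
      rw [Finset.sum_range_succ, Nat.choose_succ_self]
      simp
    simp only [e3]
    rw [← e4]
    have split : ∑ x ∈ range (t+1), (-1:ℤ)^(x+1) * ((t.choose x : ℤ) + (t.choose (x+1) : ℤ)) * ((x:ℤ)+1)^m
        = (∑ x ∈ range (t+1), -((-1:ℤ)^x * (t.choose x : ℤ) * ((x:ℤ)+1)^m))
          + ∑ x ∈ range (t+1), (-1:ℤ)^(x+1) * (t.choose (x+1) : ℤ) * ((x:ℤ)+1)^m := by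
      rw [← sum_add_distrib]
      exact sum_congr rfl fun x _ => by ring
    rw [split, Finset.sum_neg_distrib]
    simp only [Nat.choose_zero_right]
    ring
  rw [B, A, Finset.sum_range_succ, Nat.choose_self]
  push_cast
  ring

private lemma Sb_eq_zero : ∀ t m : ℕ, m < t → Sb t m = 0 := by
  intro t
  induction t with
  | zero => intro m hm; omega
  | succ t ih =>
    intro m hm
    rw [Sb_rec]
    rw [Finset.sum_eq_zero fun j hj => by
      rw [ih j (by simp at hj; omega)]; ring]
    ring

private lemma Sb_diag (t : ℕ) : Sb t t = (-1)^t * (t.factorial : ℤ) := by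
  induction t with
  | zero => simp [Sb]
  | succ t ih =>
    rw [Sb_rec, Finset.sum_range_succ, Finset.sum_eq_zero fun j hj => by
      rw [Sb_eq_zero t j (by simp at hj; omega)]; ring]
    rw [ih, Nat.choose_succ_self_right, Nat.factorial_succ]
    push_cast
    ring

private lemma two_choose_two (n : ℕ) : 2 * ((n+1).choose 2) = (n+1) * n := by
  induction n with
  | zero => rfl
  | succ n ih =>
    have hs : (n+2).choose 2 = (n+1).choose 1 + (n+1).choose 2 := Nat.choose_succ_succ (n+1) 1
    rw [show n+1+1 = n+2 from rfl, hs, Nat.choose_one_right]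
    nlinarith [ih]

private lemma Sb_diag_succ (t : ℕ) : 2 * Sb t (t+1) = (-1)^t * (t.factorial : ℤ) * (t+1) * t := by
  induction t with
  | zero => simp [Sb]
  | succ t ih =>
    rw [Sb_rec, Finset.sum_range_succ, Finset.sum_range_succ, Finset.sum_eq_zero fun j hj => by
      rw [Sb_eq_zero t j (by simp at hj; omega)]; ring]
    rw [Sb_diag]
    have h1 : (t+2).choose t = (t+2).choose 2 := by
      have := Nat.choose_symm (n := t+2) (k := 2) (by omega)
      simpa using this
    have h2 : (t+1+1).choose (t+1) = t+2 := by
      rw [Nat.choose_succ_self_right]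
    have h3 : (2 : ℤ) * ((t+2).choose 2 : ℤ) = (t+2) * (t+1) := by
      exact_mod_cast congrArg (Nat.cast : ℕ → ℤ) (two_choose_two (t+1))
    have : (t+1+1) = t+2 := rfl
    rw [this] at h2 ⊢
    rw [h1, h2, Nat.factorial_succ]
    push_cast
    push_cast at ih h3
    linear_combination (-(t:ℤ)-2) * ih + (-(-1:ℤ)^t * (t.factorial : ℤ)) * h3
theorem mb_expansion (d t : ℕ) (hd : 2 ≤ d) (ht1 : 1 ≤ t) (htd : t ≤ d)
    (a : ℕ → ℤ) (ha : 0 < a d)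
    (P : ℤ → ℤ) (hP : ∀ z, P z = ∑ i ∈ Finset.range (d + 1), a i * z ^ i) :
    ∃ h : ℕ → ℕ → ℤ, h d (d - t) ≠ 0 ∧ (t ≤ d - 1 → h d (d - t - 1) ≠ 0) ∧
      ∀ s k : ℕ,
        ∑ r ∈ Finset.Icc 1 t,
            (-1 : ℤ) ^ r * (t.choose r : ℤ) * (P ((k : ℤ) + r * s) - P k)
          = ∑ i ∈ Finset.range (d - t + 1), ∑ r ∈ Finset.Icc (t + i) d,
              h r i * (s : ℤ) ^ (r - i) * (k : ℤ) ^ i := by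
  refine ⟨fun r i => a r * (r.choose i : ℤ) * Sb t (r - i), ?_, ?_, ?_⟩
  · show a d * (d.choose (d-t) : ℤ) * Sb t (d - (d-t)) ≠ 0
    rw [show d - (d-t) = t by omega, Sb_diag]
    refine mul_ne_zero (mul_ne_zero ha.ne' ?_) (mul_ne_zero (pow_ne_zero _ (by norm_num)) ?_)
    · exact_mod_cast (Nat.choose_pos (Nat.sub_le d t)).ne'
    · exact_mod_cast t.factorial_ne_zero
  · intro hle
    show a d * (d.choose (d-t-1) : ℤ) * Sb t (d - (d-t-1)) ≠ 0
    rw [show d - (d-t-1) = t + 1 by omega]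
    have hS : Sb t (t+1) ≠ 0 := by
      intro h0
      have h2 := Sb_diag_succ t
      rw [h0, mul_zero] at h2
      have : ((-1:ℤ)^t * (t.factorial : ℤ) * (t+1) * t) ≠ 0 := by
        refine mul_ne_zero (mul_ne_zero (mul_ne_zero (pow_ne_zero _ (by norm_num)) ?_) ?_) ?_
        · exact_mod_cast t.factorial_ne_zero
        · positivity
        · exact_mod_cast (by omega : (t:ℤ) ≠ 0)
      exact this h2.symm
    refine mul_ne_zero (mul_ne_zero ha.ne' ?_) hS
    exact_mod_cast (Nat.choose_pos (by omega : d - t - 1 ≤ d)).ne'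
  · intro s k
    have hvanish : ∀ i j : ℕ, i - j < t →
        a i * (i.choose j : ℤ) * Sb t (i-j) * (s:ℤ)^(i-j) * (k:ℤ)^j = 0 := by
      intro i j hij
      rw [Sb_eq_zero t _ hij]; ring
    -- Step A : extend Icc 1 t to range (t+1)
    have stepA : ∑ r ∈ Finset.Icc 1 t,
          (-1 : ℤ) ^ r * (t.choose r : ℤ) * (P ((k : ℤ) + r * s) - P k)
        = ∑ r ∈ Finset.range (t+1),
          (-1 : ℤ) ^ r * (t.choose r : ℤ) * (P ((k : ℤ) + r * s) - P k) := by
      refine Finset.sum_subset ?_ ?_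
      · intro x hx
        simp only [Finset.mem_Icc] at hx
        simp only [Finset.mem_range]; omega
      · intro x hx hx'
        simp only [Finset.mem_range] at hx
        simp only [Finset.mem_Icc] at hx'
        have : x = 0 := by omega
        subst this
        norm_num
    -- Step B : kill the P k part
    have stepB : ∑ r ∈ Finset.range (t+1),
          (-1 : ℤ) ^ r * (t.choose r : ℤ) * (P ((k : ℤ) + r * s) - P k)
        = ∑ r ∈ Finset.range (t+1),
          (-1 : ℤ) ^ r * (t.choose r : ℤ) * P ((k : ℤ) + r * s) := by
      simp only [mul_sub]
      rw [Finset.sum_sub_distrib, ← Finset.sum_mul,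
        Int.alternating_sum_range_choose_of_ne (by omega : t ≠ 0)]
      ring
    -- Step C : expand P and reorganize
    have stepC : ∑ r ∈ Finset.range (t+1),
          (-1 : ℤ) ^ r * (t.choose r : ℤ) * P ((k : ℤ) + r * s)
        = ∑ i ∈ Finset.range (d+1), ∑ j ∈ Finset.range (i+1),
            a i * (i.choose j : ℤ) * Sb t (i-j) * (s:ℤ)^(i-j) * (k:ℤ)^j := by
      have expand : ∀ r ∈ Finset.range (t+1),
          (-1 : ℤ) ^ r * (t.choose r : ℤ) * P ((k : ℤ) + r * s)
          = ∑ i ∈ Finset.range (d+1), ∑ j ∈ Finset.range (i+1),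
              ((-1:ℤ)^r * (t.choose r : ℤ) * (r:ℤ)^(i-j))
                * (a i * (i.choose j : ℤ) * (s:ℤ)^(i-j) * (k:ℤ)^j) := by
        intro r _
        rw [hP, Finset.mul_sum]
        refine Finset.sum_congr rfl fun i _ => ?_
        rw [add_pow, Finset.mul_sum, Finset.mul_sum]
        refine Finset.sum_congr rfl fun j hj => ?_
        rw [mul_pow]
        ring
      rw [Finset.sum_congr rfl expand, Finset.sum_comm]
      refine Finset.sum_congr rfl fun i _ => ?_
      rw [Finset.sum_comm]
      refine Finset.sum_congr rfl fun j _ => ?_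
      rw [← Finset.sum_mul]
      show Sb t (i-j) * _ = _
      ring
    -- Step D : both sides equal the full square sum
    have stepL : ∑ i ∈ Finset.range (d+1), ∑ j ∈ Finset.range (i+1),
            a i * (i.choose j : ℤ) * Sb t (i-j) * (s:ℤ)^(i-j) * (k:ℤ)^j
        = ∑ i ∈ Finset.range (d+1), ∑ j ∈ Finset.range (d+1),
            a i * (i.choose j : ℤ) * Sb t (i-j) * (s:ℤ)^(i-j) * (k:ℤ)^j := by
      refine Finset.sum_congr rfl fun i hi => ?_
      simp only [Finset.mem_range] at hi
      refine Finset.sum_subset ?_ ?_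
      · intro x hx; simp only [Finset.mem_range] at *; omega
      · intro x hx hx'
        simp only [Finset.mem_range] at hx hx'
        exact hvanish i x (by omega)
    have stepR : (∑ i ∈ Finset.range (d - t + 1), ∑ r ∈ Finset.Icc (t + i) d,
            (a r * (r.choose i : ℤ) * Sb t (r - i)) * (s : ℤ) ^ (r - i) * (k : ℤ) ^ i)
        = ∑ i ∈ Finset.range (d+1), ∑ j ∈ Finset.range (d+1),
            a i * (i.choose j : ℤ) * Sb t (i-j) * (s:ℤ)^(i-j) * (k:ℤ)^j := by
      have e1 : ∀ j ∈ Finset.range (d - t + 1),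
          (∑ r ∈ Finset.Icc (t + j) d,
            (a r * (r.choose j : ℤ) * Sb t (r - j)) * (s : ℤ) ^ (r - j) * (k : ℤ) ^ j)
          = ∑ r ∈ Finset.range (d+1),
            a r * (r.choose j : ℤ) * Sb t (r-j) * (s:ℤ)^(r-j) * (k:ℤ)^j := by
        intro j _
        refine Finset.sum_subset ?_ ?_
        · intro x hx
          simp only [Finset.mem_Icc] at hx
          simp only [Finset.mem_range]; omega
        · intro x hx hx'
          simp only [Finset.mem_range] at hx
          simp only [Finset.mem_Icc] at hx'
          exact hvanish x j (by omega)
      rw [Finset.sum_congr rfl e1, Finset.sum_comm]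
      refine Finset.sum_congr rfl fun i hi => ?_
      simp only [Finset.mem_range] at hi
      refine Finset.sum_subset ?_ ?_
      · intro x hx; simp only [Finset.mem_range] at *; omega
      · intro x hx hx'
        simp only [Finset.mem_range] at hx hx'
        exact hvanish i x (by omega)
    rw [stepA, stepB, stepC, stepL, ← stepR]
end

section
/- Let p(z) ∈ ℤ[z] have degree d ≥ 2 with positive leading coefficient, and let m_s(k) = p(k+s) − p(k). There exists a constant q depending only on p and d such that for all t ∈ [d−1], all sufficiently large k, and every nonzero integer vector (c_1, ..., c_t) with |c_i| ≤ k/q for all i, one has |∑_{i=1}^{t} c_i·m_i(k)| > (1/2)·k^{d−t}. -/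
open Finset

lemma vand_aux (t : ℕ) (c : ℕ → ℤ)
    (h : ∀ r ∈ Icc 1 t, ∑ i ∈ Icc 1 t, c i * (i:ℤ)^r = 0) :
    ∀ i ∈ Icc 1 t, c i = 0 := by
  set v : Fin t → ℤ := fun i => (i:ℤ) + 1 with hv
  have hvinj : Function.Injective v := by
    intro i j hij
    simp only [hv, add_left_inj] at hij
    exact_mod_cast Fin.ext (by exact_mod_cast hij)
  set M : Matrix (Fin t) (Fin t) ℤ := fun r i => v i ^ ((r:ℕ)+1) with hM
  have hdet : M.det ≠ 0 := by
    have hMeq : M = (Matrix.diagonal v * Matrix.vandermonde v).transpose := by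
      ext r i
      rw [Matrix.transpose_apply, Matrix.mul_apply]
      rw [Finset.sum_eq_single i]
      · simp [hM, Matrix.vandermonde, pow_succ, mul_comm]
      · intro b _ hb
        simp [Matrix.diagonal_apply_ne _ (Ne.symm hb)]
      · simp
    rw [hMeq, Matrix.det_transpose, Matrix.det_mul, Matrix.det_diagonal]
    apply mul_ne_zero
    · apply Finset.prod_ne_zero_iff.mpr
      intro i _
      positivity
    · exact Matrix.det_vandermonde_ne_zero_iff.mpr hvinj
  have hmv : M.mulVec (fun i => c ((i:ℕ)+1)) = 0 := by
    funext r
    have := h ((r:ℕ)+1) (by simp [Nat.succ_le_iff, r.isLt])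
    rw [show Icc 1 t = Ico 1 (t+1) by rfl, Finset.sum_Ico_eq_sum_range] at this
    simp only [Nat.add_sub_cancel] at this
    rw [← Fin.sum_univ_eq_sum_range (fun i => c (1+i) * ((1+i : ℕ):ℤ)^((r:ℕ)+1))] at this
    simpa [Matrix.mulVec, dotProduct, hM, hv, mul_comm, add_comm] using this
  have hz := Matrix.eq_zero_of_mulVec_eq_zero hdet hmv
  intro i hi
  simp only [mem_Icc] at hi
  have h1 : i - 1 < t := by omega
  have := congrFun hz ⟨i-1, h1⟩
  simpa [show i - 1 + 1 = i by omega] using this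

lemma pow_diff_eq (d n : ℕ) (hn : n ≤ d) (k i : ℤ) :
    (k + i)^n - k^n = ∑ r ∈ Icc 1 d, (n.choose r : ℤ) * k^(n-r) * i^r := by
  have h1 : (k + i)^n = ∑ m ∈ range (n+1), i^m * k^(n-m) * (n.choose m : ℤ) := by
    rw [add_comm k i, add_pow]
  have h2 : ∑ m ∈ range (n+1), i^m * k^(n-m) * (n.choose m : ℤ)
      = k^n + ∑ m ∈ Ico 1 (n+1), i^m * k^(n-m) * (n.choose m : ℤ) := by
    rw [range_eq_Ico, Finset.sum_eq_sum_Ico_succ_bot (Nat.succ_pos n)]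
    simp
  have h3 : Ico 1 (n+1) = Icc 1 n := rfl
  rw [h1, h2, h3]
  have h4 : ∑ m ∈ Icc 1 n, i^m * k^(n-m) * (n.choose m : ℤ)
      = ∑ r ∈ Icc 1 d, (n.choose r : ℤ) * k^(n-r) * i^r := by
    rw [Finset.sum_subset (Finset.Icc_subset_Icc_right hn)]
    · exact Finset.sum_congr rfl (fun r _ => by ring)
    · intro r hr hr'
      simp only [mem_Icc] at hr hr'
      rw [Nat.choose_eq_zero_of_lt (by omega)]
      simp
  rw [h4]; ring

lemma increment_decomp (d : ℕ) (a : ℕ → ℤ) (P : ℤ → ℤ)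
    (hP : ∀ z, P z = ∑ i ∈ Finset.range (d + 1), a i * z ^ i)
    (k : ℤ) (t : ℕ) (c : ℕ → ℤ) :
    ∑ i ∈ Icc 1 t, c i * (P (k + i) - P k)
      = ∑ r ∈ Icc 1 d, (∑ i ∈ Icc 1 t, c i * (i:ℤ)^r) *
          (∑ n ∈ range (d+1), a n * (n.choose r : ℤ) * k^(n-r)) := by
  have key : ∀ i : ℕ, P (k + i) - P k
      = ∑ r ∈ Icc 1 d, ∑ n ∈ range (d+1), a n * ((n.choose r : ℤ) * k^(n-r) * (i:ℤ)^r) := by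
    intro i
    rw [← Finset.sum_comm, hP, hP, ← Finset.sum_sub_distrib]
    refine Finset.sum_congr rfl (fun n hn => ?_)
    rw [← mul_sub, pow_diff_eq d n (by simpa using Nat.lt_succ_iff.mp (mem_range.mp hn)) k i,
      Finset.mul_sum]
  have lhs1 : ∑ i ∈ Icc 1 t, c i * (P (k + i) - P k)
      = ∑ i ∈ Icc 1 t, ∑ r ∈ Icc 1 d, ∑ n ∈ range (d+1),
          c i * (a n * ((n.choose r : ℤ) * k^(n-r) * (i:ℤ)^r)) := by
    simp only [key, Finset.mul_sum]
  rw [lhs1, Finset.sum_comm]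
  refine Finset.sum_congr rfl (fun r _ => ?_)
  rw [Finset.sum_mul]
  refine Finset.sum_congr rfl (fun i _ => ?_)
  rw [Finset.mul_sum]
  exact Finset.sum_congr rfl (fun n _ => by ring)

lemma choose_le_two_pow' (n r d : ℕ) (h : n ≤ d) : n.choose r ≤ 2^d := by
  rcases le_or_gt r n with hr | hr
  · calc n.choose r ≤ ∑ m ∈ range (n+1), n.choose m :=
        Finset.single_le_sum (fun m _ => Nat.zero_le _) (mem_range.mpr (by omega))
    _ = 2^n := Nat.sum_range_choose n
    _ ≤ 2^d := Nat.pow_le_pow_right (by norm_num) h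
  · rw [Nat.choose_eq_zero_of_lt hr]; exact Nat.zero_le _

set_option maxHeartbeats 2000000 in
theorem independence_of_increments (d : ℕ) (hd : 2 ≤ d) (a : ℕ → ℤ) (ha : 0 < a d)
    (P : ℤ → ℤ) (hP : ∀ z, P z = ∑ i ∈ Finset.range (d + 1), a i * z ^ i) :
    ∃ q : ℕ, 0 < q ∧ ∃ K : ℕ, ∀ k : ℕ, K ≤ k → ∀ t ∈ Finset.Icc 1 (d - 1),
      ∀ c : ℕ → ℤ, (∃ i ∈ Finset.Icc 1 t, c i ≠ 0) →
        (∀ i ∈ Finset.Icc 1 t, |(c i : ℝ)| ≤ (k : ℝ) / q) →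
        ((k : ℝ) ^ (d - t)) / 2 <
          |((∑ i ∈ Finset.Icc 1 t, c i * (P ((k : ℤ) + i) - P k) : ℤ) : ℝ)| := by
  classical
  set A : ℕ := ∑ n ∈ Finset.range (d+1), (a n).natAbs with hA
  have hA1 : 1 ≤ A := by
    have h1 : (a d).natAbs ≤ A :=
      Finset.single_le_sum (f := fun n => (a n).natAbs) (fun n _ => Nat.zero_le _)
        (mem_range.mpr (by omega))
    have h2 : 0 < (a d).natAbs := Int.natAbs_pos.mpr (ne_of_gt ha)
    omega
  set Q : ℕ := 8 * A * 2^d * (d+1)^(d+3) with hQdef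
  have hQ1 : 0 < Q := by positivity
  refine ⟨Q, hQ1, Q, ?_⟩
  intro k hk t ht c hc hbound
  obtain ⟨ht1, ht2⟩ := Finset.mem_Icc.mp ht
  have htd : t ≤ d - 1 := ht2
  have hk1 : 1 ≤ k := le_trans hQ1 hk
  have hKR1 : (1:ℝ) ≤ (k:ℝ) := by exact_mod_cast hk1
  have hKRpos : (0:ℝ) < (k:ℝ) := by linarith
  have hQR : (0:ℝ) < (Q:ℝ) := by exact_mod_cast hQ1
  have hkQ : (Q:ℝ) ≤ (k:ℝ) := by exact_mod_cast hk
  set s : ℕ → ℤ := fun r => ∑ i ∈ Icc 1 t, c i * (i:ℤ)^r with hs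
  set W : ℕ → ℤ := fun r => ∑ n ∈ range (d+1), a n * (n.choose r : ℤ) * (k:ℤ)^(n-r) with hW
  -- minimal nonzero power sum
  have hTne : ((Icc 1 t).filter (fun r => s r ≠ 0)).Nonempty := by
    by_contra h
    rw [Finset.not_nonempty_iff_eq_empty, Finset.filter_eq_empty_iff] at h
    obtain ⟨i, hi, hci⟩ := hc
    exact hci (vand_aux t c (fun r hr => not_not.mp (h hr)) i hi)
  set r₀ := ((Icc 1 t).filter (fun r => s r ≠ 0)).min' hTne with hr₀def
  have hr₀T := Finset.min'_mem _ hTne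
  rw [Finset.mem_filter, mem_Icc] at hr₀T
  obtain ⟨⟨hr₀1, hr₀t⟩, hsr₀⟩ := hr₀T
  have hmin : ∀ r ∈ Icc 1 t, r < r₀ → s r = 0 := by
    intro r hr hlt
    by_contra h
    exact absurd (Finset.min'_le _ r (Finset.mem_filter.mpr ⟨hr, h⟩)) (not_le.mpr hlt)
  have hr₀d : r₀ + 1 ≤ d := by omega
  set e := d - r₀ with he
  have he1 : 1 ≤ e := by omega
  -- decomposition
  have hdec : (∑ i ∈ Icc 1 t, c i * (P ((k:ℤ) + i) - P k))
      = s r₀ * W r₀ + ∑ r ∈ Icc (r₀+1) d, s r * W r := by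
    rw [increment_decomp d a P hP k t c]
    have step1 : ∑ r ∈ Icc 1 d, s r * W r = ∑ r ∈ Icc r₀ d, s r * W r := by
      symm
      apply Finset.sum_subset (Finset.Icc_subset_Icc_left hr₀1)
      intro x hx hx'
      rw [mem_Icc] at hx
      rw [mem_Icc] at hx'
      have hxlt : x < r₀ := by omega
      rw [hmin x (mem_Icc.mpr ⟨hx.1, by omega⟩) hxlt, zero_mul]
    rw [step1, ← Finset.Ico_add_one_right_eq_Icc, Finset.sum_eq_sum_Ico_succ_bot (by omega),
      Finset.Ico_add_one_right_eq_Icc]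
  -- real constants
  set B : ℝ := (A:ℝ) * 2^d with hB
  have hB1 : (1:ℝ) ≤ B := by
    have : (1:ℝ) ≤ (A:ℝ) := by exact_mod_cast hA1
    have h2 : (1:ℝ) ≤ (2:ℝ)^d := one_le_pow₀ (by norm_num)
    nlinarith
  set D : ℝ := ((d:ℝ)+1)^(d+1) with hD
  have hD1 : (1:ℝ) ≤ D := one_le_pow₀ (by norm_num)
  -- cast of A
  have hAcast : (A:ℝ) = ∑ n ∈ range (d+1), |((a n : ℤ) : ℝ)| := by
    rw [hA]
    push_cast [Nat.cast_natAbs]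
    rfl
  -- upper bound on |W r|
  have hWub : ∀ r : ℕ, |((W r : ℤ) : ℝ)| ≤ B * (k:ℝ)^(d-r) := by
    intro r
    rw [hW]
    push_cast
    refine le_trans (Finset.abs_sum_le_sum_abs _ _) ?_
    rw [hB, hAcast, Finset.sum_mul, Finset.sum_mul]
    refine Finset.sum_le_sum (fun n hn => ?_)
    rw [mem_range] at hn
    have hnd : n ≤ d := by omega
    rw [abs_mul, abs_mul]
    have h1 : |((n.choose r : ℕ) : ℝ)| ≤ 2^d := by
      rw [abs_of_nonneg (by positivity)]
      exact_mod_cast choose_le_two_pow' n r d hnd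
    have h2 : |(k:ℝ)^(n-r)| ≤ (k:ℝ)^(d-r) := by
      rw [abs_of_nonneg (by positivity)]
      exact pow_le_pow_right₀ hKR1 (Nat.sub_le_sub_right hnd r)
    have h3 : (0:ℝ) ≤ |((a n : ℤ) : ℝ)| := abs_nonneg _
    calc |((a n:ℤ):ℝ)| * |((n.choose r : ℕ):ℝ)| * |(k:ℝ)^(n-r)|
        ≤ |((a n:ℤ):ℝ)| * 2^d * (k:ℝ)^(d-r) := by
          apply mul_le_mul (mul_le_mul_of_nonneg_left h1 h3) h2 (abs_nonneg _) (by positivity)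
    _ = |((a n:ℤ):ℝ)| * 2^d * (k:ℝ)^(d-r) := rfl
  -- lower bound on |W r₀|
  have hWlb : (k:ℝ)^e - B * (k:ℝ)^(e-1) ≤ |((W r₀ : ℤ) : ℝ)| := by
    have hsplit : W r₀ = (∑ n ∈ range d, a n * (n.choose r₀ : ℤ) * (k:ℤ)^(n-r₀))
        + a d * (d.choose r₀ : ℤ) * (k:ℤ)^(d-r₀) := by
      rw [hW]
      exact Finset.sum_range_succ _ d
    have hmain : (k:ℝ)^e ≤ |((a d * (d.choose r₀ : ℤ) * (k:ℤ)^(d-r₀) : ℤ) : ℝ)| := by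
      push_cast
      rw [abs_mul, abs_mul]
      have h1 : (1:ℝ) ≤ |((a d : ℤ):ℝ)| := by
        rw [abs_of_pos (by exact_mod_cast ha)]
        exact_mod_cast ha
      have h2 : (1:ℝ) ≤ |((d.choose r₀ : ℕ):ℝ)| := by
        rw [abs_of_nonneg (by positivity)]
        exact_mod_cast Nat.succ_le_of_lt (Nat.choose_pos (by omega))
      have h3 : |(k:ℝ)^(d-r₀)| = (k:ℝ)^e := by
        rw [abs_of_nonneg (by positivity), he]
      rw [h3]
      have h4 : (1:ℝ) ≤ |((a d:ℤ):ℝ)| * |((d.choose r₀:ℕ):ℝ)| := by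
        calc (1:ℝ) = 1 * 1 := by ring
        _ ≤ |((a d:ℤ):ℝ)| * |((d.choose r₀:ℕ):ℝ)| :=
            mul_le_mul h1 h2 zero_le_one (le_trans zero_le_one h1)
      nlinarith [pow_pos hKRpos e]
    have hrem : |((∑ n ∈ range d, a n * (n.choose r₀ : ℤ) * (k:ℤ)^(n-r₀) : ℤ) : ℝ)|
        ≤ B * (k:ℝ)^(e-1) := by
      push_cast
      refine le_trans (Finset.abs_sum_le_sum_abs _ _) ?_
      rw [hB, hAcast]
      have hsub : ∑ n ∈ range d, |((a n:ℤ):ℝ)|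
          = ∑ n ∈ range (d+1), |((a n:ℤ):ℝ)| - |((a d:ℤ):ℝ)| := by
        rw [Finset.sum_range_succ]; ring
      calc ∑ n ∈ range d, |((a n:ℤ):ℝ) * ((n.choose r₀:ℕ):ℝ) * (k:ℝ)^(n-r₀)|
          ≤ ∑ n ∈ range d, |((a n:ℤ):ℝ)| * 2^d * (k:ℝ)^(e-1) := by
            refine Finset.sum_le_sum (fun n hn => ?_)
            rw [mem_range] at hn
            rw [abs_mul, abs_mul]
            have h1 : |((n.choose r₀ : ℕ) : ℝ)| ≤ 2^d := by
              rw [abs_of_nonneg (by positivity)]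
              exact_mod_cast choose_le_two_pow' n r₀ d (by omega)
            have h2 : |(k:ℝ)^(n-r₀)| ≤ (k:ℝ)^(e-1) := by
              rw [abs_of_nonneg (by positivity)]
              exact pow_le_pow_right₀ hKR1 (by omega)
            have h3 : (0:ℝ) ≤ |((a n : ℤ) : ℝ)| := abs_nonneg _
            exact mul_le_mul (mul_le_mul_of_nonneg_left h1 h3) h2 (abs_nonneg _) (by positivity)
      _ ≤ (∑ n ∈ range (d+1), |((a n:ℤ):ℝ)|) * 2^d * (k:ℝ)^(e-1) := by
            rw [← Finset.sum_mul, ← Finset.sum_mul]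
            have : ∑ n ∈ range d, |((a n:ℤ):ℝ)| ≤ ∑ n ∈ range (d+1), |((a n:ℤ):ℝ)| := by
              rw [Finset.sum_range_succ]
              nlinarith [abs_nonneg ((a d : ℤ):ℝ)]
            have hpos : (0:ℝ) ≤ 2^d * (k:ℝ)^(e-1) := by positivity
            calc (∑ n ∈ range d, |((a n:ℤ):ℝ)|) * 2^d * (k:ℝ)^(e-1)
                = (∑ n ∈ range d, |((a n:ℤ):ℝ)|) * (2^d * (k:ℝ)^(e-1)) := by ring
            _ ≤ (∑ n ∈ range (d+1), |((a n:ℤ):ℝ)|) * (2^d * (k:ℝ)^(e-1)) :=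
                mul_le_mul_of_nonneg_right this hpos
            _ = (∑ n ∈ range (d+1), |((a n:ℤ):ℝ)|) * 2^d * (k:ℝ)^(e-1) := by ring
    calc (k:ℝ)^e - B * (k:ℝ)^(e-1)
        ≤ |((a d * (d.choose r₀ : ℤ) * (k:ℤ)^(d-r₀) : ℤ) : ℝ)|
          - |((∑ n ∈ range d, a n * (n.choose r₀ : ℤ) * (k:ℤ)^(n-r₀) : ℤ) : ℝ)| := by
          exact sub_le_sub hmain hrem
    _ ≤ |((W r₀ : ℤ) : ℝ)| := by
          rw [hsplit]
          push_cast
          set X : ℝ := ∑ n ∈ range d, ((a n:ℤ):ℝ) * ((n.choose r₀:ℕ):ℝ) * (k:ℝ)^(n-r₀) with hX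
          set Y : ℝ := ((a d:ℤ):ℝ) * ((d.choose r₀:ℕ):ℝ) * (k:ℝ)^(d-r₀) with hY
          have h5 : |Y| ≤ |X + Y| + |X| := by
            have := abs_add_le (X + Y) (-X)
            simpa using this
          linarith
  -- bound on power sums
  have hsub : ∀ r, r ≤ d → |((s r : ℤ) : ℝ)| ≤ ((d:ℝ)+1)^(d+2) * ((k:ℝ)/Q) := by
    intro r hr
    rw [hs]
    push_cast
    refine le_trans (Finset.abs_sum_le_sum_abs _ _) ?_
    have hterm : ∀ i ∈ Icc 1 t, |((c i:ℤ):ℝ) * (i:ℝ)^r| ≤ ((d:ℝ)+1)^(d+1) * ((k:ℝ)/Q) := by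
      intro i hi
      rw [abs_mul]
      have hi2 := mem_Icc.mp hi
      have hik : |((c i:ℤ):ℝ)| ≤ (k:ℝ)/Q := hbound i hi
      have hpow : |(i:ℝ)^r| ≤ ((d:ℝ)+1)^(d+1) := by
        rw [abs_of_nonneg (by positivity)]
        calc (i:ℝ)^r ≤ ((d:ℝ)+1)^r := by
              apply pow_le_pow_left₀ (by positivity)
              have : i ≤ d + 1 := by omega
              exact_mod_cast this
        _ ≤ ((d:ℝ)+1)^(d+1) := pow_le_pow_right₀ (by norm_num) (by omega)
      calc |((c i:ℤ):ℝ)| * |(i:ℝ)^r| ≤ ((k:ℝ)/Q) * ((d:ℝ)+1)^(d+1) :=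
            mul_le_mul hik hpow (abs_nonneg _) (by positivity)
      _ = ((d:ℝ)+1)^(d+1) * ((k:ℝ)/Q) := by ring
    calc ∑ i ∈ Icc 1 t, |((c i:ℤ):ℝ) * (i:ℝ)^r|
        ≤ ∑ i ∈ Icc 1 t, ((d:ℝ)+1)^(d+1) * ((k:ℝ)/Q) := Finset.sum_le_sum hterm
    _ = (t:ℝ) * (((d:ℝ)+1)^(d+1) * ((k:ℝ)/Q)) := by
        rw [Finset.sum_const, Nat.card_Icc]
        simp [nsmul_eq_mul]
    _ ≤ ((d:ℝ)+1) * (((d:ℝ)+1)^(d+1) * ((k:ℝ)/Q)) := by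
        have htR : (t:ℝ) ≤ (d:ℝ)+1 := by exact_mod_cast (by omega : t ≤ d+1)
        have : (0:ℝ) ≤ ((d:ℝ)+1)^(d+1) * ((k:ℝ)/Q) := by positivity
        exact mul_le_mul_of_nonneg_right htR this
    _ = ((d:ℝ)+1)^(d+2) * ((k:ℝ)/Q) := by rw [pow_succ]; ring
  -- tail bound
  have hQcast : (Q:ℝ) = 8 * B * ((d:ℝ)+1)^(d+3) := by
    rw [hQdef, hB]
    push_cast
    ring
  have htail : |((∑ r ∈ Icc (r₀+1) d, s r * W r : ℤ):ℝ)| ≤ (k:ℝ)^e / 8 := by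
    push_cast
    refine le_trans (Finset.abs_sum_le_sum_abs _ _) ?_
    have hterm : ∀ r ∈ Icc (r₀+1) d, |((s r:ℤ):ℝ) * ((W r:ℤ):ℝ)|
        ≤ ((d:ℝ)+1)^(d+2) * ((k:ℝ)/Q) * (B * (k:ℝ)^(e-1)) := by
      intro r hr
      have hr2 := mem_Icc.mp hr
      rw [abs_mul]
      have h1 := hsub r hr2.2
      have h2 : |((W r:ℤ):ℝ)| ≤ B * (k:ℝ)^(e-1) := by
        refine le_trans (hWub r) ?_
        have : (k:ℝ)^(d-r) ≤ (k:ℝ)^(e-1) := pow_le_pow_right₀ hKR1 (by omega)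
        exact mul_le_mul_of_nonneg_left this (by positivity)
      exact mul_le_mul h1 h2 (abs_nonneg _) (by positivity)
    calc ∑ r ∈ Icc (r₀+1) d, |((s r:ℤ):ℝ) * ((W r:ℤ):ℝ)|
        ≤ ∑ r ∈ Icc (r₀+1) d, ((d:ℝ)+1)^(d+2) * ((k:ℝ)/Q) * (B * (k:ℝ)^(e-1)) :=
          Finset.sum_le_sum hterm
    _ = ((Icc (r₀+1) d).card : ℝ) * (((d:ℝ)+1)^(d+2) * ((k:ℝ)/Q) * (B * (k:ℝ)^(e-1))) := by
          rw [Finset.sum_const, nsmul_eq_mul]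
    _ ≤ ((d:ℝ)+1) * (((d:ℝ)+1)^(d+2) * ((k:ℝ)/Q) * (B * (k:ℝ)^(e-1))) := by
          have hcard : ((Icc (r₀+1) d).card : ℝ) ≤ (d:ℝ)+1 := by
            rw [Nat.card_Icc]
            exact_mod_cast (by omega : d + 1 - (r₀+1) ≤ d+1)
          exact mul_le_mul_of_nonneg_right hcard (by positivity)
    _ = ((Q:ℝ)/8) * ((k:ℝ)/Q) * (k:ℝ)^(e-1) := by
          rw [hQcast, pow_succ]
          ring
    _ = (k:ℝ)/8 * (k:ℝ)^(e-1) := by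
          congr 1
          rw [div_mul_div_comm, mul_comm (8:ℝ) (Q:ℝ), mul_div_mul_left _ _ (ne_of_gt hQR)]
    _ = (k:ℝ)^e / 8 := by
          rw [div_mul_eq_mul_div, ← pow_succ']
          congr 2
          omega
  -- head bound
  have hone : (1:ℝ) ≤ |((s r₀:ℤ):ℝ)| := by
    have := Int.one_le_abs (by exact hsr₀)
    exact_mod_cast this
  have hBk : B * (k:ℝ)^(e-1) ≤ (k:ℝ)^e / 8 := by
    have h1 : B ≤ (Q:ℝ)/8 := by
      rw [hQcast]
      have hBpos : (0:ℝ) ≤ B := le_trans zero_le_one hB1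
      have h1a : (1:ℝ) ≤ ((d:ℝ)+1)^(d+3) := one_le_pow₀ (by norm_num)
      calc B = B * 1 := (mul_one B).symm
      _ ≤ B * ((d:ℝ)+1)^(d+3) := mul_le_mul_of_nonneg_left h1a hBpos
      _ = 8 * B * ((d:ℝ)+1)^(d+3) / 8 := by ring
    have h2 : (Q:ℝ)/8 ≤ (k:ℝ)/8 := by linarith
    calc B * (k:ℝ)^(e-1) ≤ ((k:ℝ)/8) * (k:ℝ)^(e-1) :=
          mul_le_mul_of_nonneg_right (le_trans h1 h2) (by positivity)
    _ = (k:ℝ)^e / 8 := by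
          rw [div_mul_eq_mul_div, ← pow_succ']
          congr 2
          omega
  have hhead : (k:ℝ)^e - (k:ℝ)^e/8 ≤ |((s r₀ * W r₀ : ℤ):ℝ)| := by
    push_cast
    rw [abs_mul]
    have h1 : (k:ℝ)^e - (k:ℝ)^e/8 ≤ |((W r₀:ℤ):ℝ)| := by linarith [hWlb, hBk]
    calc (k:ℝ)^e - (k:ℝ)^e/8 ≤ |((W r₀:ℤ):ℝ)| := h1
    _ = 1 * |((W r₀:ℤ):ℝ)| := by ring
    _ ≤ |((s r₀:ℤ):ℝ)| * |((W r₀:ℤ):ℝ)| :=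
        mul_le_mul_of_nonneg_right hone (abs_nonneg _)
  -- assembly
  rw [hdec]
  push_cast
  set X : ℝ := ((s r₀:ℤ):ℝ) * ((W r₀:ℤ):ℝ) with hXd
  set Y : ℝ := ∑ r ∈ Icc (r₀+1) d, ((s r:ℤ):ℝ) * ((W r:ℤ):ℝ) with hYd
  have habs : |X| - |Y| ≤ |X + Y| := by
    have := abs_add_le (X + Y) (-Y)
    simpa using this
  have hXlb : (k:ℝ)^e - (k:ℝ)^e/8 ≤ |X| := by
    rw [hXd]
    have := hhead
    push_cast at this
    exact this
  have hYub : |Y| ≤ (k:ℝ)^e / 8 := by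
    rw [hYd]
    have := htail
    push_cast at this
    exact this
  have hfinal : (3/4) * (k:ℝ)^e ≤ |X + Y| := by linarith
  have hpowle : (k:ℝ)^(d-t) ≤ (k:ℝ)^e := pow_le_pow_right₀ hKR1 (by omega)
  have hpowpos : (0:ℝ) < (k:ℝ)^(d-t) := by positivity
  linarith
end

section
/- Suppose 0 < 1/n ≪ η ≪ 1/ℓ ≪ 1 and m = η²n is an integer. Let G(n; m) be the reduced grid digraph on {(i,j) ∈ [0,n]² : |i−j| ≤ m} with arcs (i,j)→(i+1,j) and (i,j)→(i,j+1). Let Z be a set of vertices with (G1) |Z| ≤ m/10, and (G2) for every i ≤ m/ℓ, both the union of levels 0 through iℓ and the union of levels 2n−iℓ through 2n contain at most i−1 vertices of Z. Then G(n; m) contains a directed path from (0,0) to (n,n) avoiding all vertices of Z. -/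
private def RS (Z : Finset (ℕ × ℕ)) : ℕ → Finset ℕ
  | 0 => ({0} : Finset ℕ).filter (fun i => (i, (0 : ℕ)) ∉ Z)
  | (s + 1) => ((RS Z s) ∪ (RS Z s).image (· + 1)).filter (fun i => (i, s + 1 - i) ∉ Z)

private lemma RS_le (Z : Finset (ℕ × ℕ)) : ∀ s, ∀ i ∈ RS Z s, i ≤ s := by
  intro s
  induction s with
  | zero => intro i hi; simp [RS] at hi; omega
  | succ s ih =>
    intro i hi
    simp only [RS, Finset.mem_filter, Finset.mem_union, Finset.mem_image] at hi
    rcases hi.1 with h | ⟨a, ha, rfl⟩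
    · have := ih i h; omega
    · have := ih a ha; omega

private lemma RS_path (Z : Finset (ℕ × ℕ)) : ∀ s, ∀ i ∈ RS Z s,
    ∃ F : ℕ → ℕ × ℕ, F 0 = (0, 0) ∧ F s = (i, s - i) ∧
      (∀ t < s, F (t + 1) = ((F t).1 + 1, (F t).2) ∨ F (t + 1) = ((F t).1, (F t).2 + 1)) ∧
      (∀ t ≤ s, (F t).1 + (F t).2 = t ∧ F t ∉ Z) := by
  intro s
  induction s with
  | zero =>
    intro i hi
    simp only [RS, Finset.mem_filter, Finset.mem_singleton] at hi
    obtain ⟨rfl, hz⟩ := hi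
    exact ⟨fun _ => (0, 0), rfl, rfl, by intro t ht; omega,
      by intro t ht; interval_cases t; exact ⟨rfl, hz⟩⟩
  | succ s ih =>
    intro i hi
    simp only [RS, Finset.mem_filter, Finset.mem_union, Finset.mem_image] at hi
    obtain ⟨hmem, hz⟩ := hi
    rcases hmem with h | ⟨a, ha, rfl⟩
    · obtain ⟨F, h0, hs, hstep, hval⟩ := ih i h
      have hile : i ≤ s := RS_le Z s i h
      refine ⟨fun t => if t ≤ s then F t else (i, s + 1 - i), by simp [h0], by simp, ?_, ?_⟩
      · intro t ht
        by_cases h1 : t + 1 ≤ s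
        · simp only [if_pos (by omega : t ≤ s), if_pos h1]
          exact hstep t (by omega)
        · have ht' : t = s := by omega
          subst ht'
          right
          simp only [if_pos (le_refl t), if_neg (by omega : ¬ t + 1 ≤ t), hs]
          exact Prod.ext rfl (by omega)
      · intro t ht
        by_cases h1 : t ≤ s
        · simp only [if_pos h1]; exact hval t h1
        · have ht' : t = s + 1 := by omega
          subst ht'
          simp only [if_neg h1]
          exact ⟨by omega, hz⟩
    · obtain ⟨F, h0, hs, hstep, hval⟩ := ih a ha
      have hile : a ≤ s := RS_le Z s a ha
      refine ⟨fun t => if t ≤ s then F t else (a + 1, s + 1 - (a + 1)), by simp [h0], by simp, ?_, ?_⟩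
      · intro t ht
        by_cases h1 : t + 1 ≤ s
        · simp only [if_pos (by omega : t ≤ s), if_pos h1]
          exact hstep t (by omega)
        · have ht' : t = s := by omega
          subst ht'
          left
          simp only [if_pos (le_refl t), if_neg (by omega : ¬ t + 1 ≤ t), hs]
          exact Prod.ext rfl (by omega)
      · intro t ht
        by_cases h1 : t ≤ s
        · simp only [if_pos h1]; exact hval t h1
        · have ht' : t = s + 1 := by omega
          subst ht'
          simp only [if_neg h1]
          exact ⟨by omega, hz⟩

private lemma RS_card (Z : Finset (ℕ × ℕ)) (L : ℕ)
    (hc : ∀ s, 1 ≤ s → s ≤ L → (Z.filter (fun v => v.1 + v.2 ≤ s)).card + 1 ≤ s) :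
    ∀ s ≤ L, s + 1 ≤ (RS Z s).card + (Z.filter (fun v => v.1 + v.2 ≤ s)).card := by
  intro s
  induction s with
  | zero =>
    intro _
    by_cases h0 : ((0 : ℕ), (0 : ℕ)) ∈ Z
    · have : 1 ≤ (Z.filter (fun v => v.1 + v.2 ≤ 0)).card :=
        Finset.card_pos.mpr ⟨(0, 0), Finset.mem_filter.mpr ⟨h0, by simp⟩⟩
      omega
    · have : (RS Z 0).card = 1 := by
        simp only [RS]
        rw [Finset.filter_singleton, if_pos h0]
        simp
      omega
  | succ s ih =>
    intro hsL
    have ihs := ih (by omega)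
    -- monotonicity of the count
    have hmono : ∀ a b : ℕ, a ≤ b →
        (Z.filter (fun v => v.1 + v.2 ≤ a)).card ≤ (Z.filter (fun v => v.1 + v.2 ≤ b)).card := by
      intro a b hab
      apply Finset.card_le_card
      intro v hv
      simp only [Finset.mem_filter] at hv ⊢
      exact ⟨hv.1, le_trans hv.2 hab⟩
    -- RS Z s is nonempty
    have hcs : (Z.filter (fun v => v.1 + v.2 ≤ s)).card ≤ s := by
      rcases Nat.eq_zero_or_pos s with rfl | hs
      · have h1 := hc 1 (by omega) (by omega)
        have := hmono 0 1 (by omega)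
        omega
      · have := hc s hs (by omega)
        omega
    have hAne : (RS Z s).Nonempty := by
      rw [← Finset.card_pos]; omega
    set A := RS Z s with hA
    set M := A.max' hAne with hM
    -- the expanded set before filtering
    set B := A ∪ A.image (· + 1) with hB
    have hMB : M + 1 ∈ B := by
      rw [hB]
      exact Finset.mem_union_right _ (Finset.mem_image.mpr ⟨M, A.max'_mem hAne, rfl⟩)
    have hMnA : M + 1 ∉ A := fun h => by
      have := Finset.le_max' A _ h; omega
    have hcardB : A.card + 1 ≤ B.card := by
      have hsub : insert (M + 1) A ⊆ B := by
        intro x hx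
        rcases Finset.mem_insert.mp hx with rfl | hx
        · exact hMB
        · exact Finset.mem_union_left _ hx
      calc A.card + 1 = (insert (M + 1) A).card := (Finset.card_insert_of_notMem hMnA).symm
        _ ≤ B.card := Finset.card_le_card hsub
    have hBle : ∀ i ∈ B, i ≤ s + 1 := by
      intro i hi
      rcases Finset.mem_union.mp hi with h | h
      · have := RS_le Z s i h; omega
      · obtain ⟨a, ha, rfl⟩ := Finset.mem_image.mp h
        have := RS_le Z s a ha; omega
    -- the blocked part
    set T := B.filter (fun i => (i, s + 1 - i) ∈ Z) with hT
    have hsplit : (RS Z (s + 1)).card + T.card = B.card := by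
      have h1 : RS Z (s + 1) = B.filter (fun i => ¬ (i, s + 1 - i) ∈ Z) := rfl
      rw [h1, hT, add_comm]
      exact Finset.card_filter_add_card_filter_not (p := fun i => (i, s + 1 - i) ∈ Z)
    -- T injects into new Z elements at level s+1
    have hTcard : T.card + (Z.filter (fun v => v.1 + v.2 ≤ s)).card
        ≤ (Z.filter (fun v => v.1 + v.2 ≤ s + 1)).card := by
      have himg : T.image (fun i => (i, s + 1 - i)) ∪ Z.filter (fun v => v.1 + v.2 ≤ s)
          ⊆ Z.filter (fun v => v.1 + v.2 ≤ s + 1) := by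
        intro v hv
        rcases Finset.mem_union.mp hv with h | h
        · obtain ⟨i, hi, rfl⟩ := Finset.mem_image.mp h
          obtain ⟨hiB, hiZ⟩ := Finset.mem_filter.mp hi
          exact Finset.mem_filter.mpr ⟨hiZ, by have := hBle i hiB; simp; omega⟩
        · obtain ⟨h1, h2⟩ := Finset.mem_filter.mp h
          exact Finset.mem_filter.mpr ⟨h1, by omega⟩
      have hdisj : Disjoint (T.image (fun i => (i, s + 1 - i)))
          (Z.filter (fun v => v.1 + v.2 ≤ s)) := by
        rw [Finset.disjoint_left]
        intro v hv hv'
        obtain ⟨i, hi, rfl⟩ := Finset.mem_image.mp hv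
        obtain ⟨hiB, _⟩ := Finset.mem_filter.mp hi
        have := hBle i hiB
        have := (Finset.mem_filter.mp hv').2
        simp at this
        omega
      have hinj : (T.image (fun i => (i, s + 1 - i))).card = T.card := by
        apply Finset.card_image_of_injOn
        intro a _ b _ hab
        exact congrArg Prod.fst hab
      calc T.card + (Z.filter (fun v => v.1 + v.2 ≤ s)).card
          = (T.image (fun i => (i, s + 1 - i)) ∪ Z.filter (fun v => v.1 + v.2 ≤ s)).card := by
            rw [Finset.card_union_of_disjoint hdisj, hinj]
        _ ≤ _ := Finset.card_le_card himg
    omega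

private lemma ceil_div_facts (ℓ s m : ℕ) (hℓ : 1 ≤ ℓ) (hs : 1 ≤ s) (hsL : s ≤ m / ℓ * ℓ) :
    ∃ i, 1 ≤ i ∧ i ≤ s ∧ s ≤ i * ℓ ∧ i * ℓ ≤ m := by
  have hℓ0 : 0 < ℓ := hℓ
  refine ⟨(s + ℓ - 1) / ℓ, ?_, ?_, ?_, ?_⟩
  · rw [Nat.le_div_iff_mul_le hℓ0]; omega
  · have h1 : s + ℓ - 1 < (s + 1) * ℓ := by
      rw [add_mul, one_mul]
      have : s ≤ s * ℓ := Nat.le_mul_of_pos_right s hℓ0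
      omega
    have := (Nat.div_lt_iff_lt_mul hℓ0).mpr h1
    omega
  · by_contra hcon
    push_neg at hcon
    have h2 : ((s + ℓ - 1) / ℓ + 1) * ℓ ≤ s + ℓ - 1 := by
      rw [add_mul, one_mul]; omega
    have := (Nat.le_div_iff_mul_le hℓ0).mpr h2
    omega
  · have h3 : (s + ℓ - 1) / ℓ ≤ m / ℓ := by
      have h4 : s + ℓ - 1 ≤ ℓ - 1 + ℓ * (m / ℓ) := by
        have : m / ℓ * ℓ = ℓ * (m / ℓ) := mul_comm _ _
        omega
      have h5 := Nat.div_le_div_right (c := ℓ) h4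
      rwa [Nat.add_mul_div_left _ _ hℓ0,
        Nat.div_eq_of_lt (show ℓ - 1 < ℓ by omega), Nat.zero_add] at h5
    calc (s + ℓ - 1) / ℓ * ℓ ≤ m / ℓ * ℓ := Nat.mul_le_mul_right ℓ h3
      _ ≤ m := Nat.div_mul_le_self m ℓ

private lemma reach_main (Z : Finset (ℕ × ℕ)) (L : ℕ)
    (hc : ∀ s, 1 ≤ s → s ≤ L → (Z.filter (fun v => v.1 + v.2 ≤ s)).card + 1 ≤ s) :
    ∃ S : Finset ℕ, S ⊆ Finset.range (L + 1) ∧ L + 1 ≤ S.card + Z.card ∧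
      ∀ i ∈ S, ∃ F : ℕ → ℕ × ℕ, F 0 = (0, 0) ∧ F L = (i, L - i) ∧
        (∀ t < L, F (t + 1) = ((F t).1 + 1, (F t).2) ∨ F (t + 1) = ((F t).1, (F t).2 + 1)) ∧
        (∀ t ≤ L, (F t).1 + (F t).2 = t ∧ F t ∉ Z) := by
  refine ⟨RS Z L, ?_, ?_, fun i hi => RS_path Z L i hi⟩
  · intro i hi
    exact Finset.mem_range.mpr (by have := RS_le Z L i hi; omega)
  · have h1 := RS_card Z L hc L le_rfl
    have h2 : (Z.filter (fun v => v.1 + v.2 ≤ L)).card ≤ Z.card :=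
      Finset.card_le_card (Finset.filter_subset _ _)
    omega

theorem grid_path_avoiding (ℓ : ℕ) (hℓ : 1 ≤ ℓ) :
    ∃ η₀ : ℝ, 0 < η₀ ∧ ∀ η : ℝ, 0 < η → η < η₀ →
      ∃ n₀ : ℕ, ∀ n : ℕ, n₀ ≤ n → ∀ m : ℕ, (m : ℝ) = η ^ 2 * n →
        ∀ Z : Finset (ℕ × ℕ),
          (∀ v ∈ Z, v.1 ≤ n ∧ v.2 ≤ n ∧ (v.1 : ℤ) - v.2 ≤ m ∧ (v.2 : ℤ) - v.1 ≤ m) →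
          10 * Z.card ≤ m →
          (∀ i : ℕ, 1 ≤ i → i * ℓ ≤ m →
            (Z.filter (fun v => v.1 + v.2 ≤ i * ℓ)).card ≤ i - 1 ∧
            (Z.filter (fun v => 2 * n - i * ℓ ≤ v.1 + v.2)).card ≤ i - 1) →
          ∃ f : ℕ → ℕ × ℕ, f 0 = (0, 0) ∧ f (2 * n) = (n, n) ∧
            (∀ j < 2 * n, f (j + 1) = ((f j).1 + 1, (f j).2) ∨
                          f (j + 1) = ((f j).1, (f j).2 + 1)) ∧
            (∀ j ≤ 2 * n, (f j).1 ≤ n ∧ (f j).2 ≤ n ∧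
              ((f j).1 : ℤ) - (f j).2 ≤ m ∧ ((f j).2 : ℤ) - (f j).1 ≤ m ∧ f j ∉ Z) := by
  refine ⟨1, one_pos, ?_⟩
  intro η hη hη1
  refine ⟨⌈(100 * ℓ + 101 : ℝ) / η ^ 2⌉₊ + 1, ?_⟩
  intro n hn m hm Z hZbox hZcard hG2
  have hη2 : (0 : ℝ) < η ^ 2 := by positivity
  have hn0 : 1 ≤ n := by omega
  -- m is large
  have hm1 : 100 * ℓ + 101 ≤ m := by
    have hceil : ((100 * ℓ + 101 : ℝ)) / η ^ 2 ≤ (n : ℝ) := by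
      refine le_trans (Nat.le_ceil _) ?_
      exact_mod_cast Nat.le_of_succ_le hn
    rw [div_le_iff₀ hη2] at hceil
    have h2 : ((100 * ℓ + 101 : ℕ) : ℝ) ≤ (m : ℝ) := by
      rw [hm]; push_cast; nlinarith
    exact_mod_cast h2
  -- m < n
  have hmn : m < n := by
    have h1 : (m : ℝ) < (n : ℝ) := by
      rw [hm]
      have hη21 : η ^ 2 < 1 := by nlinarith
      have : (0 : ℝ) < (n : ℝ) := by exact_mod_cast hn0
      nlinarith
    exact_mod_cast h1
  have hℓm : ℓ ≤ m := by omega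
  set L := m / ℓ * ℓ with hLdef
  have hLm : L ≤ m := Nat.div_mul_le_self m ℓ
  have hLlow : m < L + ℓ := Nat.lt_div_mul_add (by omega)
  have hL1 : 1 ≤ L := by omega
  have hLn : L < n := by omega
  -- counting hypothesis for Z (start levels)
  have hcZ : ∀ s, 1 ≤ s → s ≤ L → (Z.filter (fun v => v.1 + v.2 ≤ s)).card + 1 ≤ s := by
    intro s hs1 hsL
    obtain ⟨i, hi1, his, hsi, him⟩ := ceil_div_facts ℓ s m hℓ hs1 hsL
    have hg := (hG2 i hi1 him).1
    have hsub : (Z.filter (fun v => v.1 + v.2 ≤ s)).card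
        ≤ (Z.filter (fun v => v.1 + v.2 ≤ i * ℓ)).card := by
      apply Finset.card_le_card
      intro v hv
      simp only [Finset.mem_filter] at hv ⊢
      exact ⟨hv.1, le_trans hv.2 hsi⟩
    omega
  -- the reflected obstacle set
  set Z' := Z.image (fun v => (n - v.1, n - v.2)) with hZ'def
  have hZ'card : Z'.card ≤ Z.card := Finset.card_image_le
  have hcZ'aux : ∀ s, (Z'.filter (fun v => v.1 + v.2 ≤ s)).card
      ≤ (Z.filter (fun v => 2 * n - s ≤ v.1 + v.2)).card := by
    intro s
    apply Finset.card_le_card_of_injOn (fun w => (n - w.1, n - w.2))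
    · intro w hw
      obtain ⟨hw1, hw2⟩ := Finset.mem_filter.mp hw
      obtain ⟨z, hz, rfl⟩ := Finset.mem_image.mp hw1
      obtain ⟨hz1, hz2, _, _⟩ := hZbox z hz
      simp only [Finset.mem_coe, Finset.mem_filter]
      constructor
      · have : ((n : ℕ) - (n - z.1), n - (n - z.2)) = z := by
          apply Prod.ext <;> dsimp <;> omega
        rw [this]; exact hz
      · have hw2' : n - z.1 + (n - z.2) ≤ s := hw2
        show 2 * n - s ≤ n - (n - z.1) + (n - (n - z.2))
        omega
    · intro w hw w' hw' he
      obtain ⟨hw1, _⟩ := Finset.mem_filter.mp hw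
      obtain ⟨z, hz, rfl⟩ := Finset.mem_image.mp hw1
      obtain ⟨hz1, hz2, _, _⟩ := hZbox z hz
      obtain ⟨hw1', _⟩ := Finset.mem_filter.mp hw'
      obtain ⟨z', hz', rfl⟩ := Finset.mem_image.mp hw1'
      obtain ⟨hz1', hz2', _, _⟩ := hZbox z' hz'
      have e1 : (n : ℕ) - (n - z.1) = n - (n - z'.1) := congrArg Prod.fst he
      have e2 : (n : ℕ) - (n - z.2) = n - (n - z'.2) := congrArg Prod.snd he
      refine Prod.ext ?_ ?_
      · show n - z.1 = n - z'.1
        omega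
      · show n - z.2 = n - z'.2
        omega
  have hcZ' : ∀ s, 1 ≤ s → s ≤ L → (Z'.filter (fun v => v.1 + v.2 ≤ s)).card + 1 ≤ s := by
    intro s hs1 hsL
    obtain ⟨i, hi1, his, hsi, him⟩ := ceil_div_facts ℓ s m hℓ hs1 hsL
    have hg := (hG2 i hi1 him).2
    have hsub : (Z.filter (fun v => 2 * n - s ≤ v.1 + v.2)).card
        ≤ (Z.filter (fun v => 2 * n - i * ℓ ≤ v.1 + v.2)).card := by
      apply Finset.card_le_card
      intro v hv
      simp only [Finset.mem_filter] at hv ⊢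
      exact ⟨hv.1, by omega⟩
    have := hcZ'aux s
    omega
  obtain ⟨Sf, hSfsub, hSfcard, hSfspec⟩ := reach_main Z L hcZ
  obtain ⟨Sb, hSbsub, hSbcard, hSbspec⟩ := reach_main Z' L hcZ'
  classical
  -- candidate diagonal offsets
  set D := (Finset.range (L / 2)).image (fun k => 2 * k + L % 2) with hDdef
  have hDcard : D.card = L / 2 := by
    rw [hDdef, Finset.card_image_of_injective _ (fun a b h => by omega), Finset.card_range]
  have hDmem : ∀ d ∈ D, d % 2 = L % 2 ∧ d + 2 ≤ L := by
    intro d hd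
    obtain ⟨k, hk, rfl⟩ := Finset.mem_image.mp hd
    have := Finset.mem_range.mp hk
    omega
  set P : ℕ → Prop := fun d => ∃ z ∈ Z, z.1 = z.2 + d ∨ z.1 = z.2 + d + 1 with hPdef
  set B1 := D.filter (fun d => P d) with hB1def
  set B2 := D.filter (fun d => (L + d) / 2 ∉ Sf) with hB2def
  set B3 := D.filter (fun d => (L - d) / 2 ∉ Sb) with hB3def
  have hB1card : B1.card ≤ Z.card := by
    apply Finset.card_le_card_of_injOn
      (fun d => if h : P d then h.choose else (0, 0))
    · intro d hd
      obtain ⟨_, hp⟩ := Finset.mem_filter.mp hd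
      simp only [Finset.mem_coe, dif_pos hp]
      exact hp.choose_spec.1
    · intro a ha b hb he
      obtain ⟨haD, hpa⟩ := Finset.mem_filter.mp ha
      obtain ⟨hbD, hpb⟩ := Finset.mem_filter.mp hb
      have he' : (if h : P a then h.choose else ((0 : ℕ), (0 : ℕ)))
          = (if h : P b then h.choose else ((0 : ℕ), (0 : ℕ))) := he
      rw [dif_pos hpa, dif_pos hpb] at he'
      have h1 := hpa.choose_spec.2
      have h2 := hpb.choose_spec.2
      rw [he'] at h1
      have hpar1 := (hDmem a haD).1
      have hpar2 := (hDmem b hbD).1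
      omega
  have hrange : ∀ (S : Finset ℕ), S ⊆ Finset.range (L + 1) → L + 1 ≤ S.card + Z.card →
      ((Finset.range (L + 1)) \ S).card ≤ Z.card := by
    intro S hsub hcard
    rw [Finset.card_sdiff_of_subset hsub, Finset.card_range]
    have := Finset.card_le_card hsub
    rw [Finset.card_range] at this
    omega
  have hB2card : B2.card ≤ Z.card := by
    refine le_trans (Finset.card_le_card_of_injOn (fun d => (L + d) / 2) ?_ ?_)
      (hrange Sf hSfsub hSfcard)
    · intro d hd
      obtain ⟨hdD, hp⟩ := Finset.mem_filter.mp hd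
      have := (hDmem d hdD).2
      show (L + d) / 2 ∈ Finset.range (L + 1) \ Sf
      exact Finset.mem_sdiff.mpr ⟨Finset.mem_range.mpr (by omega), hp⟩
    · intro a ha b hb he
      obtain ⟨haD, _⟩ := Finset.mem_filter.mp ha
      obtain ⟨hbD, _⟩ := Finset.mem_filter.mp hb
      have he' : (L + a) / 2 = (L + b) / 2 := he
      have hpar1 := (hDmem a haD).1
      have hpar2 := (hDmem b hbD).1
      omega
  have hB3card : B3.card ≤ Z.card := by
    refine le_trans (Finset.card_le_card_of_injOn (fun d => (L - d) / 2) ?_ ?_)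
      (hrange Sb hSbsub (by omega))
    · intro d hd
      obtain ⟨hdD, hp⟩ := Finset.mem_filter.mp hd
      have := (hDmem d hdD).2
      show (L - d) / 2 ∈ Finset.range (L + 1) \ Sb
      exact Finset.mem_sdiff.mpr ⟨Finset.mem_range.mpr (by omega), hp⟩
    · intro a ha b hb he
      obtain ⟨haD, _⟩ := Finset.mem_filter.mp ha
      obtain ⟨hbD, _⟩ := Finset.mem_filter.mp hb
      have he' : (L - a) / 2 = (L - b) / 2 := he
      have hpar1 := (hDmem a haD).1
      have hpar2 := (hDmem b hbD).1
      have h2a := (hDmem a haD).2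
      have h2b := (hDmem b hbD).2
      omega
  have hexists : ∃ d ∈ D, d ∉ B1 ∪ B2 ∪ B3 := by
    by_contra hcon
    push_neg at hcon
    have hsub : D ⊆ B1 ∪ B2 ∪ B3 := hcon
    have h1 := Finset.card_le_card hsub
    have h2 : (B1 ∪ B2 ∪ B3).card ≤ B1.card + B2.card + B3.card :=
      le_trans (Finset.card_union_le _ _)
        (by have := Finset.card_union_le B1 B2; omega)
    have hD2 : D.card = L / 2 := hDcard
    omega
  obtain ⟨d, hdD, hdnot⟩ := hexists
  simp only [Finset.mem_union, not_or] at hdnot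
  obtain ⟨⟨hdB1, hdB2⟩, hdB3⟩ := hdnot
  have hd2 : d % 2 = L % 2 := (hDmem d hdD).1
  have hdL : d + 2 ≤ L := (hDmem d hdD).2
  have hnotP : ¬ P d := fun h => hdB1 (Finset.mem_filter.mpr ⟨hdD, h⟩)
  have hi0mem : (L + d) / 2 ∈ Sf := by
    by_contra h
    exact hdB2 (Finset.mem_filter.mpr ⟨hdD, h⟩)
  have hj0mem : (L - d) / 2 ∈ Sb := by
    by_contra h
    exact hdB3 (Finset.mem_filter.mpr ⟨hdD, h⟩)
  set i0 := (L + d) / 2 with hi0def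
  set j0 := (L - d) / 2 with hj0def
  have h2i0 : 2 * i0 = L + d := by omega
  have h2j0 : 2 * j0 = L - d := by omega
  have hij : i0 + j0 = L := by omega
  have hd0 : i0 = j0 + d := by omega
  have hj01 : 1 ≤ j0 := by omega
  obtain ⟨F, hF0, hFL0, hFstep, hFval⟩ := hSfspec i0 hi0mem
  obtain ⟨G, hG0, hGL0, hGstep, hGval⟩ := hSbspec j0 hj0mem
  have hFL : F L = (i0, j0) := by rw [hFL0]; exact Prod.ext rfl (by dsimp; omega)
  have hGL : G L = (j0, i0) := by rw [hGL0]; exact Prod.ext rfl (by dsimp; omega)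
  have hreflZ : ∀ a b : ℕ, a ≤ n → b ≤ n → (a, b) ∉ Z' → (n - a, n - b) ∉ Z := by
    intro a b ha hb hnot hmem
    apply hnot
    rw [hZ'def]
    refine Finset.mem_image.mpr ⟨(n - a, n - b), hmem, ?_⟩
    refine Prod.ext ?_ ?_
    · show n - (n - a) = a
      omega
    · show n - (n - b) = b
      omega
  -- assemble the path
  set f : ℕ → ℕ × ℕ := fun t =>
    if t ≤ L then F t
    else if t ≤ 2 * n - L then (i0 + (t - L) / 2 + (t - L) % 2, j0 + (t - L) / 2)
    else (n - (G (2 * n - t)).1, n - (G (2 * n - t)).2) with hfdef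
  have hfF : ∀ t, t ≤ L → f t = F t := by
    intro t ht
    simp only [hfdef]
    rw [if_pos ht]
  have hfM : ∀ t, L ≤ t → t ≤ 2 * n - L →
      f t = (i0 + (t - L) / 2 + (t - L) % 2, j0 + (t - L) / 2) := by
    intro t h1 h2
    simp only [hfdef]
    by_cases h : t ≤ L
    · have ht : t = L := le_antisymm h h1
      subst ht
      rw [if_pos le_rfl, hFL]
      refine Prod.ext ?_ ?_
      · show i0 = i0 + (L - L) / 2 + (L - L) % 2
        omega
      · show j0 = j0 + (L - L) / 2
        omega
    · rw [if_neg h, if_pos h2]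
  have hfB : ∀ t, 2 * n - L ≤ t → L < t →
      f t = (n - (G (2 * n - t)).1, n - (G (2 * n - t)).2) := by
    intro t h1 h2
    simp only [hfdef]
    rw [if_neg (by omega)]
    by_cases h : t ≤ 2 * n - L
    · have ht : t = 2 * n - L := le_antisymm h h1
      subst ht
      rw [if_pos le_rfl]
      have e : 2 * n - (2 * n - L) = L := by omega
      rw [e, hGL]
      refine Prod.ext ?_ ?_
      · show i0 + (2 * n - L - L) / 2 + (2 * n - L - L) % 2 = n - j0
        omega
      · show j0 + (2 * n - L - L) / 2 = n - i0
        omega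
    · rw [if_neg h]
  refine ⟨f, ?_, ?_, ?_, ?_⟩
  · rw [hfF 0 (Nat.zero_le L), hF0]
  · rw [hfB (2 * n) (by omega) (by omega)]
    have e : 2 * n - 2 * n = 0 := by omega
    rw [e, hG0]
    refine Prod.ext ?_ ?_
    · show n - 0 = n
      omega
    · show n - 0 = n
      omega
  · intro j hj
    by_cases hc1 : j + 1 ≤ L
    · rw [hfF j (by omega), hfF (j + 1) hc1]
      exact hFstep j (by omega)
    · by_cases hc2 : j + 1 ≤ 2 * n - L
      · have hLj : L ≤ j := by omega
        rw [hfM j hLj (by omega), hfM (j + 1) (by omega) hc2]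
        by_cases hr : (j - L) % 2 = 0
        · left
          refine Prod.ext ?_ ?_
          · show i0 + (j + 1 - L) / 2 + (j + 1 - L) % 2 = i0 + (j - L) / 2 + (j - L) % 2 + 1
            omega
          · show j0 + (j + 1 - L) / 2 = j0 + (j - L) / 2
            omega
        · right
          refine Prod.ext ?_ ?_
          · show i0 + (j + 1 - L) / 2 + (j + 1 - L) % 2 = i0 + (j - L) / 2 + (j - L) % 2
            omega
          · show j0 + (j + 1 - L) / 2 = j0 + (j - L) / 2 + 1
            omega
      · have hj1 : 2 * n - L ≤ j := by omega
        have hLj : L < j := by omega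
        rw [hfB j hj1 hLj, hfB (j + 1) (by omega) (by omega)]
        have hsle : 2 * n - j ≤ L := by omega
        have hs1 : 1 ≤ 2 * n - j := by omega
        have e1 : 2 * n - (j + 1) = 2 * n - j - 1 := by omega
        rw [e1]
        have hstep := hGstep (2 * n - j - 1) (by omega)
        have e2 : 2 * n - j - 1 + 1 = 2 * n - j := by omega
        rw [e2] at hstep
        have hsum1 := (hGval (2 * n - j) hsle).1
        rcases hstep with h | h
        · have hx : (G (2 * n - j)).1 = (G (2 * n - j - 1)).1 + 1 := by rw [h]
          have hy : (G (2 * n - j)).2 = (G (2 * n - j - 1)).2 := by rw [h]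
          left
          refine Prod.ext ?_ ?_
          · show n - (G (2 * n - j - 1)).1 = n - (G (2 * n - j)).1 + 1
            omega
          · show n - (G (2 * n - j - 1)).2 = n - (G (2 * n - j)).2
            omega
        · have hx : (G (2 * n - j)).1 = (G (2 * n - j - 1)).1 := by rw [h]
          have hy : (G (2 * n - j)).2 = (G (2 * n - j - 1)).2 + 1 := by rw [h]
          right
          refine Prod.ext ?_ ?_
          · show n - (G (2 * n - j - 1)).1 = n - (G (2 * n - j)).1
            omega
          · show n - (G (2 * n - j - 1)).2 = n - (G (2 * n - j)).2 + 1
            omega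
  · intro j hj
    by_cases hc1 : j ≤ L
    · rw [hfF j hc1]
      obtain ⟨hsum, hnz⟩ := hFval j hc1
      exact ⟨by omega, by omega, by omega, by omega, hnz⟩
    · by_cases hc2 : j ≤ 2 * n - L
      · have hLj : L ≤ j := by omega
        rw [hfM j hLj hc2]
        refine ⟨?_, ?_, ?_, ?_, ?_⟩
        · show i0 + (j - L) / 2 + (j - L) % 2 ≤ n
          omega
        · show j0 + (j - L) / 2 ≤ n
          omega
        · show ((i0 + (j - L) / 2 + (j - L) % 2 : ℕ) : ℤ) - ((j0 + (j - L) / 2 : ℕ) : ℤ) ≤ (m : ℤ)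
          omega
        · show ((j0 + (j - L) / 2 : ℕ) : ℤ) - ((i0 + (j - L) / 2 + (j - L) % 2 : ℕ) : ℤ) ≤ (m : ℤ)
          omega
        · intro hmem
          by_cases hr : (j - L) % 2 = 0
          · exact hnotP ⟨_, hmem, Or.inl (by
              show i0 + (j - L) / 2 + (j - L) % 2 = j0 + (j - L) / 2 + d
              omega)⟩
          · exact hnotP ⟨_, hmem, Or.inr (by
              show i0 + (j - L) / 2 + (j - L) % 2 = j0 + (j - L) / 2 + d + 1
              omega)⟩
      · have hj1 : 2 * n - L ≤ j := by omega
        rw [hfB j hj1 (by omega)]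
        obtain ⟨hsum, hnz'⟩ := hGval (2 * n - j) (by omega)
        have hG1n : (G (2 * n - j)).1 ≤ n := by omega
        have hG2n : (G (2 * n - j)).2 ≤ n := by omega
        refine ⟨?_, ?_, ?_, ?_, ?_⟩
        · show n - (G (2 * n - j)).1 ≤ n
          omega
        · show n - (G (2 * n - j)).2 ≤ n
          omega
        · show ((n - (G (2 * n - j)).1 : ℕ) : ℤ) - ((n - (G (2 * n - j)).2 : ℕ) : ℤ) ≤ (m : ℤ)
          omega
        · show ((n - (G (2 * n - j)).2 : ℕ) : ℤ) - ((n - (G (2 * n - j)).1 : ℕ) : ℤ) ≤ (m : ℤ)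
          omega
        · have heta : ((G (2 * n - j)).1, (G (2 * n - j)).2) = G (2 * n - j) := rfl
          exact hreflZ _ _ hG1n hG2n (heta ▸ hnz')
end

section
/- Let p(z) ∈ ℤ[z] be a polynomial of degree d ≥ 2 with positive leading coefficient, φ: ℕ → {−1, 1} a coloring, and k a sufficiently large integer with φ(k) = +1 and φ(k+1) = −1. Write m_s(k) = p(k+s) − p(k). Call a pair {a, b} ⊆ ℕ (k,s)-bad if b = a + m_s(k), φ(k+s) = −1, φ(a) = +1, and φ(b) = −1. If {a, b} is a (k,s)-bad pair, then either (a, p(k)−a, k) or (b, p(k)−a, k+s) is a monochromatic solution of x + y = p(z) under φ. -/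
theorem bad_pair_gives_solution (d : ℕ) (hd : 2 ≤ d) (a : ℕ → ℤ) (ha : 0 < a d)
    (P : ℤ → ℤ) (hP : ∀ z, P z = ∑ i ∈ Finset.range (d + 1), a i * z ^ i)
    (φ : ℤ → ℤ) (hφ : ∀ x : ℤ, φ x = 1 ∨ φ x = -1) :
    ∃ k₀ : ℕ, ∀ k : ℕ, k₀ ≤ k → φ k = 1 → φ ((k : ℤ) + 1) = -1 →
      ∀ s : ℕ, 1 ≤ s → ∀ x y : ℤ, 0 < x → y ≤ P k →
        y = x + (P ((k : ℤ) + s) - P k) → φ ((k : ℤ) + s) = -1 → φ x = 1 → φ y = -1 →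
        ((x + (P k - x) = P k ∧ 0 < P (k : ℤ) - x ∧
            φ x = 1 ∧ φ (P k - x) = 1 ∧ φ (k : ℤ) = 1) ∨
         (y + (P k - x) = P ((k : ℤ) + s) ∧ 0 < P (k : ℤ) - x ∧
            φ y = -1 ∧ φ (P k - x) = -1 ∧ φ ((k : ℤ) + s) = -1)) := by
  classical
  set p : Polynomial ℝ :=
    ∑ i ∈ Finset.range (d + 1), Polynomial.C ((a i : ℝ)) * Polynomial.X ^ i with hp
  have heval : ∀ m : ℤ, Polynomial.eval (m : ℝ) p = ((P m : ℤ) : ℝ) := by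
    intro m
    rw [hP m]
    push_cast
    simp [hp, Polynomial.eval_finset_sum]
  have hcoeff : ∀ n, p.coeff n = if n ≤ d then (a n : ℝ) else 0 := by
    intro n
    simp only [hp, Polynomial.finset_sum_coeff, Polynomial.coeff_C_mul, Polynomial.coeff_X_pow,
      mul_ite, mul_one, mul_zero, Finset.sum_ite_eq, Finset.mem_range, Nat.lt_succ_iff]
  have hdc : (Polynomial.derivative p).coeff (d - 1) = d * a d := by
    rw [Polynomial.coeff_derivative, hcoeff]
    rw [if_pos (by omega : d - 1 + 1 ≤ d)]
    have : d - 1 + 1 = d := by omega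
    rw [this]
    push_cast [Nat.cast_sub (by omega : 1 ≤ d)]
    ring
  have hddeg : (Polynomial.derivative p).natDegree = d - 1 := by
    apply le_antisymm
    · exact (Polynomial.natDegree_derivative_le p).trans (by
        apply Nat.sub_le_sub_right
        apply Polynomial.natDegree_le_iff_coeff_eq_zero.2
        intro n hn
        rw [hcoeff, if_neg (by omega)])
    · apply Polynomial.le_natDegree_of_ne_zero
      rw [hdc]
      positivity
  have hlc : 0 < (Polynomial.derivative p).leadingCoeff := by
    rw [Polynomial.leadingCoeff, hddeg, hdc]
    positivity
  have hdegpos : 0 < (Polynomial.derivative p).degree := by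
    rw [Polynomial.degree_eq_natDegree (fun h => by simp [h] at hlc), hddeg]
    exact_mod_cast (by omega : 0 < d - 1)
  have htend := Polynomial.tendsto_atTop_of_leadingCoeff_nonneg _ hdegpos hlc.le
  obtain ⟨x₀, hx₀⟩ := (Filter.tendsto_atTop.1 htend 1).exists_forall_of_atTop
  obtain ⟨k₀, hk₀⟩ := exists_nat_ge x₀
  refine ⟨k₀, ?_⟩
  have hmono : StrictMonoOn (fun x : ℝ => Polynomial.eval x p) (Set.Ici (k₀ : ℝ)) := by
    apply strictMonoOn_of_deriv_pos (convex_Ici _) (p.continuous.continuousOn)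
    intro x hx
    rw [interior_Ici] at hx
    rw [Polynomial.deriv]
    have := hx₀ x (le_trans hk₀ hx.le)
    linarith
  intro k hk hφk hφk1 s hs x y hx hyle hyeq hφks hφx hφy
  have hPlt : P (k : ℤ) < P ((k : ℤ) + s) := by
    have h1 : ((k : ℤ) : ℝ) ∈ Set.Ici (k₀ : ℝ) := by
      simp only [Set.mem_Ici]; exact_mod_cast hk
    have h2 : (((k : ℤ) + s : ℤ) : ℝ) ∈ Set.Ici (k₀ : ℝ) := by
      simp only [Set.mem_Ici]
      push_cast
      have : (k₀ : ℝ) ≤ (k : ℝ) := by exact_mod_cast hk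
      have hs' : (0 : ℝ) ≤ (s : ℝ) := by positivity
      linarith
    have h3 : (((k : ℤ)) : ℝ) < (((k : ℤ) + s : ℤ) : ℝ) := by
      push_cast
      have : (1 : ℝ) ≤ (s : ℝ) := by exact_mod_cast hs
      linarith
    have := hmono h1 h2 h3
    simp only [heval] at this
    exact_mod_cast this
  have hpos : 0 < P (k : ℤ) - x := by linarith
  rcases hφ (P (k : ℤ) - x) with h | h
  · exact Or.inl ⟨by ring, hpos, hφx, h, hφk⟩
  · exact Or.inr ⟨by rw [hyeq]; ring, hpos, hφy, h, hφks⟩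
end

section
/- Let p(z) ∈ ℤ[z] have degree d ≥ 2 and positive leading coefficient, φ: ℕ → {−1, 1}, and k a sufficiently large positive switch (φ(k) = +1, φ(k+1) = −1). If there are t pairwise disjoint (k, s_i)-bad pairs {a_i, b_i} (i ∈ [t]), then there exist at least t distinct monochromatic solutions (x, y, z) of x + y = p(z), where (x,y,z) and (y,x,z) count as distinct. -/
open Polynomial

theorem aux_mono (d : ℕ) (hd : 2 ≤ d) (a : ℕ → ℤ) (ha : 0 < a d)
    (P : ℤ → ℤ) (hP : ∀ z, P z = ∑ i ∈ Finset.range (d + 1), a i * z ^ i) :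
    ∃ k₀ : ℕ, 1 ≤ k₀ ∧ ∀ m n : ℤ, (k₀:ℤ) ≤ m → m < n → P m < P n := by
  classical
  set Q : ℝ[X] := ∑ i ∈ Finset.range (d+1), C ((a i : ℝ)) * X ^ i with hQdef
  have hQeval : ∀ m : ℤ, (P m : ℝ) = Q.eval (m : ℝ) := by
    intro m
    rw [hP, hQdef]
    push_cast
    simp [Polynomial.eval_finset_sum]
  have hQcoeff : ∀ n, Q.coeff n = if n < d + 1 then (a n : ℝ) else 0 := by
    intro n
    simp [hQdef, Polynomial.finset_sum_coeff, Polynomial.coeff_C_mul, Polynomial.coeff_X_pow]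
  have had : (0:ℝ) < (a d : ℝ) := by exact_mod_cast ha
  have hQd : Q.coeff d = (a d : ℝ) := by rw [hQcoeff]; simp
  have hcast : ((d-1:ℕ):ℝ) = (d:ℝ) - 1 := by
    have : (1:ℕ) ≤ d := by omega
    push_cast [Nat.cast_sub this]; ring
  have hD : Q.derivative.coeff (d-1) = d * (a d : ℝ) := by
    rw [Polynomial.coeff_derivative, show d - 1 + 1 = d by omega, hQd, hcast]
    ring
  have hDpos : (0:ℝ) < Q.derivative.coeff (d-1) := by
    rw [hD]; positivity
  have hDdeg : Q.derivative.natDegree = d - 1 := by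
    apply le_antisymm
    · have hQnd : Q.natDegree ≤ d := by
        apply Polynomial.natDegree_le_iff_coeff_eq_zero.mpr
        intro n hn
        rw [hQcoeff]
        exact if_neg (by omega)
      calc Q.derivative.natDegree ≤ Q.natDegree - 1 := Polynomial.natDegree_derivative_le Q
        _ ≤ d - 1 := by omega
    · exact Polynomial.le_natDegree_of_ne_zero (ne_of_gt hDpos)
  have hlead : Q.derivative.leadingCoeff = d * (a d : ℝ) := by
    rw [Polynomial.leadingCoeff, hDdeg, hD]
  have htend : Filter.Tendsto (fun x => Q.derivative.eval x) Filter.atTop Filter.atTop := by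
    apply Polynomial.tendsto_atTop_of_leadingCoeff_nonneg
    · rw [Polynomial.degree_eq_natDegree (fun h => by rw [h] at hDpos; simp at hDpos), hDdeg]
      exact_mod_cast (by omega : 0 < d - 1)
    · rw [hlead]; positivity
  obtain ⟨x₀, hx₀⟩ := (Filter.tendsto_atTop.mp htend 1).exists_forall_of_atTop
  have hmono : StrictMonoOn (fun x => Q.eval x) (Set.Ici x₀) := by
    apply strictMonoOn_of_deriv_pos (convex_Ici x₀) (Polynomial.continuousOn Q)
    intro x hx
    rw [Polynomial.deriv]
    have : x₀ ≤ x := le_of_lt (by simpa using hx)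
    linarith [hx₀ x this]
  refine ⟨max 1 ⌈x₀⌉₊, le_max_left _ _, fun m n hm hmn => ?_⟩
  have hx0m : x₀ ≤ (m:ℝ) := by
    have h1 : (⌈x₀⌉₊ : ℤ) ≤ m := le_trans (by exact_mod_cast le_max_right 1 ⌈x₀⌉₊) hm
    calc x₀ ≤ (⌈x₀⌉₊ : ℝ) := Nat.le_ceil x₀
      _ ≤ (m : ℝ) := by exact_mod_cast h1
  have hmnR : (m:ℝ) < (n:ℝ) := by exact_mod_cast hmn
  have : Q.eval (m:ℝ) < Q.eval (n:ℝ) :=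
    hmono (Set.mem_Ici.mpr hx0m) (Set.mem_Ici.mpr (by linarith)) hmnR
  rw [← hQeval, ← hQeval] at this
  exact_mod_cast this
theorem disjoint_bad_pairs_give_solutions (d : ℕ) (hd : 2 ≤ d) (a : ℕ → ℤ) (ha : 0 < a d)
    (P : ℤ → ℤ) (hP : ∀ z, P z = ∑ i ∈ Finset.range (d + 1), a i * z ^ i)
    (φ : ℤ → ℤ) (hφ : ∀ x : ℤ, φ x = 1 ∨ φ x = -1) :
    ∃ k₀ : ℕ, ∀ k : ℕ, k₀ ≤ k → φ k = 1 → φ ((k : ℤ) + 1) = -1 →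
      ∀ t : ℕ, ∀ A B : ℕ → ℤ, ∀ s : ℕ → ℕ,
        (∀ i ∈ Finset.Icc 1 t, 1 ≤ s i ∧ 0 < A i ∧ B i ≤ P k ∧
          B i = A i + (P ((k : ℤ) + s i) - P k) ∧
          φ ((k : ℤ) + s i) = -1 ∧ φ (A i) = 1 ∧ φ (B i) = -1) →
        (∀ i ∈ Finset.Icc 1 t, ∀ j ∈ Finset.Icc 1 t, i ≠ j →
          A i ≠ A j ∧ A i ≠ B j ∧ B i ≠ A j ∧ B i ≠ B j) →
        ∃ S : Finset (ℤ × ℤ × ℤ), t ≤ S.card ∧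
          ∀ v ∈ S, v.1 + v.2.1 = P v.2.2 ∧ φ v.1 = φ v.2.1 ∧ φ v.2.1 = φ v.2.2 ∧
            0 < v.1 ∧ 0 < v.2.1 ∧ 0 < v.2.2 := by
  classical
  obtain ⟨k₀, hk₀1, hk₀⟩ := aux_mono d hd a ha P hP
  refine ⟨k₀, fun k hk hφk _ t A B s hbad hdisj => ?_⟩
  have hkZ : (k₀ : ℤ) ≤ (k : ℤ) := by exact_mod_cast hk
  have hkpos : (0:ℤ) < (k:ℤ) := by exact_mod_cast (by omega : 0 < k)
  have hΔ : ∀ i ∈ Finset.Icc 1 t, 0 < P ((k:ℤ) + s i) - P k := by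
    intro i hi
    have hs := (hbad i hi).1
    have : (k:ℤ) < (k:ℤ) + s i := by
      have : (0:ℤ) < (s i : ℤ) := by exact_mod_cast hs
      linarith
    linarith [hk₀ (k:ℤ) ((k:ℤ) + s i) hkZ this]
  set f : ℕ → ℤ × ℤ × ℤ := fun i =>
    if φ (P k - A i) = 1 then ((A i, P k - A i, (k:ℤ)) : ℤ × ℤ × ℤ)
    else (B i, P k - A i, (k:ℤ) + s i) with hf
  refine ⟨(Finset.Icc 1 t).image f, ?_, ?_⟩
  · rw [Finset.card_image_of_injOn]
    · simp
    · intro i hi j hj hij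
      by_contra hne
      obtain ⟨h1, h2, h3, h4⟩ := hdisj i hi j hj hne
      have := congrArg Prod.fst hij
      simp only [hf] at this
      split_ifs at this <;> simp_all
  · intro v hv
    obtain ⟨i, hi, hfi⟩ := Finset.mem_image.mp hv
    obtain ⟨hs, hA, hBle, hBeq, hφks, hφA, hφB⟩ := hbad i hi
    have hΔi := hΔ i hi
    have hcpos : 0 < P k - A i := by linarith
    have hkspos : (0:ℤ) < (k:ℤ) + s i := by positivity
    subst hfi
    simp only [hf]
    split_ifs with hc
    · refine ⟨by ring, by rw [hφA, hc], by rw [hc, hφk], hA, hcpos, hkpos⟩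
    · have hc' : φ (P k - A i) = -1 := (hφ _).resolve_left hc
      refine ⟨by rw [hBeq]; ring, by rw [hφB, hc'], by rw [hc', hφks], by linarith, hcpos, hkspos⟩
end

section
/- Let p(z) ∈ ℤ[z] be a polynomial of degree d ≥ 2 with positive leading coefficient. For all sufficiently large n, suppose both p(n) and p(p(n)/2) are even. Then the 2-coloring of the interval [n, (1/2)·p((1/2)·p(n)) − 1] that assigns +1 to all integers in [n, p(n)/2 − 1] and −1 to all integers in [p(n)/2, (1/2)·p((1/2)·p(n)) − 1] admits no monochromatic solution (x, y, z) of x + y = p(z) with x, y, z in the colored interval. -/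
open Finset

lemma aux_pow_lb (m : ℤ) (hm : 0 ≤ m) : ∀ d : ℕ, m^(d+1) + ((d:ℤ)+1) * m^d ≤ (m+1)^(d+1) := by
  intro d
  induction d with
  | zero => simp
  | succ k ih =>
    have h2 : (m^(k+1) + ((k:ℤ)+1)*m^k) * (m+1) ≤ (m+1)^(k+1) * (m+1) :=
      mul_le_mul_of_nonneg_right ih (by linarith)
    have h3 : (0:ℤ) ≤ m^k := pow_nonneg hm k
    have e1 : (m+1)^(k+1+1) = (m+1)^(k+1) * (m+1) := by ring
    have e2 : m^(k+1+1) = m^(k+1) * m := by ring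
    have e3 : m^(k+1) = m^k * m := by ring
    push_cast
    nlinarith [h2, h3, hm, e1, e2, e3]

lemma aux_pow_ub (m : ℤ) (hm : 0 ≤ m) : ∀ i : ℕ, (m+1)^(i+1) ≤ m^(i+1) + ((i:ℤ)+1) * (m+1)^i := by
  intro i
  induction i with
  | zero => simp
  | succ k ih =>
    have h2 : (m+1)^(k+1) * (m+1) ≤ (m^(k+1) + ((k:ℤ)+1)*(m+1)^k) * (m+1) :=
      mul_le_mul_of_nonneg_right ih (by linarith)
    have h3 : m^(k+1) ≤ (m+1)^(k+1) := pow_le_pow_left₀ hm (by linarith) _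
    have h4 : (0:ℤ) ≤ (m+1)^k := pow_nonneg (by linarith) k
    have e1 : (m+1)^(k+1+1) = (m+1)^(k+1) * (m+1) := by ring
    have e2 : m^(k+1+1) = m^(k+1) * m := by ring
    have e3 : (m+1)^(k+1) = (m+1)^k * (m+1) := by ring
    push_cast
    nlinarith [h2, h3, h4, hm, e1, e2, e3]

lemma aux_sum_lb (d : ℕ) (a : ℕ → ℤ) (f : ℕ → ℤ) (B : ℤ)
    (hf : ∀ i ∈ range d, 0 ≤ f i ∧ f i ≤ B) :
    -((∑ i ∈ range d, |a i|) * B) ≤ ∑ i ∈ range d, a i * f i := by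
  have : ∀ i ∈ range d, -(|a i| * B) ≤ a i * f i := by
    intro i hi
    obtain ⟨h0, hB⟩ := hf i hi
    have h1 : -|a i| ≤ a i := neg_abs_le _
    have h2 : |a i| * f i ≤ |a i| * B := mul_le_mul_of_nonneg_left hB (abs_nonneg _)
    nlinarith [abs_nonneg (a i)]
  calc -((∑ i ∈ range d, |a i|) * B) = ∑ i ∈ range d, -(|a i| * B) := by
        rw [Finset.sum_mul, ← Finset.sum_neg_distrib]
    _ ≤ _ := Finset.sum_le_sum this

lemma aux_step (d : ℕ) (hd : 2 ≤ d) (a : ℕ → ℤ) (ha : 0 < a d)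
    (m : ℤ) (hm : (∑ i ∈ range d, |a i|) * 2^d ≤ m) (hm1 : 1 ≤ m) :
    (∑ i ∈ range (d+1), a i * m ^ i) ≤ ∑ i ∈ range (d+1), a i * (m+1) ^ i := by
  obtain ⟨k, rfl⟩ : ∃ k, d = k + 2 := ⟨d - 2, by omega⟩
  set C := ∑ i ∈ range (k+2), |a i| with hC
  have hC0 : 0 ≤ C := Finset.sum_nonneg fun i _ => abs_nonneg _
  have hm0 : (0:ℤ) ≤ m := by linarith
  have eL := Finset.sum_range_succ (fun i => a i * m ^ i) (k+2)
  have eR := Finset.sum_range_succ (fun i => a i * (m+1) ^ i) (k+2)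
  rw [eL, eR]
  have hlead : m^(k+2) + ((k:ℤ)+2) * m^(k+1) ≤ (m+1)^(k+2) := by
    have := aux_pow_lb m hm0 (k+1)
    push_cast at this ⊢
    linarith
  have hlead2 : a (k+2) * m^(k+2) + ((k:ℤ)+2) * m^(k+1) ≤ a (k+2) * (m+1)^(k+2) := by
    have h1 : a (k+2) * (m^(k+2) + ((k:ℤ)+2)*m^(k+1)) ≤ a (k+2) * (m+1)^(k+2) :=
      mul_le_mul_of_nonneg_left hlead (le_of_lt ha)
    have hpos : (0:ℤ) ≤ ((k:ℤ)+2)*m^(k+1) := by positivity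
    have h1a : (1:ℤ) ≤ a (k+2) := ha
    nlinarith [h1, hpos, h1a]
  have hB : ∀ i ∈ range (k+2), 0 ≤ (m+1)^i - m^i ∧
      (m+1)^i - m^i ≤ ((k:ℤ)+2) * 2^(k+2) * m^k := by
    intro i hi
    simp only [Finset.mem_range] at hi
    constructor
    · have := pow_le_pow_left₀ hm0 (by linarith : m ≤ m+1) i; linarith
    · match i, hi with
      | 0, _ => simp; positivity
      | (j+1), hj =>
        have h1 : (m+1)^(j+1) - m^(j+1) ≤ ((j:ℤ)+1) * (m+1)^j := by
          have := aux_pow_ub m hm0 j; linarith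
        have h2 : (m+1)^j ≤ (m+1)^k := pow_le_pow_right₀ (by linarith) (by omega)
        have h3 : (m+1)^k ≤ 2^k * m^k := by
          calc (m+1)^k ≤ (2*m)^k := pow_le_pow_left₀ (by linarith) (by linarith) _
            _ = 2^k * m^k := mul_pow 2 m k
        have hj1 : ((j:ℤ)+1) ≤ (k:ℤ)+2 := by
          have : j + 1 ≤ k + 2 := by omega
          exact_mod_cast this
        have hp0 : (0:ℤ) ≤ (m+1)^j := by positivity
        have hq0 : (0:ℤ) ≤ m^k := by positivity
        have h5 : ((j:ℤ)+1) * (m+1)^j ≤ ((k:ℤ)+2) * (2^k * m^k) := by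
          have hj0 : (0:ℤ) ≤ (j:ℤ)+1 := by positivity
          exact mul_le_mul hj1 (le_trans h2 h3) hp0 (by positivity)
        have h6 : ((k:ℤ)+2) * (2^k * m^k) ≤ ((k:ℤ)+2) * 2^(k+2) * m^k := by
          have h4 : (2:ℤ)^k ≤ 2^(k+2) := pow_le_pow_right₀ one_le_two (by omega)
          have := mul_le_mul_of_nonneg_right h4 hq0
          have hk0 : (0:ℤ) ≤ (k:ℤ)+2 := by positivity
          have := mul_le_mul_of_nonneg_left this hk0
          linarith [this]
        linarith
  have hsum : -(C * (((k:ℤ)+2) * 2^(k+2) * m^k)) ≤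
      ∑ i ∈ range (k+2), a i * ((m+1)^i - m^i) := aux_sum_lb (k+2) a _ _ hB
  have hexp : ∑ i ∈ range (k+2), a i * ((m+1)^i - m^i)
      = (∑ i ∈ range (k+2), a i * (m+1)^i) - ∑ i ∈ range (k+2), a i * m^i := by
    rw [← Finset.sum_sub_distrib]; congr 1; ext i; ring
  have hfin : C * (((k:ℤ)+2) * 2^(k+2) * m^k) ≤ ((k:ℤ)+2) * m^(k+1) := by
    have hpos : (0:ℤ) ≤ ((k:ℤ)+2) * m^k := by positivity
    have := mul_le_mul_of_nonneg_right hm hpos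
    have e : m^(k+1) = m^k * m := by ring
    nlinarith [this, e]
  rw [hexp] at hsum
  linarith

lemma aux_growth (d : ℕ) (hd : 2 ≤ d) (a : ℕ → ℤ) (ha : 0 < a d)
    (n : ℤ) (hn : (∑ i ∈ range d, |a i|) + 2 ≤ n) (hn1 : 1 ≤ n) :
    2 * n ≤ ∑ i ∈ range (d+1), a i * n ^ i := by
  obtain ⟨k, rfl⟩ : ∃ k, d = k + 2 := ⟨d - 2, by omega⟩
  set C := ∑ i ∈ range (k+2), |a i| with hC
  have hC0 : 0 ≤ C := Finset.sum_nonneg fun i _ => abs_nonneg _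
  have hn0 : (0:ℤ) ≤ n := by linarith
  rw [Finset.sum_range_succ]
  have hB : ∀ i ∈ range (k+2), 0 ≤ n^i ∧ n^i ≤ n^(k+1) := by
    intro i hi
    simp only [Finset.mem_range] at hi
    exact ⟨by positivity, pow_le_pow_right₀ hn1 (by omega)⟩
  have hsum : -(C * n^(k+1)) ≤ ∑ i ∈ range (k+2), a i * n^i := aux_sum_lb (k+2) a _ _ hB
  have hlead2 : n^(k+1) * n ≤ a (k+2) * n^(k+2) := by
    have h1a : (1:ℤ) ≤ a (k+2) := ha
    have := mul_le_mul_of_nonneg_right h1a (pow_nonneg hn0 (k+2))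
    have e : n^(k+2) = n^(k+1) * n := by ring
    linarith [this, e.ge, e.le]
  have hnp : n ≤ n^(k+1) := by
    calc n = n^1 := (pow_one n).symm
      _ ≤ n^(k+1) := pow_le_pow_right₀ hn1 (by omega)
  have key : 2*n ≤ n^(k+1) * n - C * n^(k+1) := by nlinarith [hnp, hn1, hC0]
  linarith

theorem lower_bound_coloring_no_solution (d : ℕ) (hd : 2 ≤ d) (a : ℕ → ℤ) (ha : 0 < a d)
    (P : ℤ → ℤ) (hP : ∀ z, P z = ∑ i ∈ Finset.range (d + 1), a i * z ^ i) :
    ∃ n₀ : ℤ, ∀ n : ℤ, n₀ ≤ n → Even (P n) → Even (P (P n / 2)) →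
      ∀ φ : ℤ → ℤ,
        (∀ x ∈ Set.Icc n (P n / 2 - 1), φ x = 1) →
        (∀ x ∈ Set.Icc (P n / 2) (P (P n / 2) / 2 - 1), φ x = -1) →
        ¬ ∃ x y z : ℤ,
            x ∈ Set.Icc n (P (P n / 2) / 2 - 1) ∧
            y ∈ Set.Icc n (P (P n / 2) / 2 - 1) ∧
            z ∈ Set.Icc n (P (P n / 2) / 2 - 1) ∧
            x + y = P z ∧ φ x = φ y ∧ φ y = φ z := by
  set C : ℤ := ∑ i ∈ Finset.range d, |a i| with hC
  have hC0 : 0 ≤ C := Finset.sum_nonneg fun i _ => abs_nonneg _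
  have h2d : (1:ℤ) ≤ 2^d := one_le_pow₀ one_le_two
  set n₀ : ℤ := (C + 2) * 2^d with hn₀
  have hn₀1 : 1 ≤ n₀ := by nlinarith
  have hn₀C : C * 2^d ≤ n₀ := by nlinarith
  have hn₀C2 : C + 2 ≤ n₀ := by nlinarith
  refine ⟨n₀, ?_⟩
  intro n hn hev hev2 φ hred hblue
  rintro ⟨x, y, z, hx, hy, hz, hxy, hfxy, hfyz⟩
  simp only [Set.mem_Icc] at hx hy hz
  have mono : ∀ m : ℤ, n₀ ≤ m → ∀ m', m ≤ m' → P m ≤ P m' := by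
    intro m hm m' hm'
    obtain ⟨k, rfl⟩ := Int.le.dest hm'
    clear hm'
    induction k with
    | zero => simp
    | succ j ihj =>
      have hwC : C * 2^d ≤ m + (j:ℤ) := by
        have : (0:ℤ) ≤ (j:ℤ) := Int.ofNat_nonneg j
        linarith
      have hw1 : (1:ℤ) ≤ m + (j:ℤ) := by
        have : (0:ℤ) ≤ (j:ℤ) := Int.ofNat_nonneg j
        linarith
      have step : P (m + (j:ℤ)) ≤ P (m + (j:ℤ) + 1) := by
        rw [hP (m + (j:ℤ)), hP (m + (j:ℤ) + 1)]
        exact aux_step d hd a ha (m + (j:ℤ)) hwC hw1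
      have e : m + ((j:ℕ)+1 : ℕ) = m + (j:ℤ) + 1 := by push_cast; ring
      rw [e]
      linarith
  have hn1 : (1:ℤ) ≤ n := by linarith
  have hgrow : 2 * n ≤ P n := by
    rw [hP n]; exact aux_growth d hd a ha n (by linarith) hn1
  have h2 : 2 * (P n / 2) = P n := by obtain ⟨c, hc⟩ := hev; omega
  have h2' : 2 * (P (P n / 2) / 2) = P (P n / 2) := by obtain ⟨c, hc⟩ := hev2; omega
  have hnhalf : n ≤ P n / 2 := by omega
  rcases le_or_gt z (P n / 2 - 1) with hzr | hzb
  · -- z red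
    have hφz : φ z = 1 := hred z ⟨hz.1, hzr⟩
    have hφx : φ x = 1 := by rw [hfxy, hfyz, hφz]
    have hφy : φ y = 1 := by rw [hfyz, hφz]
    have hxr : x ≤ P n / 2 - 1 := by
      by_contra h
      push_neg at h
      have : φ x = -1 := hblue x ⟨by omega, hx.2⟩
      omega
    have hyr : y ≤ P n / 2 - 1 := by
      by_contra h
      push_neg at h
      have : φ y = -1 := hblue y ⟨by omega, hy.2⟩
      omega
    have hPz : P n ≤ P z := mono n hn z hz.1
    linarith
  · -- z blue
    have hPz : P (P n / 2) ≤ P z := mono (P n / 2) (by linarith) z (by omega)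
    linarith [hx.2, hy.2]
end

section
/- Let p(z) ∈ ℤ[z] be non-odd of degree d ≥ 2 with positive leading coefficient. Then there is a constant C > 0 such that for all sufficiently large n there exists a 2-coloring of [n] = {1, ..., n} under which the number of monochromatic solutions (x, y, z) ∈ [n]³ of x + y = p(z) is at most C·n^{2/d²}. -/
open Finset

private lemma pow_diff_bounds (z : ℤ) (hz : 1 ≤ z) :
    ∀ i : ℕ, (z+1)^(i+1) - z^(i+1) ≤ ((i:ℤ)+1) * (z+1)^i ∧
      ((i:ℤ)+1) * z^i ≤ (z+1)^(i+1) - z^(i+1) := by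
  intro i
  induction i with
  | zero => simp
  | succ i ih =>
    obtain ⟨h1, h2⟩ := ih
    have hz0 : (0:ℤ) ≤ z := by linarith
    have hzp : (0:ℤ) ≤ z + 1 := by linarith
    have hpow : z^(i+1) ≤ (z+1)^(i+1) := pow_le_pow_left₀ hz0 (by linarith) _
    have key : (z+1)^(i+2) - z^(i+2) = (z+1) * ((z+1)^(i+1) - z^(i+1)) + z^(i+1) := by ring
    have hi0 : (0:ℤ) ≤ (i:ℤ) + 1 := by positivity
    have hd0 : 0 ≤ (z+1)^(i+1) - z^(i+1) := by
      have := mul_nonneg hi0 (pow_nonneg hz0 i); linarith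
    constructor
    · have hmul : (z+1) * ((z+1)^(i+1) - z^(i+1)) ≤ (z+1) * (((i:ℤ)+1) * (z+1)^i) :=
        mul_le_mul_of_nonneg_left h1 hzp
      have : (z+1)^(i+2) - z^(i+2) ≤ ((i:ℤ)+1) * (z+1)^(i+1) + (z+1)^(i+1) := by
        rw [key]
        calc (z+1) * ((z+1)^(i+1) - z^(i+1)) + z^(i+1)
            ≤ (z+1) * (((i:ℤ)+1) * (z+1)^i) + (z+1)^(i+1) := by linarith
          _ = ((i:ℤ)+1) * (z+1)^(i+1) + (z+1)^(i+1) := by ring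
      calc (z+1)^(i+2) - z^(i+2) ≤ ((i:ℤ)+1) * (z+1)^(i+1) + (z+1)^(i+1) := this
        _ = ((i:ℕ)+1+1 : ℤ) * (z+1)^(i+1) := by push_cast; ring
    · have hmul : z * (((i:ℤ)+1) * z^i) ≤ z * ((z+1)^(i+1) - z^(i+1)) :=
        mul_le_mul_of_nonneg_left h2 hz0
      have hzz : z * ((z+1)^(i+1) - z^(i+1)) ≤ (z+1) * ((z+1)^(i+1) - z^(i+1)) := by nlinarith
      calc ((i:ℕ)+1+1 : ℤ) * z^(i+1) = z * (((i:ℤ)+1) * z^i) + z^(i+1) := by push_cast; ring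
        _ ≤ (z+1) * ((z+1)^(i+1) - z^(i+1)) + z^(i+1) := by linarith
        _ = (z+1)^(i+2) - z^(i+2) := by rw [key]

private lemma nat_succ_pow_le (s k : ℕ) : (s+1)^k ≤ 2^k * (s^k+1) := by
  rcases Nat.eq_zero_or_pos s with h | h
  · subst h
    have := Nat.one_le_two_pow (n := k)
    simp only [zero_add, one_pow]
    exact le_trans this (Nat.le_mul_of_pos_right _ (by positivity))
  · calc (s+1)^k ≤ (2*s)^k := Nat.pow_le_pow_left (by omega) k
      _ = 2^k * s^k := by rw [mul_pow]
      _ ≤ 2^k * (s^k+1) := Nat.mul_le_mul_left _ (by omega)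

set_option maxHeartbeats 2000000 in
theorem few_monochromatic_solutions (d : ℕ) (hd : 2 ≤ d) (a : ℕ → ℤ) (ha : 0 < a d)
    (P : ℤ → ℤ) (hP : ∀ z, P z = ∑ i ∈ Finset.range (d + 1), a i * z ^ i)
    (hnonodd : ∃ z : ℕ, Even (P z)) :
    ∃ C : ℝ, 0 < C ∧ ∃ n₀ : ℕ, ∀ n : ℕ, n₀ ≤ n →
      ∃ φ : ℕ → Bool,
        (((Finset.Icc 1 n ×ˢ Finset.Icc 1 n ×ˢ Finset.Icc 1 n).filter
            (fun v => (v.1 : ℤ) + v.2.1 = P v.2.2 ∧ φ v.1 = φ v.2.1 ∧ φ v.2.1 = φ v.2.2)).card : ℝ)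
          ≤ C * (n : ℝ) ^ ((2 : ℝ) / ((d : ℝ) ^ 2)) := by
  classical
  obtain ⟨e, rfl⟩ : ∃ e, d = e + 2 := ⟨d - 2, by omega⟩
  set d := e + 2 with hdef
  clear_value d
  -- sum of absolute values of coefficients
  set A : ℕ := ∑ i ∈ Finset.range (d+1), (a i).natAbs with hA
  have hAcast : (A : ℤ) = ∑ i ∈ Finset.range (d+1), |a i| := by
    rw [hA, Nat.cast_sum]
    exact Finset.sum_congr rfl (fun i _ => (Int.abs_eq_natAbs _).symm)
  -- upper bound on P
  have hPub : ∀ z : ℤ, 1 ≤ z → P z ≤ (A:ℤ) * z^d := by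
    intro z hz
    have hz0 : (0:ℤ) ≤ z := by linarith
    rw [hP]
    calc ∑ i ∈ Finset.range (d+1), a i * z^i
        ≤ ∑ i ∈ Finset.range (d+1), |a i| * z^d := by
          apply Finset.sum_le_sum
          intro i hi
          have hi' : i ≤ d := by simpa [Nat.lt_succ_iff] using Finset.mem_range.mp hi
          calc a i * z^i ≤ |a i| * z^i :=
                mul_le_mul_of_nonneg_right (le_abs_self _) (pow_nonneg hz0 _)
            _ ≤ |a i| * z^d :=
                mul_le_mul_of_nonneg_left (pow_le_pow_right₀ hz hi') (abs_nonneg _)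
      _ = (A:ℤ) * z^d := by rw [← Finset.sum_mul, hAcast]
  -- lower bound on P
  have hPlb : ∀ z : ℤ, 1 ≤ z → z^(e+1) * (z - A) ≤ P z := by
    intro z hz
    have hz0 : (0:ℤ) ≤ z := by linarith
    have had : (1:ℤ) ≤ a (e+2) := by rw [← hdef]; exact ha
    rw [hP, hdef, Finset.sum_range_succ]
    have h1 : z^(e+2) ≤ a (e+2) * z^(e+2) := le_mul_of_one_le_left (pow_nonneg hz0 _) had
    have h2 : -((A:ℤ) * z^(e+1)) ≤ ∑ i ∈ Finset.range (e+2), a i * z^i := by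
      have hs : ∑ i ∈ Finset.range (e+2), -(|a i| * z^(e+1)) ≤ ∑ i ∈ Finset.range (e+2), a i * z^i := by
        apply Finset.sum_le_sum
        intro i hi
        have hi' : i ≤ e + 1 := by
          have := Finset.mem_range.mp hi
          omega
        have hzi : z^i ≤ z^(e+1) := pow_le_pow_right₀ hz hi'
        have := neg_abs_le (a i)
        nlinarith [pow_nonneg hz0 i, pow_nonneg hz0 (e+1), abs_nonneg (a i)]
      rw [Finset.sum_neg_distrib, ← Finset.sum_mul] at hs
      have hsub : (∑ i ∈ Finset.range (e+2), |a i|) ≤ (A:ℤ) := by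
        rw [hAcast]
        apply Finset.sum_le_sum_of_subset_of_nonneg
        · exact Finset.range_subset_range.mpr (by omega)
        · intro i _ _
          exact abs_nonneg _
      have hmul : (∑ i ∈ Finset.range (e+2), |a i|) * z^(e+1) ≤ (A:ℤ) * z^(e+1) :=
        mul_le_mul_of_nonneg_right hsub (pow_nonneg hz0 _)
      linarith
    have hzd : z^(e+2) = z^(e+1) * z := pow_succ z (e+1)
    have expand : z^(e+1) * (z - (A:ℤ)) = z^(e+1) * z - (A:ℤ) * z^(e+1) := by ring
    linarith
  have hsubA : (∑ i ∈ Finset.range (e+2), |a i|) ≤ (A:ℤ) := by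
    rw [hAcast]
    apply Finset.sum_le_sum_of_subset_of_nonneg
    · exact Finset.range_subset_range.mpr (by omega)
    · intro i _ _
      exact abs_nonneg _
  -- threshold M₀ and monotonicity of P above it
  set M₀ : ℕ := 2^d * A + A + 2 with hM₀
  have h2eA : 2^e * A ≤ 2^d * A :=
    Nat.mul_le_mul_right A (Nat.pow_le_pow_right (by norm_num) (by omega))
  have hM₀A : A + 2 ≤ M₀ ∧ 2^e * A + 1 ≤ M₀ ∧ 2 ≤ M₀ := by omega
  have hstep : ∀ z : ℤ, (M₀:ℤ) ≤ z → P z ≤ P (z+1) := by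
    intro z hzM
    have hz1 : (1:ℤ) ≤ z := by
      have : (2:ℤ) ≤ (M₀:ℤ) := by exact_mod_cast hM₀A.2.2
      linarith
    have hz0 : (0:ℤ) ≤ z := by linarith
    have hz10 : (0:ℤ) ≤ z + 1 := by linarith
    have had : (1:ℤ) ≤ a (e+2) := by rw [← hdef]; exact ha
    rw [hP z, hP (z+1), hdef,
      Finset.sum_range_succ (fun i => a i * z^i) (e+2),
      Finset.sum_range_succ (fun i => a i * (z+1)^i) (e+2)]
    have hpart : ∀ i ∈ Finset.range (e+2),
        a i * z^i - |a i| * (((e:ℤ)+1) * (z+1)^e) ≤ a i * (z+1)^i := by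
      intro i hi
      have hΔub : (z+1)^i - z^i ≤ ((e:ℤ)+1) * (z+1)^e := by
        match i with
        | 0 => simp; positivity
        | (j+1) =>
          have h := (pow_diff_bounds z hz1 j).1
          have hj : j ≤ e := by
            have := Finset.mem_range.mp hi
            omega
          have hze : (z+1)^j ≤ (z+1)^e := pow_le_pow_right₀ (by linarith) hj
          have hje : ((j:ℤ)+1) ≤ (e:ℤ)+1 := by exact_mod_cast Nat.succ_le_succ hj
          nlinarith [pow_nonneg hz10 j, pow_nonneg hz10 e]
      have hΔ0 : 0 ≤ (z+1)^i - z^i := sub_nonneg.mpr (pow_le_pow_left₀ hz0 (by linarith) i)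
      nlinarith [neg_abs_le (a i), abs_nonneg (a i)]
    have hsum := Finset.sum_le_sum hpart
    rw [Finset.sum_sub_distrib, ← Finset.sum_mul] at hsum
    have hB0 : (0:ℤ) ≤ ((e:ℤ)+1) * (z+1)^e := by positivity
    have hsum2 : (∑ i ∈ Finset.range (e+2), a i * z^i) - (A:ℤ) * (((e:ℤ)+1) * (z+1)^e)
        ≤ ∑ i ∈ Finset.range (e+2), a i * (z+1)^i := by
      have := mul_le_mul_of_nonneg_right hsubA hB0
      linarith
    have htop : a (e+2) * z^(e+2) + ((e:ℤ)+2) * z^(e+1) ≤ a (e+2) * (z+1)^(e+2) := by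
      have hlow := (pow_diff_bounds z hz1 (e+1)).2
      push_cast at hlow
      have hΔ0 : 0 ≤ (z+1)^(e+2) - z^(e+2) := by
        nlinarith [pow_nonneg hz0 (e+1)]
      nlinarith [mul_le_mul_of_nonneg_right (sub_nonneg.mpr had) hΔ0]
    have hcomp : (A:ℤ) * (((e:ℤ)+1) * (z+1)^e) ≤ ((e:ℤ)+2) * z^(e+1) := by
      have h2z : (z+1)^e ≤ 2^e * z^e := by
        calc (z+1)^e ≤ (2*z)^e := pow_le_pow_left₀ hz10 (by linarith) e
          _ = 2^e * z^e := by rw [mul_pow]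
      have hzA : (A:ℤ) * 2^e ≤ z := by
        have h1 : ((2^e * A : ℕ):ℤ) ≤ (M₀:ℤ) := by exact_mod_cast (by omega : 2^e * A ≤ M₀)
        have h2 : ((2^e * A : ℕ):ℤ) = (A:ℤ) * 2^e := by push_cast; ring
        linarith
      have hzen : (0:ℤ) ≤ z^e := pow_nonneg hz0 e
      have hps : z^(e+1) = z^e * z := pow_succ z e
      have t1 : (A:ℤ) * (((e:ℤ)+1) * (z+1)^e) ≤ (A:ℤ) * (((e:ℤ)+1) * (2^e * z^e)) := by
        apply mul_le_mul_of_nonneg_left _ (by positivity)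
        exact mul_le_mul_of_nonneg_left h2z (by positivity)
      have t2 : ((e:ℤ)+1) * (((A:ℤ)*2^e) * z^e) ≤ ((e:ℤ)+1) * (z * z^e) :=
        mul_le_mul_of_nonneg_left (mul_le_mul_of_nonneg_right hzA hzen) (by positivity)
      have t3 : ((e:ℤ)+1) * (z * z^e) ≤ ((e:ℤ)+2) * z^(e+1) := by
        rw [hps]
        have h0 : (0:ℤ) ≤ z^e * z := mul_nonneg hzen hz0
        linarith
      calc (A:ℤ) * (((e:ℤ)+1) * (z+1)^e) ≤ (A:ℤ) * (((e:ℤ)+1) * (2^e * z^e)) := t1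
        _ = ((e:ℤ)+1) * (((A:ℤ)*2^e) * z^e) := by ring
        _ ≤ ((e:ℤ)+1) * (z * z^e) := t2
        _ ≤ ((e:ℤ)+2) * z^(e+1) := t3
    linarith
  have hmono : ∀ u v : ℤ, (M₀:ℤ) ≤ u → u ≤ v → P u ≤ P v := by
    intro u v hu huv
    refine Int.le_induction (motive := fun v _ => P u ≤ P v) (le_refl (P u)) (fun w hw ih => ?_) v huv
    exact le_trans ih (hstep w (le_trans hu hw))
  -- constants
  set c₀ : ℕ := A * M₀^d + 1 with hc₀
  set C₁ : ℕ := 2*A + 2 + M₀^d with hC₁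
  set K₂ : ℕ := (C₁+2)^d * 2^d * (M₀^d + 3) with hK₂
  set K : ℕ := (A+1)^(d*d) * 2^(d*d) * (K₂ + 1) with hK
  have hK1 : 1 ≤ K := by
    have : 0 < K := by rw [hK]; positivity
    omega
  set n₀ : ℕ := A * c₀^d + M₀^(d*d) + 1 with hn₀
  clear_value A M₀ c₀ C₁ K₂ K n₀
  refine ⟨2*(K:ℝ), ?_, n₀, ?_⟩
  · have : (1:ℝ) ≤ (K:ℝ) := by exact_mod_cast hK1
    linarith
  intro n hn
  have hn1 : 1 ≤ n := le_trans (by rw [hn₀]; omega) hn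
  -- definition of the threshold aa
  have haex : ∃ k : ℕ, M₀ ≤ k ∧ (2*(n:ℤ)) < P k := by
    refine ⟨M₀ + 2*n, by omega, ?_⟩
    have hM2 : 2 ≤ M₀ := hM₀A.2.2
    have hAM : A + 2 ≤ M₀ := hM₀A.1
    have hk1 : (1:ℤ) ≤ ((M₀ + 2*n : ℕ):ℤ) := by
      push_cast
      omega
    have hlb := hPlb ((M₀ + 2*n : ℕ):ℤ) hk1
    have hp1 : (1:ℤ) ≤ ((M₀ + 2*n:ℕ):ℤ)^(e+1) := one_le_pow₀ hk1
    have hsub : (2*(n:ℤ) + 2 : ℤ) ≤ ((M₀ + 2*n:ℕ):ℤ) - A := by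
      push_cast
      omega
    nlinarith
  set aa : ℕ := Nat.find haex with haadef
  obtain ⟨haaM, haaP⟩ := Nat.find_spec haex
  have haamin : ∀ m, m < aa → ¬(M₀ ≤ m ∧ (2*(n:ℤ)) < P m) := fun m hm => Nat.find_min haex hm
  have haa1 : 1 ≤ aa := le_trans (by omega) haaM
  have hA0 : (0:ℤ) ≤ (A:ℤ) := by positivity
  -- aa is at least c₀
  have hac : c₀ ≤ aa := by
    by_contra hlt
    push_neg at hlt
    have h1 := hPub (aa:ℤ) (by exact_mod_cast haa1)
    have h2 : ((aa:ℤ))^d ≤ ((c₀:ℤ))^d :=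
      pow_le_pow_left₀ (by positivity) (by exact_mod_cast le_of_lt hlt) d
    have h3 : (A:ℤ) * (aa:ℤ)^d ≤ (A:ℤ)*((c₀:ℤ))^d := mul_le_mul_of_nonneg_left h2 hA0
    have h4 : (A:ℤ)*((c₀:ℤ))^d = ((A*c₀^d : ℕ):ℤ) := by push_cast; ring
    have h5 : (A*c₀^d:ℕ) + 1 ≤ n := le_trans (by rw [hn₀]; omega) hn
    have h6 : ((A*c₀^d:ℕ):ℤ) < 2*(n:ℤ) := by
      have : ((A*c₀^d:ℕ):ℤ) + 1 ≤ (n:ℤ) := by exact_mod_cast h5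
      linarith
    linarith
  -- above aa the polynomial exceeds 2n
  have hza : ∀ z : ℕ, aa ≤ z → (2*(n:ℤ)) < P z := by
    intro z hz
    have := hmono (aa:ℤ) (z:ℤ) (by exact_mod_cast haaM) (by exact_mod_cast hz)
    linarith
  -- definition of the threshold b
  have hbex : ∃ k : ℕ, M₀ ≤ k ∧ (2*(aa:ℤ)) - 2 < P k := by
    refine ⟨M₀ + 2*aa, by omega, ?_⟩
    have hM2 : 2 ≤ M₀ := hM₀A.2.2
    have hAM : A + 2 ≤ M₀ := hM₀A.1
    have hk1 : (1:ℤ) ≤ ((M₀ + 2*aa : ℕ):ℤ) := by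
      push_cast
      omega
    have hlb := hPlb ((M₀ + 2*aa : ℕ):ℤ) hk1
    have hp1 : (1:ℤ) ≤ ((M₀ + 2*aa:ℕ):ℤ)^(e+1) := one_le_pow₀ hk1
    have hsub : (2*(aa:ℤ) + 2 : ℤ) ≤ ((M₀ + 2*aa:ℕ):ℤ) - A := by
      push_cast
      omega
    nlinarith
  set b : ℕ := Nat.find hbex with hbdef
  obtain ⟨hbM, hbP⟩ := Nat.find_spec hbex
  have hbmin : ∀ m, m < b → ¬(M₀ ≤ m ∧ (2*(aa:ℤ))-2 < P m) := fun m hm => Nat.find_min hbex hm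
  -- above b the polynomial exceeds 2aa - 2
  have hzb : ∀ z : ℕ, b ≤ z → (2*(aa:ℤ))-2 < P z := by
    intro z hz
    have := hmono (b:ℤ) (z:ℤ) (by exact_mod_cast hbM) (by exact_mod_cast hz)
    linarith
  -- below b the polynomial is at most 2aa - 2
  have hzsmall : ∀ z : ℕ, 1 ≤ z → z < b → P z ≤ (2*(aa:ℤ)) - 2 := by
    intro z h1z hzb'
    by_cases hM : M₀ ≤ z
    · have h := hbmin z hzb'
      push_neg at h
      exact h hM
    · push_neg at hM
      have h1 := hPub (z:ℤ) (by exact_mod_cast h1z)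
      have h2 : ((z:ℤ))^d ≤ ((M₀:ℤ))^d :=
        pow_le_pow_left₀ (by positivity) (by exact_mod_cast le_of_lt hM) d
      have h3 : (A:ℤ) * (z:ℤ)^d ≤ (A:ℤ)*((M₀:ℤ))^d := mul_le_mul_of_nonneg_left h2 hA0
      have h4 : (A:ℤ)*((M₀:ℤ))^d + 1 = ((A*M₀^d + 1 : ℕ):ℤ) := by push_cast; ring
      have h5 : ((A*M₀^d + 1:ℕ):ℤ) ≤ (aa:ℤ) := by
        have : (A*M₀^d + 1:ℕ) ≤ aa := le_trans (by rw [hc₀]) hac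
        exact_mod_cast this
      have h6 : (1:ℤ) ≤ ((A*M₀^d + 1:ℕ):ℤ) := by exact_mod_cast Nat.le_add_left 1 (A*M₀^d)
      linarith
  -- the key structural lemma about monochromatic solutions
  have hkey : ∀ x y z : ℕ, 1 ≤ x → x ≤ n → 1 ≤ y → y ≤ n → 1 ≤ z → z ≤ n →
      (x:ℤ) + y = P z → ((x < b ∨ aa ≤ x) ↔ (y < b ∨ aa ≤ y)) →
      ((y < b ∨ aa ≤ y) ↔ (z < b ∨ aa ≤ z)) → z < b ∧ (x < b ∨ y < b) := by
    intro x y z hx1 hxn hy1 hyn hz1 hzn heq hxy hyz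
    by_cases hzc : z < b ∨ aa ≤ z
    · rcases hzc with hzb' | hza'
      · refine ⟨hzb', ?_⟩
        have hPz := hzsmall z hz1 hzb'
        have hxy2 : (x:ℤ) + y ≤ 2*(aa:ℤ) - 2 := by rw [heq]; exact hPz
        have hxa : x < aa ∨ y < aa := by omega
        rcases hxa with h | h
        · have hx' : x < b ∨ aa ≤ x := (hxy.trans hyz).mpr (Or.inl hzb')
          rcases hx' with h' | h'
          · exact Or.inl h'
          · omega
        · have hy' : y < b ∨ aa ≤ y := hyz.mpr (Or.inl hzb')
          rcases hy' with h' | h'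
          · exact Or.inr h'
          · omega
      · exfalso
        have := hza z hza'
        rw [← heq] at this
        omega
    · exfalso
      push_neg at hzc
      have hzc' : ¬(z < b ∨ aa ≤ z) := not_or.mpr ⟨not_lt.mpr hzc.1, not_le.mpr hzc.2⟩
      have hxc : ¬(x < b ∨ aa ≤ x) := fun h => hzc' ((hxy.trans hyz).mp h)
      have hyc : ¬(y < b ∨ aa ≤ y) := fun h => hzc' (hyz.mp h)
      push_neg at hxc hyc
      have h := hzb z hzc.1
      rw [← heq] at h
      omega
  -- size bound on aa
  set ss : ℕ := aa - (A+1) with hssdef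
  have haaA : aa = A + 1 + ss := by
    have h1 : A + 2 ≤ M₀ := hM₀A.1
    omega
  have hss : ss^d ≤ 2*n + M₀^d := by
    rcases Nat.lt_or_ge M₀ aa with hlt | hge
    · have h1 := haamin (aa-1) (by omega)
      push_neg at h1
      have h2 : P ((aa-1 : ℕ):ℤ) ≤ 2*(n:ℤ) := h1 (by omega)
      have h3 := hPlb ((aa-1:ℕ):ℤ) (by exact_mod_cast (by omega : 1 ≤ aa - 1))
      have hAM : A + 2 ≤ M₀ := hM₀A.1
      have hssle : (ss:ℤ) ≤ ((aa-1:ℕ):ℤ) := by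
        have : ss ≤ aa - 1 := by omega
        exact_mod_cast this
      have hsA : (ss:ℤ) = ((aa-1:ℕ):ℤ) - A := by omega
      have hss0 : (0:ℤ) ≤ (ss:ℤ) := by positivity
      have key : ((ss:ℤ))^d ≤ 2*(n:ℤ) := by
        have e1 : ((ss:ℤ))^d = (ss:ℤ)^(e+1) * (ss:ℤ) := by rw [hdef, pow_succ]
        have e2 : (ss:ℤ)^(e+1) ≤ ((aa-1:ℕ):ℤ)^(e+1) := pow_le_pow_left₀ hss0 hssle _
        have e4 : (ss:ℤ)^(e+1) * (ss:ℤ) ≤ ((aa-1:ℕ):ℤ)^(e+1) * (ss:ℤ) :=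
          mul_le_mul_of_nonneg_right e2 hss0
        have e5 : ((aa-1:ℕ):ℤ)^(e+1) * (ss:ℤ)
            = ((aa-1:ℕ):ℤ)^(e+1) * (((aa-1:ℕ):ℤ) - (A:ℤ)) := by rw [hsA]
        linarith
      have : ss^d ≤ 2*n := by exact_mod_cast key
      exact le_trans this (Nat.le_add_right _ _)
    · have h1 : ss ≤ M₀ := by omega
      exact le_trans (Nat.pow_le_pow_left h1 d) (Nat.le_add_left _ _)
  -- size bound on b
  set t : ℕ := b - (A+1) with htdef
  have hbA : b = A + 1 + t := by
    have h1 : A + 2 ≤ M₀ := hM₀A.1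
    omega
  have ht : t^d ≤ 2*aa + M₀^d := by
    rcases Nat.lt_or_ge M₀ b with hlt | hge
    · have h1 := hbmin (b-1) (by omega)
      push_neg at h1
      have h2 : P ((b-1 : ℕ):ℤ) ≤ 2*(aa:ℤ) - 2 := h1 (by omega)
      have h3 := hPlb ((b-1:ℕ):ℤ) (by exact_mod_cast (by omega : 1 ≤ b - 1))
      have hAM : A + 2 ≤ M₀ := hM₀A.1
      have htle : (t:ℤ) ≤ ((b-1:ℕ):ℤ) := by
        have : t ≤ b - 1 := by omega
        exact_mod_cast this
      have htA : (t:ℤ) = ((b-1:ℕ):ℤ) - A := by omega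
      have ht0 : (0:ℤ) ≤ (t:ℤ) := by positivity
      have key : ((t:ℤ))^d ≤ 2*(aa:ℤ) := by
        have e1 : ((t:ℤ))^d = (t:ℤ)^(e+1) * (t:ℤ) := by rw [hdef, pow_succ]
        have e2 : (t:ℤ)^(e+1) ≤ ((b-1:ℕ):ℤ)^(e+1) := pow_le_pow_left₀ ht0 htle _
        have e4 : (t:ℤ)^(e+1) * (t:ℤ) ≤ ((b-1:ℕ):ℤ)^(e+1) * (t:ℤ) :=
          mul_le_mul_of_nonneg_right e2 ht0
        have e5 : ((b-1:ℕ):ℤ)^(e+1) * (t:ℤ)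
            = ((b-1:ℕ):ℤ)^(e+1) * (((b-1:ℕ):ℤ) - (A:ℤ)) := by rw [htA]
        linarith
      have : t^d ≤ 2*aa := by exact_mod_cast key
      exact le_trans this (Nat.le_add_right _ _)
    · have h1 : t ≤ M₀ := by omega
      exact le_trans (Nat.pow_le_pow_left h1 d) (Nat.le_add_left _ _)
  -- combine to polynomial bound on b
  have hchain : t^d ≤ C₁ + 2*ss := by
    rw [hC₁]
    have := ht
    rw [haaA] at this
    linarith
  have h2 : t^(d*d) ≤ (C₁+2)^d * (2^d * (ss^d + 1)) := by
    have e1 : t^(d*d) = (t^d)^d := by rw [pow_mul]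
    have e2 : (t^d)^d ≤ (C₁ + 2*ss)^d := Nat.pow_le_pow_left hchain d
    have e3 : C₁ + 2*ss ≤ (C₁+2) * (ss+1) := by
      have : (C₁+2)*(ss+1) = C₁*ss + C₁ + 2*ss + 2 := by ring
      linarith [Nat.zero_le (C₁*ss)]
    have e4 : (C₁ + 2*ss)^d ≤ ((C₁+2)*(ss+1))^d := Nat.pow_le_pow_left e3 d
    have e5 : ((C₁+2)*(ss+1))^d = (C₁+2)^d * (ss+1)^d := mul_pow _ _ _
    have e6 : (ss+1)^d ≤ 2^d * (ss^d+1) := nat_succ_pow_le ss d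
    calc t^(d*d) = (t^d)^d := e1
      _ ≤ (C₁ + 2*ss)^d := e2
      _ ≤ ((C₁+2)*(ss+1))^d := e4
      _ = (C₁+2)^d * (ss+1)^d := e5
      _ ≤ (C₁+2)^d * (2^d * (ss^d+1)) := Nat.mul_le_mul_left _ e6
  have h3 : t^(d*d) ≤ K₂ * n := by
    rw [hK₂]
    have e7 : ss^d + 1 ≤ (M₀^d + 3) * n := by
      have h8 : (M₀^d+3)*n = M₀^d*n + 3*n := by ring
      have h9 : M₀^d ≤ M₀^d * n := Nat.le_mul_of_pos_right _ (by omega)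
      linarith [hss]
    calc t^(d*d) ≤ (C₁+2)^d * (2^d * (ss^d+1)) := h2
      _ = (C₁+2)^d * 2^d * (ss^d+1) := by ring
      _ ≤ (C₁+2)^d * 2^d * ((M₀^d+3)*n) := Nat.mul_le_mul_left _ e7
      _ = (C₁+2)^d * 2^d * (M₀^d+3) * n := by ring
  have hbK : b^(d*d) ≤ K * n := by
    rw [hK]
    have e1 : b ≤ (A+1) * (t+1) := by
      have : (A+1)*(t+1) = A*t + A + t + 1 := by ring
      linarith [Nat.zero_le (A*t), hbA.le]
    have e2 : b^(d*d) ≤ ((A+1)*(t+1))^(d*d) := Nat.pow_le_pow_left e1 _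
    have e4 : (t+1)^(d*d) ≤ 2^(d*d) * (t^(d*d) + 1) := nat_succ_pow_le t (d*d)
    have e5 : t^(d*d) + 1 ≤ (K₂+1)*n := by
      have : (K₂+1)*n = K₂*n + n := by ring
      linarith [h3, hn1]
    calc b^(d*d) ≤ ((A+1)*(t+1))^(d*d) := e2
      _ = (A+1)^(d*d) * (t+1)^(d*d) := mul_pow _ _ _
      _ ≤ (A+1)^(d*d) * (2^(d*d) * (t^(d*d)+1)) := Nat.mul_le_mul_left _ e4
      _ ≤ (A+1)^(d*d) * (2^(d*d) * ((K₂+1)*n)) :=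
          Nat.mul_le_mul_left _ (Nat.mul_le_mul_left _ e5)
      _ = (A+1)^(d*d) * 2^(d*d) * (K₂+1) * n := by ring
  -- the coloring
  refine ⟨fun x => decide (x < b ∨ aa ≤ x), ?_⟩
  have hcount : ((Finset.Icc 1 n ×ˢ Finset.Icc 1 n ×ˢ Finset.Icc 1 n).filter
      (fun v : ℕ×ℕ×ℕ => (v.1 : ℤ) + v.2.1 = P v.2.2 ∧
        decide (v.1 < b ∨ aa ≤ v.1) = decide (v.2.1 < b ∨ aa ≤ v.2.1) ∧
        decide (v.2.1 < b ∨ aa ≤ v.2.1) = decide (v.2.2 < b ∨ aa ≤ v.2.2))).card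
      ≤ 2*(b*b) := by
    set T := (Finset.Icc 1 n ×ˢ Finset.Icc 1 n ×ˢ Finset.Icc 1 n).filter
      (fun v : ℕ×ℕ×ℕ => (v.1 : ℤ) + v.2.1 = P v.2.2 ∧
        decide (v.1 < b ∨ aa ≤ v.1) = decide (v.2.1 < b ∨ aa ≤ v.2.1) ∧
        decide (v.2.1 < b ∨ aa ≤ v.2.1) = decide (v.2.2 < b ∨ aa ≤ v.2.2)) with hT
    have hmem : ∀ v : ℕ×ℕ×ℕ, v ∈ T →
        ((v.1:ℤ) + v.2.1 = P v.2.2) ∧ (v.2.2 < b ∧ (v.1 < b ∨ v.2.1 < b)) := by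
      intro v hv
      rw [hT] at hv
      simp only [Finset.mem_filter, Finset.mem_product, Finset.mem_Icc] at hv
      obtain ⟨⟨⟨hx1,hxn⟩,⟨hy1,hyn⟩,hz1,hzn⟩, heq, hd1, hd2⟩ := hv
      rw [decide_eq_decide] at hd1 hd2
      exact ⟨heq, hkey v.1 v.2.1 v.2.2 hx1 hxn hy1 hyn hz1 hzn heq hd1 hd2⟩
    rw [← Finset.card_filter_add_card_filter_not (p := fun v : ℕ×ℕ×ℕ => v.1 < b) (s := T)]
    have hc1 : (T.filter (fun v : ℕ×ℕ×ℕ => v.1 < b)).card ≤ b*b := by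
      have hle : (T.filter (fun v : ℕ×ℕ×ℕ => v.1 < b)).card
          ≤ (Finset.range b ×ˢ Finset.range b).card := by
        apply Finset.card_le_card_of_injOn (fun v => (v.1, v.2.2))
        · intro v hv
          rw [Finset.mem_coe, Finset.mem_filter] at hv
          have h := hmem v hv.1
          simp only [Finset.mem_coe, Finset.mem_product, Finset.mem_range]
          exact ⟨hv.2, h.2.1⟩
        · rintro ⟨x1,y1,z1⟩ hv ⟨x2,y2,z2⟩ hw hvw
          simp only [Prod.mk.injEq] at hvw
          obtain ⟨hx, hz⟩ := hvw
          have e1 := (hmem _ (Finset.mem_filter.mp hv).1).1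
          have e2 := (hmem _ (Finset.mem_filter.mp hw).1).1
          simp only at e1 e2
          subst hx; subst hz
          have : (y1:ℤ) = y2 := by linarith
          have : y1 = y2 := by exact_mod_cast this
          simp [this]
      simpa using hle
    have hc2 : (T.filter (fun v : ℕ×ℕ×ℕ => ¬ v.1 < b)).card ≤ b*b := by
      have hle : (T.filter (fun v : ℕ×ℕ×ℕ => ¬ v.1 < b)).card
          ≤ (Finset.range b ×ˢ Finset.range b).card := by
        apply Finset.card_le_card_of_injOn (fun v => (v.2.1, v.2.2))
        · intro v hv
          rw [Finset.mem_coe, Finset.mem_filter] at hv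
          have h := hmem v hv.1
          simp only [Finset.mem_coe, Finset.mem_product, Finset.mem_range]
          refine ⟨?_, h.2.1⟩
          rcases h.2.2 with h' | h'
          · exact absurd h' hv.2
          · exact h'
        · rintro ⟨x1,y1,z1⟩ hv ⟨x2,y2,z2⟩ hw hvw
          simp only [Prod.mk.injEq] at hvw
          obtain ⟨hy, hz⟩ := hvw
          have e1 := (hmem _ (Finset.mem_filter.mp hv).1).1
          have e2 := (hmem _ (Finset.mem_filter.mp hw).1).1
          simp only at e1 e2
          subst hy; subst hz
          have : (x1:ℤ) = x2 := by linarith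
          have : x1 = x2 := by exact_mod_cast this
          simp [this]
      simpa using hle
    omega
  -- real arithmetic
  have hcount' : (((Finset.Icc 1 n ×ˢ Finset.Icc 1 n ×ˢ Finset.Icc 1 n).filter
      (fun v : ℕ×ℕ×ℕ => (v.1 : ℤ) + v.2.1 = P v.2.2 ∧
        decide (v.1 < b ∨ aa ≤ v.1) = decide (v.2.1 < b ∨ aa ≤ v.2.1) ∧
        decide (v.2.1 < b ∨ aa ≤ v.2.1) = decide (v.2.2 < b ∨ aa ≤ v.2.2))).card : ℝ)
      ≤ ((2*(b*b) : ℕ) : ℝ) := by exact_mod_cast hcount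
  refine le_trans hcount' ?_
  have hdR : (2:ℝ) ≤ (d:ℝ) := by exact_mod_cast hd
  have hd2 : (0:ℝ) < (d:ℝ)^2 := by nlinarith
  have hexp0 : (0:ℝ) ≤ 2/((d:ℝ)^2) := by positivity
  have hbKR : ((b:ℝ))^((d*d:ℕ)) ≤ (K:ℝ)*(n:ℝ) := by exact_mod_cast hbK
  have hbR0 : (0:ℝ) ≤ (b:ℝ) := Nat.cast_nonneg b
  have hmulexp : ((d*d:ℕ):ℝ) * ((2:ℝ)/((d:ℝ)^2)) = 2 := by
    have hdne : (d:ℝ) ≠ 0 := by nlinarith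
    push_cast
    field_simp
  have key : ((b:ℝ))^(2:ℕ) ≤ ((K:ℝ)*(n:ℝ))^((2:ℝ)/((d:ℝ)^2)) := by
    have e1 : ((b:ℝ))^(2:ℕ) = (((b:ℝ))^((d*d:ℕ)))^((2:ℝ)/((d:ℝ)^2)) := by
      calc ((b:ℝ))^(2:ℕ) = (b:ℝ)^((2:ℕ):ℝ) := (Real.rpow_natCast _ 2).symm
        _ = (b:ℝ)^(((d*d:ℕ):ℝ) * ((2:ℝ)/((d:ℝ)^2))) := by rw [hmulexp]; norm_num
        _ = ((b:ℝ)^(((d*d:ℕ)):ℝ))^((2:ℝ)/((d:ℝ)^2)) := Real.rpow_mul hbR0 _ _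
        _ = (((b:ℝ))^((d*d:ℕ)))^((2:ℝ)/((d:ℝ)^2)) := by rw [Real.rpow_natCast]
    rw [e1]
    exact Real.rpow_le_rpow (by positivity) hbKR hexp0
  have hK' : ((K:ℝ)*(n:ℝ))^((2:ℝ)/((d:ℝ)^2)) ≤ (K:ℝ) * (n:ℝ)^((2:ℝ)/((d:ℝ)^2)) := by
    rw [Real.mul_rpow (by positivity) (by positivity)]
    have hK1R : (1:ℝ) ≤ (K:ℝ) := by exact_mod_cast hK1
    have h2 : (K:ℝ)^((2:ℝ)/((d:ℝ)^2)) ≤ (K:ℝ) := by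
      calc (K:ℝ)^((2:ℝ)/((d:ℝ)^2)) ≤ (K:ℝ)^(1:ℝ) := by
            apply Real.rpow_le_rpow_of_exponent_le hK1R
            rw [div_le_one hd2]
            nlinarith
        _ = (K:ℝ) := Real.rpow_one _
    exact mul_le_mul_of_nonneg_right h2 (Real.rpow_nonneg (Nat.cast_nonneg n) _)
  calc ((2*(b*b):ℕ):ℝ) = 2*((b:ℝ))^(2:ℕ) := by push_cast; ring
    _ ≤ 2*((K:ℝ) * (n:ℝ)^((2:ℝ)/((d:ℝ)^2))) := by linarith [le_trans key hK']
    _ = 2*(K:ℝ) * (n:ℝ)^((2:ℝ)/((d:ℝ)^2)) := by ring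
end

section
/- Let p(z) ∈ ℤ[z] have degree d ≥ 2 with positive leading coefficient a_d, and set m_s(k) = p(k+s) − p(k), k₁(k) = max{t : p(t) < p(k)/2}, k₀(k) = max{t : p(t) < 2p(k) − 4m_1(k)}. Then k₁(k)/k → 2^{−1/d} and k₀(k)/k → 2^{1/d} as k → ∞. -/
open Filter Polynomial Asymptotics

private lemma key_ratio (Q : Polynomial ℝ) {d : ℕ} (hdeg : Q.natDegree = d)
    (hL : 0 < Q.leadingCoeff) :
    Tendsto (fun x : ℝ => Q.eval x / x ^ d) atTop (nhds Q.leadingCoeff) := by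
  have hev : ∀ᶠ x : ℝ in atTop, Q.leadingCoeff * x ^ d ≠ 0 := by
    filter_upwards [eventually_gt_atTop (0 : ℝ)] with x hx
    exact mul_ne_zero hL.ne' (pow_ne_zero _ hx.ne')
  have h1 := Q.isEquivalent_atTop_lead
  rw [hdeg] at h1
  rw [isEquivalent_iff_tendsto_one hev] at h1
  have h2 : Tendsto (fun x : ℝ =>
      Q.leadingCoeff * (Q.eval x / (Q.leadingCoeff * x ^ d))) atTop
      (nhds (Q.leadingCoeff * 1)) := by
    apply Tendsto.const_mul
    simpa [Pi.div_def] using h1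
  rw [mul_one] at h2
  refine h2.congr' ?_
  filter_upwards [eventually_gt_atTop (0 : ℝ)] with x hx
  field_simp

private lemma key_scale (Q : Polynomial ℝ) {d : ℕ} (hdeg : Q.natDegree = d)
    (hL : 0 < Q.leadingCoeff) (b : ℝ) (hb : 0 < b) :
    Tendsto (fun k : ℕ => Q.eval (b * k) / (k : ℝ) ^ d) atTop
      (nhds (Q.leadingCoeff * b ^ d)) := by
  have h0 := key_ratio Q hdeg hL
  have hbk : Tendsto (fun k : ℕ => b * (k : ℝ)) atTop atTop :=
    Tendsto.const_mul_atTop hb tendsto_natCast_atTop_atTop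
  have h1 : Tendsto (fun k : ℕ => Q.eval (b * k) / (b * k) ^ d) atTop
      (nhds Q.leadingCoeff) := h0.comp hbk
  have h2 := h1.mul_const (b ^ d)
  refine h2.congr' ?_
  filter_upwards [eventually_gt_atTop (0 : ℕ)] with k hk
  have hk' : (0 : ℝ) < (k : ℝ) := by exact_mod_cast hk
  rw [mul_pow]
  field_simp

private lemma key_main (d : ℕ) (hd : 2 ≤ d) (Q : Polynomial ℝ) (hdeg : Q.natDegree = d)
    (hL : 0 < Q.leadingCoeff)
    (W : ℕ → ℝ) (c : ℝ) (hc : 0 < c)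
    (hW : Tendsto (fun k : ℕ => W k / (k : ℝ) ^ d) atTop
      (nhds (Q.leadingCoeff * c ^ d)))
    (r : ℕ → ℤ) (K : ℕ)
    (hr : ∀ k : ℕ, K ≤ k → Q.eval ((r k : ℤ) : ℝ) < W k ∧
      ∀ t : ℤ, Q.eval ((t : ℤ) : ℝ) < W k → t ≤ r k) :
    Tendsto (fun k : ℕ => (r k : ℝ) / k) atTop (nhds c) := by
  set L := Q.leadingCoeff with hLdef
  -- eventual strict monotonicity of eval
  have hQd : Q.coeff d = L := by rw [hLdef, Polynomial.leadingCoeff, hdeg]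
  have hd1 : (d - 1) + 1 = d := by omega
  have hcoeff : (derivative Q).coeff (d - 1) = Q.coeff d * ((d - 1 : ℕ) + 1) := by
    rw [Polynomial.coeff_derivative, hd1]
  have hcast : ((d - 1 : ℕ) : ℝ) + 1 = (d : ℝ) := by
    exact_mod_cast congrArg (Nat.cast : ℕ → ℝ) hd1
  have hcoeff' : (derivative Q).coeff (d - 1) = L * d := by
    rw [hcoeff, hQd, hcast]
  have hcpos : 0 < (derivative Q).coeff (d - 1) := by
    rw [hcoeff']
    have : (0:ℝ) < (d:ℝ) := by exact_mod_cast (by omega : 0 < d)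
    positivity
  have hndge : d - 1 ≤ (derivative Q).natDegree :=
    Polynomial.le_natDegree_of_ne_zero hcpos.ne'
  have hndle : (derivative Q).natDegree ≤ d - 1 := by
    simpa [hdeg] using Q.natDegree_derivative_le
  have hnd : (derivative Q).natDegree = d - 1 := le_antisymm hndle hndge
  have hlead' : 0 < (derivative Q).leadingCoeff := by
    rw [Polynomial.leadingCoeff, hnd]; exact hcpos
  have hne : derivative Q ≠ 0 := fun h => by
    rw [h] at hlead'; simp at hlead'
  have hdegpos : 0 < (derivative Q).degree := by
    rw [Polynomial.degree_eq_natDegree hne, hnd]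
    exact_mod_cast (by omega : 0 < d - 1)
  have htop := Polynomial.tendsto_atTop_of_leadingCoeff_nonneg _ hdegpos hlead'.le
  obtain ⟨M, hM⟩ := eventually_atTop.mp (htop.eventually_gt_atTop 0)
  have hmono : StrictMonoOn (fun x => Q.eval x) (Set.Ici M) := by
    apply strictMonoOn_of_deriv_pos (convex_Ici M) (Q.continuous.continuousOn)
    intro x hx
    rw [Polynomial.deriv]
    exact hM x (le_of_lt (by simpa [interior_Ici] using hx))
  -- epsilon argument
  rw [Metric.tendsto_atTop]
  intro ε hε
  set δ := min (ε / 2) (c / 2) with hδdef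
  have hδ0 : 0 < δ := lt_min (by linarith) (by linarith)
  have hδε : δ ≤ ε / 2 := min_le_left _ _
  have hδc : δ ≤ c / 2 := min_le_right _ _
  have hcδ : 0 < c - δ := by linarith
  have hlo := key_scale Q hdeg hL (c - δ) hcδ
  have hhi := key_scale Q hdeg hL (c + δ) (by linarith)
  have hlt1 : L * (c - δ) ^ d < L * c ^ d :=
    mul_lt_mul_of_pos_left
      (pow_lt_pow_left₀ (by linarith) hcδ.le (by omega)) hL
  have hlt2 : L * c ^ d < L * (c + δ) ^ d :=
    mul_lt_mul_of_pos_left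
      (pow_lt_pow_left₀ (by linarith) hc.le (by omega)) hL
  have hA : ∀ᶠ k : ℕ in atTop,
      Q.eval ((c - δ) * k) / (k : ℝ) ^ d < W k / (k : ℝ) ^ d :=
    hlo.eventually_lt hW hlt1
  have hB : ∀ᶠ k : ℕ in atTop,
      W k / (k : ℝ) ^ d < Q.eval ((c + δ) * k) / (k : ℝ) ^ d :=
    hW.eventually_lt hhi hlt2
  have hMev : ∀ᶠ k : ℕ in atTop, M + 1 ≤ (c - δ) * k :=
    (Tendsto.const_mul_atTop hcδ tendsto_natCast_atTop_atTop).eventually_ge_atTop _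
  have hkε : ∀ᶠ k : ℕ in atTop, 2 / ε < (k : ℝ) :=
    tendsto_natCast_atTop_atTop.eventually_gt_atTop _
  have hfin : ∀ᶠ k : ℕ in atTop, dist ((r k : ℝ) / k) c < ε := by
    filter_upwards [hA, hB, hMev, eventually_ge_atTop K, hkε,
      eventually_gt_atTop (0 : ℕ)] with k hA hB hM1 hK hke hk0
    have hk0' : (0 : ℝ) < (k : ℝ) := by exact_mod_cast hk0
    have hkd : (0 : ℝ) < (k : ℝ) ^ d := pow_pos hk0' d
    have hA' : Q.eval ((c - δ) * k) < W k := (div_lt_div_iff_of_pos_right hkd).mp hA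
    have hB' : W k < Q.eval ((c + δ) * k) := (div_lt_div_iff_of_pos_right hkd).mp hB
    obtain ⟨h₁, h₂⟩ := hr k hK
    -- lower bound on r k
    set t : ℤ := ⌊(c - δ) * (k : ℝ)⌋ with htdef
    have ht1 : (t : ℝ) ≤ (c - δ) * k := Int.floor_le _
    have ht2 : (c - δ) * (k : ℝ) - 1 < t := Int.sub_one_lt_floor _
    have htM : M ≤ (t : ℝ) := by linarith
    have hgt : Q.eval ((t : ℤ) : ℝ) ≤ Q.eval ((c - δ) * k) :=
      hmono.monotoneOn htM (le_trans htM ht1) ht1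
    have htr : t ≤ r k := h₂ t (lt_of_le_of_lt hgt hA')
    have hrlow : (c - δ) * (k : ℝ) - 1 < (r k : ℝ) := by
      have : (t : ℝ) ≤ (r k : ℝ) := by exact_mod_cast htr
      linarith
    -- upper bound on r k
    have hle : (c - δ) * (k : ℝ) ≤ (c + δ) * k := by nlinarith
    have hrup : (r k : ℝ) ≤ (c + δ) * k := by
      by_contra hcon
      push_neg at hcon
      have hm2 : Q.eval ((c + δ) * k) ≤ Q.eval ((r k : ℤ) : ℝ) :=
        hmono.monotoneOn (by simp only [Set.mem_Ici]; linarith)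
          (by simp only [Set.mem_Ici]; linarith) hcon.le
      linarith
    -- conclude
    have h2k : 2 < ε * k := by
      rw [div_lt_iff₀ hε] at hke; linarith [mul_comm ε (k : ℝ)]
    have h1k : 1 / (k : ℝ) < ε / 2 := by
      rw [div_lt_div_iff₀ hk0' (by norm_num : (0:ℝ) < 2)]; linarith
    rw [Real.dist_eq, abs_lt]
    constructor
    · have hlow2 : c - δ - 1 / (k : ℝ) < (r k : ℝ) / k := by
        rw [lt_div_iff₀ hk0']
        have heq : (c - δ - 1 / (k : ℝ)) * k = (c - δ) * k - 1 := by
          field_simp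
        rw [heq]; exact hrlow
      linarith
    · have hup2 : (r k : ℝ) / k ≤ c + δ := by
        rw [div_le_iff₀ hk0']; exact hrup
      linarith
  exact eventually_atTop.mp hfin

theorem threshold_asymptotics (d : ℕ) (hd : 2 ≤ d) (a : ℕ → ℤ) (ha : 0 < a d)
    (P : ℤ → ℤ) (hP : ∀ z, P z = ∑ i ∈ Finset.range (d + 1), a i * z ^ i)
    (k1 k0 : ℕ → ℤ) (K : ℕ)
    (hk1 : ∀ k : ℕ, K ≤ k → 2 * P (k1 k) < P k ∧ ∀ t : ℤ, 2 * P t < P k → t ≤ k1 k)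
    (hk0 : ∀ k : ℕ, K ≤ k →
      P (k0 k) < 2 * P k - 4 * (P ((k : ℤ) + 1) - P k) ∧
      ∀ t : ℤ, P t < 2 * P k - 4 * (P ((k : ℤ) + 1) - P k) → t ≤ k0 k) :
    Filter.Tendsto (fun k : ℕ => (k1 k : ℝ) / k) Filter.atTop
      (nhds ((2 : ℝ) ^ (-(1 : ℝ) / d))) ∧
    Filter.Tendsto (fun k : ℕ => (k0 k : ℝ) / k) Filter.atTop
      (nhds ((2 : ℝ) ^ ((1 : ℝ) / d))) := by
  classical
  set Q : Polynomial ℝ :=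
    ∑ i ∈ Finset.range (d + 1), Polynomial.C ((a i : ℝ)) * Polynomial.X ^ i with hQdef
  have hQeval : ∀ x : ℝ, Q.eval x = ∑ i ∈ Finset.range (d + 1), (a i : ℝ) * x ^ i := by
    intro x
    rw [hQdef, Polynomial.eval_finset_sum]
    simp
  have hPQ : ∀ z : ℤ, ((P z : ℤ) : ℝ) = Q.eval ((z : ℤ) : ℝ) := by
    intro z
    rw [hQeval, hP]
    push_cast
    ring
  have hQd : Q.coeff d = (a d : ℝ) := by
    rw [hQdef, Polynomial.finset_sum_coeff]
    simp [Polynomial.coeff_X_pow, Finset.sum_ite_eq, Finset.mem_range]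
  have hadR : (0 : ℝ) < (a d : ℝ) := by exact_mod_cast ha
  have hdle : Q.natDegree ≤ d := by
    rw [hQdef]
    apply Polynomial.natDegree_sum_le_of_forall_le
    intro i hi
    refine le_trans (Polynomial.natDegree_C_mul_le _ _) ?_
    rw [Polynomial.natDegree_X_pow]
    exact Nat.lt_succ_iff.mp (Finset.mem_range.mp hi)
  have hdge : d ≤ Q.natDegree :=
    Polynomial.le_natDegree_of_ne_zero (by rw [hQd]; exact hadR.ne')
  have hdeg : Q.natDegree = d := le_antisymm hdle hdge
  have hLval : Q.leadingCoeff = (a d : ℝ) := by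
    rw [Polynomial.leadingCoeff, hdeg, hQd]
  have hL : 0 < Q.leadingCoeff := by rw [hLval]; exact hadR
  have hdR : (0 : ℝ) < (d : ℝ) := by exact_mod_cast (by omega : 0 < d)
  -- limits of eval at k and k+1
  have hQk : Tendsto (fun k : ℕ => Q.eval (k : ℝ) / (k : ℝ) ^ d) atTop
      (nhds Q.leadingCoeff) :=
    (key_ratio Q hdeg hL).comp tendsto_natCast_atTop_atTop
  have hQk1 : Tendsto (fun k : ℕ => Q.eval ((k : ℝ) + 1) / (k : ℝ) ^ d) atTop
      (nhds Q.leadingCoeff) := by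
    have h1 : Tendsto (fun k : ℕ => Q.eval ((k : ℝ) + 1) / ((k : ℝ) + 1) ^ d) atTop
        (nhds Q.leadingCoeff) :=
      (key_ratio Q hdeg hL).comp
        (tendsto_atTop_add_const_right _ 1 tendsto_natCast_atTop_atTop)
    have h2 : Tendsto (fun k : ℕ => (1 + 1 / (k : ℝ)) ^ d) atTop (nhds 1) := by
      have hb : Tendsto (fun k : ℕ => 1 + 1 / (k : ℝ)) atTop (nhds (1 + 0)) :=
        (tendsto_const_nhds : Tendsto (fun _ : ℕ => (1:ℝ)) atTop (nhds 1)).add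
          tendsto_one_div_atTop_nhds_zero_nat
      rw [add_zero] at hb
      simpa using hb.pow d
    have h3 := h1.mul h2
    rw [mul_one] at h3
    refine h3.congr' ?_
    filter_upwards [eventually_gt_atTop (0 : ℕ)] with k hk
    have hk' : (0 : ℝ) < (k : ℝ) := by exact_mod_cast hk
    have hk1' : (0 : ℝ) < (k : ℝ) + 1 := by linarith
    have : (1 + 1 / (k : ℝ)) = ((k : ℝ) + 1) / k := by field_simp
    rw [this, div_pow]
    field_simp
  constructor
  · -- k1 part
    set c : ℝ := (2 : ℝ) ^ (-(1 : ℝ) / d) with hcdef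
    have hc : 0 < c := Real.rpow_pos_of_pos (by norm_num) _
    have hcd : c ^ d = 1 / 2 := by
      rw [hcdef, ← Real.rpow_natCast ((2 : ℝ) ^ (-(1 : ℝ) / d)) d,
        ← Real.rpow_mul (by norm_num : (0 : ℝ) ≤ 2)]
      rw [show (-(1 : ℝ) / d) * d = -1 by field_simp]
      rw [Real.rpow_neg_one]
      norm_num
    apply key_main d hd Q hdeg hL (fun k => ((P k : ℤ) : ℝ) / 2) c hc
    · rw [hcd]
      have h2 := hQk.mul_const (1 / 2)
      refine h2.congr' ?_
      filter_upwards with k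
      have h1 := hPQ (k : ℤ)
      push_cast at h1
      rw [h1]
      ring
    · intro k hk
      obtain ⟨h₁, h₂⟩ := hk1 k hk
      constructor
      · rw [← hPQ]
        have : ((2 * P (k1 k) : ℤ) : ℝ) < ((P k : ℤ) : ℝ) := by exact_mod_cast h₁
        push_cast at this ⊢
        linarith
      · intro t ht
        apply h₂
        rw [← hPQ] at ht
        have : (2 * (P t : ℝ)) < ((P k : ℤ) : ℝ) := by linarith
        exact_mod_cast this
  · -- k0 part
    set c : ℝ := (2 : ℝ) ^ ((1 : ℝ) / d) with hcdef
    have hc : 0 < c := Real.rpow_pos_of_pos (by norm_num) _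
    have hcd : c ^ d = 2 := by
      rw [hcdef, ← Real.rpow_natCast ((2 : ℝ) ^ ((1 : ℝ) / d)) d,
        ← Real.rpow_mul (by norm_num : (0 : ℝ) ≤ 2)]
      rw [show ((1 : ℝ) / d) * d = 1 by field_simp]
      exact Real.rpow_one 2
    apply key_main d hd Q hdeg hL
      (fun k => ((2 * P k - 4 * (P ((k : ℤ) + 1) - P k) : ℤ) : ℝ)) c hc
    · rw [hcd]
      have h6 := hQk.const_mul (6 : ℝ)
      have h4 := hQk1.const_mul (4 : ℝ)
      have h3 := h6.sub h4
      have heq : (6 : ℝ) * Q.leadingCoeff - 4 * Q.leadingCoeff = Q.leadingCoeff * 2 := by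
        ring
      rw [heq] at h3
      refine h3.congr' ?_
      filter_upwards with k
      have h1 := hPQ (k : ℤ)
      have h2 := hPQ ((k : ℤ) + 1)
      push_cast at h1 h2
      push_cast
      rw [h1, h2]
      ring
    · intro k hk
      obtain ⟨h₁, h₂⟩ := hk0 k hk
      constructor
      · rw [← hPQ]
        exact_mod_cast h₁
      · intro t ht
        apply h₂
        rw [← hPQ] at ht
        exact_mod_cast ht
end

section
/- Let p(z) ∈ ℤ[z] have degree d ≥ 2 with positive leading coefficient a_d and m_s(k) = p(k+s) − p(k). There is a constant q depending only on p such that for all sufficiently large k: m_{i+1}(k) − m_i(k) ≤ q·m_1(k) for all i with k + i + 1 ≤ k₀(k), and m_{k₀(k)−k}(k) ≥ p(k) − q·m_1(k), where k₀(k) = max{t : p(t) < 2p(k) − 4m_1(k)}. Consequently, for every integer T ∈ [1, p(k)] there exists s ∈ [1, k₀(k) − k] with |m_s(k) − T| ≤ q·m_1(k). -/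
open Finset

private lemma diff_nonneg' (n : ℤ) (hn : 0 ≤ n) (i : ℕ) : 0 ≤ (n+1)^i - n^i := by
  have := pow_le_pow_left₀ hn (by linarith : n ≤ n+1) i
  linarith

private lemma geom_diff (x : ℤ) (i : ℕ) :
    (x+1)^i - x^i = ∑ j ∈ range i, (x+1)^j * x^(i-1-j) := by
  have h := geom_sum₂_mul (x+1) x i
  simpa using h.symm

private lemma diff_le (n : ℤ) (hn : 0 ≤ n) (i : ℕ) :
    (n+1)^i - n^i ≤ i * (n+1)^(i-1) := by
  rw [geom_diff]
  calc ∑ j ∈ range i, (n+1)^j * n^(i-1-j)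
      ≤ ∑ _j ∈ range i, (n+1)^(i-1) := by
        refine sum_le_sum fun j hj => ?_
        simp only [mem_range] at hj
        calc (n+1)^j * n^(i-1-j) ≤ (n+1)^j * (n+1)^(i-1-j) :=
              mul_le_mul_of_nonneg_left (pow_le_pow_left₀ hn (by linarith) _) (by positivity)
          _ = (n+1)^(i-1) := by rw [← pow_add]; congr 1; omega
    _ = i * (n+1)^(i-1) := by rw [sum_const, card_range, nsmul_eq_mul]

private lemma diff_ge (n : ℤ) (hn : 0 ≤ n) (i : ℕ) :
    (i : ℤ) * n^(i-1) ≤ (n+1)^i - n^i := by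
  rw [geom_diff]
  calc (i:ℤ) * n^(i-1) = ∑ _j ∈ range i, n^(i-1) := by
        rw [sum_const, card_range, nsmul_eq_mul]
    _ ≤ ∑ j ∈ range i, (n+1)^j * n^(i-1-j) := by
        refine sum_le_sum fun j hj => ?_
        simp only [mem_range] at hj
        calc (n:ℤ)^(i-1) = n^j * n^(i-1-j) := by rw [← pow_add]; congr 1; omega
          _ ≤ (n+1)^j * n^(i-1-j) :=
              mul_le_mul_of_nonneg_right (pow_le_pow_left₀ hn (by linarith) _) (by positivity)

section
variable (d : ℕ) (a : ℕ → ℤ) (P : ℤ → ℤ)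

private lemma P_sub (hP : ∀ z, P z = ∑ i ∈ Finset.range (d + 1), a i * z ^ i)
    (x y : ℤ) :
    P x - P y = ∑ i ∈ range (d+1), a i * (x^i - y^i) := by
  simp only [hP, mul_sub, ← Finset.sum_sub_distrib]

private lemma gap_le (hP : ∀ z, P z = ∑ i ∈ Finset.range (d + 1), a i * z ^ i)
    (n : ℤ) (hn : 0 ≤ n) :
    P (n+1) - P n ≤ (∑ i ∈ range (d+1), |a i|) * ((d:ℤ) * (n+1)^(d-1)) := by
  rw [P_sub d a P hP, sum_mul]
  refine sum_le_sum fun i hi => ?_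
  simp only [mem_range] at hi
  have hX : (0:ℤ) ≤ (n+1)^i - n^i := diff_nonneg' n hn i
  have h1 : (n+1)^i - n^i ≤ (d:ℤ) * (n+1)^(d-1) := by
    refine (diff_le n hn i).trans ?_
    have : ((n:ℤ)+1)^(i-1) ≤ (n+1)^(d-1) :=
      pow_le_pow_right₀ (by linarith) (by omega)
    have hi' : (i:ℤ) ≤ (d:ℤ) := by exact_mod_cast Nat.lt_succ_iff.mp hi
    exact mul_le_mul hi' this (by positivity) (by positivity)
  calc a i * ((n+1)^i - n^i) ≤ |a i| * ((n+1)^i - n^i) :=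
        mul_le_mul_of_nonneg_right (le_abs_self _) hX
    _ ≤ |a i| * ((d:ℤ) * (n+1)^(d-1)) :=
        mul_le_mul_of_nonneg_left h1 (abs_nonneg _)

private lemma gap_ge (hP : ∀ z, P z = ∑ i ∈ Finset.range (d + 1), a i * z ^ i)
    (hd : 2 ≤ d) (ha : 0 < a d) (n : ℤ) (hn : 0 ≤ n) :
    a d * ((d:ℤ) * n^(d-1)) - (∑ i ∈ range (d+1), |a i|) * ((d:ℤ) * (n+1)^(d-2))
      ≤ P (n+1) - P n := by
  rw [P_sub d a P hP]
  have hsplit := sum_range_succ (fun i => a i * ((n+1)^i - n^i)) d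
  have h1 : a d * ((d:ℤ) * n^(d-1)) ≤ a d * ((n+1)^d - n^d) :=
    mul_le_mul_of_nonneg_left (diff_ge n hn d) ha.le
  have h2 : -((∑ i ∈ range (d+1), |a i|) * ((d:ℤ) * (n+1)^(d-2)))
      ≤ ∑ i ∈ range d, a i * ((n+1)^i - n^i) := by
    have hB : (0:ℤ) ≤ (d:ℤ) * (n+1)^(d-2) := by positivity
    have hsub : (∑ i ∈ range d, |a i|) ≤ ∑ i ∈ range (d+1), |a i| :=
      sum_le_sum_of_subset_of_nonneg (range_subset_range.mpr (by omega))
        (fun i _ _ => abs_nonneg _)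
    calc -((∑ i ∈ range (d+1), |a i|) * ((d:ℤ) * (n+1)^(d-2)))
        ≤ -((∑ i ∈ range d, |a i|) * ((d:ℤ) * (n+1)^(d-2))) := by nlinarith
      _ = ∑ i ∈ range d, -(|a i| * ((d:ℤ) * (n+1)^(d-2))) := by
          rw [sum_mul, ← Finset.sum_neg_distrib]
      _ ≤ ∑ i ∈ range d, a i * ((n+1)^i - n^i) := by
          refine sum_le_sum fun i hi => ?_
          simp only [mem_range] at hi
          have hX : (0:ℤ) ≤ (n+1)^i - n^i := diff_nonneg' n hn i
          have hb : (n+1)^i - n^i ≤ (d:ℤ) * (n+1)^(d-2) := by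
            refine (diff_le n hn i).trans ?_
            have : ((n:ℤ)+1)^(i-1) ≤ (n+1)^(d-2) :=
              pow_le_pow_right₀ (by linarith) (by omega)
            have hi' : (i:ℤ) ≤ (d:ℤ) := by exact_mod_cast hi.le
            exact mul_le_mul hi' this (by positivity) (by positivity)
          nlinarith [mul_le_mul_of_nonneg_left hb (abs_nonneg (a i)),
            mul_le_mul_of_nonneg_right (neg_abs_le (a i)) hX]
  linarith

private lemma P_le' (hP : ∀ z, P z = ∑ i ∈ Finset.range (d + 1), a i * z ^ i)
    (hd : 2 ≤ d) (n : ℤ) (hn : 1 ≤ n) :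
    P n ≤ a d * n^d + (∑ i ∈ range (d+1), |a i|) * n^(d-1) := by
  rw [hP]
  have hsplit := sum_range_succ (fun i => a i * n^i) d
  have h2 : ∑ i ∈ range d, a i * n^i ≤ (∑ i ∈ range (d+1), |a i|) * n^(d-1) := by
    rw [sum_mul]
    calc ∑ i ∈ range d, a i * n^i ≤ ∑ i ∈ range d, |a i| * n^(d-1) := by
          refine sum_le_sum fun i hi => ?_
          simp only [mem_range] at hi
          have h1 : n^i ≤ n^(d-1) := pow_le_pow_right₀ hn (by omega)
          have h0 : (0:ℤ) ≤ n^i := by positivity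
          calc a i * n^i ≤ |a i| * n^i := mul_le_mul_of_nonneg_right (le_abs_self _) h0
            _ ≤ |a i| * n^(d-1) := mul_le_mul_of_nonneg_left h1 (abs_nonneg _)
      _ ≤ ∑ i ∈ range (d+1), |a i| * n^(d-1) :=
          sum_le_sum_of_subset_of_nonneg (range_subset_range.mpr (by omega))
            (fun i _ _ => by positivity)
  linarith

private lemma P_ge' (hP : ∀ z, P z = ∑ i ∈ Finset.range (d + 1), a i * z ^ i)
    (hd : 2 ≤ d) (n : ℤ) (hn : 1 ≤ n) :
    a d * n^d - (∑ i ∈ range (d+1), |a i|) * n^(d-1) ≤ P n := by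
  rw [hP]
  have hsplit := sum_range_succ (fun i => a i * n^i) d
  have h2 : -((∑ i ∈ range (d+1), |a i|) * n^(d-1)) ≤ ∑ i ∈ range d, a i * n^i := by
    rw [sum_mul]
    have habs := sum_range_succ (fun i => |a i| * n^(d-1)) d
    have hlast : (0:ℤ) ≤ |a d| * n^(d-1) := by positivity
    have key : ∑ i ∈ range d, -(|a i| * n^(d-1)) ≤ ∑ i ∈ range d, a i * n^i := by
      refine sum_le_sum fun i hi => ?_
      simp only [mem_range] at hi
      have h1 : n^i ≤ n^(d-1) := pow_le_pow_right₀ hn (by omega)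
      have h0 : (0:ℤ) ≤ n^i := by positivity
      nlinarith [mul_le_mul_of_nonneg_left h1 (abs_nonneg (a i)),
        mul_le_mul_of_nonneg_right (neg_abs_le (a i)) h0]
    have hneg : ∑ i ∈ range d, -(|a i| * n^(d-1)) = -∑ i ∈ range d, |a i| * n^(d-1) :=
      Finset.sum_neg_distrib _
    linarith
  linarith

end

private lemma arith1 (Dv A ad n u t : ℤ) (hD : 2 ≤ Dv) (hA : 1 ≤ A) (had : 1 ≤ ad)
    (hu : 1 ≤ u) (ht : 1 ≤ t) (hn : 1 ≤ n) (hnge : 2*t*A ≤ n) :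
    u*n ≤ ad*(Dv*(u*n)) - A*(Dv*(t*u)) := by
  nlinarith [mul_nonneg (mul_nonneg (by linarith : (0:ℤ) ≤ Dv-1) (by linarith : (0:ℤ) ≤ u))
      (by linarith : (0:ℤ) ≤ n - 2*t*A),
    mul_nonneg (mul_nonneg (mul_nonneg (by linarith : (0:ℤ) ≤ u) (by linarith : (0:ℤ) ≤ t))
      (by linarith : (0:ℤ) ≤ A)) (by linarith : (0:ℤ) ≤ Dv-2),
    mul_nonneg (by linarith : (0:ℤ) ≤ ad-1)
      (mul_nonneg (mul_nonneg (by linarith : (0:ℤ) ≤ Dv) (by linarith : (0:ℤ) ≤ u))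
        (by linarith : (0:ℤ) ≤ n))]

private lemma arith2 (A ad k w s : ℤ) (hA : 1 ≤ A) (had : 1 ≤ ad) (hk : 1 ≤ k)
    (hw : 1 ≤ w) (hs : 1 ≤ s) (hkge : 2*s*A ≤ k) :
    2*(ad*(w*k)) + 2*(A*w) ≤ ad*(4*s*(w*k)) - A*(2*s*w) := by
  nlinarith [mul_nonneg (mul_nonneg (mul_nonneg (by linarith : (0:ℤ) ≤ ad-1)
      (by linarith : (0:ℤ) ≤ w)) (by linarith : (0:ℤ) ≤ k)) (by linarith : (0:ℤ) ≤ 4*s-2),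
    mul_nonneg (mul_nonneg (mul_nonneg (by linarith : (0:ℤ) ≤ 2*s-1)
      (by linarith : (0:ℤ) ≤ w)) (by linarith : (0:ℤ) ≤ k - 2*s*A)) (by norm_num : (0:ℤ) ≤ 2),
    mul_nonneg (mul_nonneg (mul_nonneg (mul_nonneg (by norm_num : (0:ℤ) ≤ 2)
      (by linarith : (0:ℤ) ≤ s-1)) (by linarith : (0:ℤ) ≤ 4*s+1))
      (by linarith : (0:ℤ) ≤ A)) (by linarith : (0:ℤ) ≤ w)]
set_option maxHeartbeats 2000000 in
theorem increments_cover (d : ℕ) (hd : 2 ≤ d) (a : ℕ → ℤ) (ha : 0 < a d)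
    (P : ℤ → ℤ) (hP : ∀ z, P z = ∑ i ∈ Finset.range (d + 1), a i * z ^ i) :
    ∃ q : ℕ, 0 < q ∧ ∃ K : ℕ, ∀ k : ℕ, K ≤ k →
      ∀ k0 : ℕ,
        (P k0 < 2 * P k - 4 * (P ((k : ℤ) + 1) - P k) ∧
          ∀ t : ℕ, P t < 2 * P k - 4 * (P ((k : ℤ) + 1) - P k) → t ≤ k0) →
        ((∀ i : ℕ, 1 ≤ i → k + i + 1 ≤ k0 →
            (P ((k : ℤ) + i + 1) - P k) - (P ((k : ℤ) + i) - P k) ≤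
              (q : ℤ) * (P ((k : ℤ) + 1) - P k)) ∧
         P k - (q : ℤ) * (P ((k : ℤ) + 1) - P k) ≤ P k0 - P k ∧
         ∀ T : ℤ, 1 ≤ T → T ≤ P k →
           ∃ s : ℕ, 1 ≤ s ∧ k + s ≤ k0 ∧
             |(P ((k : ℤ) + s) - P k) - T| ≤ (q : ℤ) * (P ((k : ℤ) + 1) - P k)) := by
  classical
  set A : ℤ := ∑ i ∈ Finset.range (d+1), |a i| with hAdef
  have hA1 : 1 ≤ A := by
    have h1 : |a d| ≤ A := by
      rw [hAdef]
      exact single_le_sum (f := fun i => |a i|) (fun i _ => abs_nonneg _)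
        (mem_range.mpr (by omega))
    have h2 : 1 ≤ a d := ha
    have h3 := le_abs_self (a d)
    linarith
  have hD2 : (2:ℤ) ≤ (d:ℤ) := by exact_mod_cast hd
  set C : ℤ := A * (d:ℤ) with hCdef
  have hC2 : 2 ≤ C := by nlinarith
  set qZ : ℤ := C * 3^(d-1) + 5 with hqZdef
  have h3pow : (1:ℤ) ≤ 3^(d-1) := one_le_pow₀ (by norm_num)
  have h2pow : (1:ℤ) ≤ 2^(d-1) := one_le_pow₀ (by norm_num)
  have h2pow' : (1:ℤ) ≤ 2^(d-2) := one_le_pow₀ (by norm_num)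
  have hqZ5 : 5 ≤ qZ := by nlinarith
  set KZ : ℤ := 2^(d-1)*A + A + (qZ+5)*C*2^(d-1) + 1 with hKZdef
  refine ⟨qZ.toNat, ?_, KZ.toNat, ?_⟩
  · have : (0:ℤ) < qZ := by linarith
    omega
  intro k hk k0 ⟨hk0lt, hk0max⟩
  have hq : ((qZ.toNat : ℕ) : ℤ) = qZ := Int.toNat_of_nonneg (by linarith)
  have hkZ : KZ ≤ (k:ℤ) := Int.toNat_le.mp hk
  have hprod0 : (0:ℤ) ≤ (qZ+5)*C*2^(d-1) :=
    mul_nonneg (mul_nonneg (by linarith) (by linarith)) (by linarith)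
  have hkA : 2^(d-1)*A ≤ (k:ℤ) := by linarith
  have hkq : A + (qZ+5)*C*2^(d-1) + 1 ≤ (k:ℤ) := by nlinarith
  have hk1 : (1:ℤ) ≤ (k:ℤ) := by nlinarith
  set m1 : ℤ := P ((k:ℤ)+1) - P (k:ℤ) with hm1def
  have h2e : (2:ℤ)^(d-1) = 2 * 2^(d-2) := by
    rw [show d-1 = (d-2)+1 by omega, pow_succ]; ring
  -- lower bound on increments beyond k
  have hm1low : ∀ n : ℕ, k ≤ n → ((n:ℤ))^(d-1) ≤ P ((n:ℤ)+1) - P (n:ℤ) := by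
    intro n hn
    have hnk : (k:ℤ) ≤ (n:ℤ) := by exact_mod_cast hn
    have hn1 : (1:ℤ) ≤ (n:ℤ) := le_trans hk1 hnk
    have hg := gap_ge d a P hP hd ha (n:ℤ) (by linarith)
    have hsplit : ((n:ℤ)+1)^(d-2) ≤ 2^(d-2) * (n:ℤ)^(d-2) := by
      calc ((n:ℤ)+1)^(d-2) ≤ (2*(n:ℤ))^(d-2) :=
            pow_le_pow_left₀ (by linarith) (by linarith) _
        _ = 2^(d-2) * (n:ℤ)^(d-2) := mul_pow _ _ _
    have hne : ((n:ℤ))^(d-1) = (n:ℤ)^(d-2) * (n:ℤ) := by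
      rw [← pow_succ]; congr 1; omega
    have hu1 : (1:ℤ) ≤ (n:ℤ)^(d-2) := one_le_pow₀ hn1
    have hA2 : A * ((d:ℤ) * (((n:ℤ)+1)^(d-2))) ≤ A * ((d:ℤ) * (2^(d-2) * (n:ℤ)^(d-2))) :=
      mul_le_mul_of_nonneg_left (mul_le_mul_of_nonneg_left hsplit (by linarith))
        (by linarith)
    have hnge : 2*(2:ℤ)^(d-2)*A ≤ (n:ℤ) := by
      have : 2^(d-1)*A ≤ (n:ℤ) := le_trans hkA hnk
      rw [h2e] at this; linarith
    have key := arith1 (d:ℤ) A (a d) (n:ℤ) ((n:ℤ)^(d-2)) ((2:ℤ)^(d-2))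
      hD2 hA1 ha hu1 h2pow' hn1 hnge
    rw [hne]
    rw [hne] at hg
    have : A*((d:ℤ)*((2:ℤ)^(d-2)*(n:ℤ)^(d-2))) = A*((d:ℤ)*((n:ℤ)^(d-2)*(2:ℤ)^(d-2))) := by
      ring
    linarith [key, hA2, hg]
  have hm1 : (k:ℤ)^(d-1) ≤ m1 := hm1low k le_rfl
  have hkpow1 : (1:ℤ) ≤ (k:ℤ)^(d-1) := one_le_pow₀ hk1
  have hm1pos : 0 < m1 := by linarith
  -- upper bound on gaps at places ≤ 2k
  have hgapup : ∀ t : ℕ, t ≤ 2*k → P ((t:ℤ)+1) - P (t:ℤ) ≤ C * 3^(d-1) * m1 := by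
    intro t ht
    have hg := gap_le d a P hP (t:ℤ) (by positivity)
    have h1 : ((t:ℤ)+1)^(d-1) ≤ 3^(d-1) * (k:ℤ)^(d-1) := by
      calc ((t:ℤ)+1)^(d-1) ≤ (3*(k:ℤ))^(d-1) := by
            refine pow_le_pow_left₀ (by positivity) ?_ _
            have : (t:ℤ) ≤ 2*(k:ℤ) := by exact_mod_cast ht
            linarith
        _ = 3^(d-1) * (k:ℤ)^(d-1) := mul_pow _ _ _
    have h2 : ((t:ℤ)+1)^(d-1) ≤ 3^(d-1) * m1 := by
      have : (3:ℤ)^(d-1) * (k:ℤ)^(d-1) ≤ 3^(d-1) * m1 :=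
        mul_le_mul_of_nonneg_left hm1 (by linarith)
      linarith
    calc P ((t:ℤ)+1) - P (t:ℤ) ≤ A * ((d:ℤ) * ((t:ℤ)+1)^(d-1)) := hg
      _ ≤ A * ((d:ℤ) * (3^(d-1) * m1)) :=
          mul_le_mul_of_nonneg_left (mul_le_mul_of_nonneg_left h2 (by linarith))
            (by linarith)
      _ = C * 3^(d-1) * m1 := by rw [hCdef]; ring
  -- upper bound on m1
  have hm1up : m1 ≤ C * 2^(d-1) * (k:ℤ)^(d-1) := by
    have hg := gap_le d a P hP (k:ℤ) (by positivity)
    have h1 : ((k:ℤ)+1)^(d-1) ≤ 2^(d-1) * (k:ℤ)^(d-1) := by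
      calc ((k:ℤ)+1)^(d-1) ≤ (2*(k:ℤ))^(d-1) :=
            pow_le_pow_left₀ (by positivity) (by linarith) _
        _ = 2^(d-1) * (k:ℤ)^(d-1) := mul_pow _ _ _
    calc m1 ≤ A * ((d:ℤ) * ((k:ℤ)+1)^(d-1)) := hg
      _ ≤ A * ((d:ℤ) * (2^(d-1) * (k:ℤ)^(d-1))) :=
          mul_le_mul_of_nonneg_left (mul_le_mul_of_nonneg_left h1 (by linarith))
            (by linarith)
      _ = C * 2^(d-1) * (k:ℤ)^(d-1) := by rw [hCdef]; ring
  -- P k is big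
  have hkd : ((k:ℤ))^d = (k:ℤ)^(d-1) * (k:ℤ) := by
    rw [← pow_succ]; congr 1; omega
  have hPkge : ((k:ℤ) - A) * (k:ℤ)^(d-1) ≤ P (k:ℤ) := by
    have h1 := P_ge' d a P hP hd (k:ℤ) hk1
    have h2 : (0:ℤ) ≤ (a d - 1) * ((k:ℤ)^(d-1) * (k:ℤ)) :=
      mul_nonneg (by linarith) (by positivity)
    rw [hkd] at h1
    nlinarith
  have hbig : (qZ + 5) * m1 < P (k:ℤ) := by
    have h1 : (qZ+5)*m1 ≤ (qZ+5) * (C * 2^(d-1) * (k:ℤ)^(d-1)) :=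
      mul_le_mul_of_nonneg_left hm1up (by linarith)
    have h2 : (qZ+5) * (C * 2^(d-1) * (k:ℤ)^(d-1)) = ((qZ+5)*C*2^(d-1)) * (k:ℤ)^(d-1) := by
      ring
    have h3 : ((qZ+5)*C*2^(d-1)) * (k:ℤ)^(d-1) < ((k:ℤ) - A) * (k:ℤ)^(d-1) := by
      have hlt : (qZ+5)*C*2^(d-1) < (k:ℤ) - A := by linarith
      exact mul_lt_mul_of_pos_right hlt (by linarith)
    linarith
  -- k+1 ≤ k0
  have hk1le : k + 1 ≤ k0 := by
    apply hk0max
    have hc : ((k+1:ℕ):ℤ) = (k:ℤ)+1 := by push_cast; ring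
    rw [hc]
    have : 0 ≤ qZ * m1 := mul_nonneg (by linarith) (by linarith)
    have hm1e : P ((k:ℤ)+1) = P (k:ℤ) + m1 := by rw [hm1def]; ring
    rw [hm1e]
    linarith
  -- monotonicity
  have hmono : ∀ m n : ℕ, k ≤ m → m ≤ n → P (m:ℤ) ≤ P (n:ℤ) := by
    intro m n hm hmn
    induction n, hmn using Nat.le_induction with
    | base => exact le_refl _
    | succ n hn ih =>
      have hg := hm1low n (le_trans hm hn)
      have hpow : (0:ℤ) ≤ (n:ℤ)^(d-1) := by positivity
      have hc : ((n+1:ℕ):ℤ) = (n:ℤ)+1 := by push_cast; ring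
      rw [hc]
      linarith
  -- k0 ≤ 2k
  have hk02k : k0 ≤ 2*k := by
    by_contra hcon
    push_neg at hcon
    have h1 : P ((2*k:ℕ):ℤ) ≤ P (k0:ℤ) := hmono (2*k) k0 (by omega) (by omega)
    have hc : ((2*k:ℕ):ℤ) = 2*(k:ℤ) := by push_cast; ring
    rw [hc] at h1
    have h2 : 2 * P (k:ℤ) ≤ P (2*(k:ℤ)) := by
      have hu := P_le' d a P hP hd (k:ℤ) hk1
      have hl := P_ge' d a P hP hd (2*(k:ℤ)) (by linarith)
      have e1 : (2*(k:ℤ))^d = 4*2^(d-2)*((k:ℤ)^(d-1)*(k:ℤ)) := by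
        have h4 : (2:ℤ)^d = 4 * 2^(d-2) := by
          have hde : d = (d-2)+2 := by omega
          conv_lhs => rw [hde]
          rw [pow_add]; ring
        rw [mul_pow, h4, ← hkd]
      have e2 : (2*(k:ℤ))^(d-1) = 2*2^(d-2)*(k:ℤ)^(d-1) := by
        rw [mul_pow, h2e]
      rw [e1, e2] at hl
      rw [hkd] at hu
      have hkge : 2*(2:ℤ)^(d-2)*A ≤ (k:ℤ) := by rw [← h2e]; linarith
      have key := arith2 A (a d) (k:ℤ) ((k:ℤ)^(d-1)) ((2:ℤ)^(d-2))
        hA1 ha hk1 hkpow1 h2pow' hkge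
      nlinarith [key, hu, hl]
    linarith
  -- P(k0+1) ≥ bound
  have hk0succ : 2 * P (k:ℤ) - 4 * m1 ≤ P ((k0:ℤ)+1) := by
    by_contra hcon
    push_neg at hcon
    have := hk0max (k0+1) (by push_cast; linarith)
    omega
  -- gap at k0
  have hgk0 : P ((k0:ℤ)+1) - P (k0:ℤ) ≤ C * 3^(d-1) * m1 := hgapup k0 hk02k
  have hqe : C * 3^(d-1) = qZ - 5 := by rw [hqZdef]; ring
  -- second bullet
  have hB2 : P (k:ℤ) - qZ * m1 ≤ P (k0:ℤ) - P (k:ℤ) := by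
    rw [hqe] at hgk0
    linarith
  rw [hq]
  refine ⟨?_, hB2, ?_⟩
  · -- first bullet
    intro i hi hik0
    have ht2k : k + i ≤ 2*k := by omega
    have hg := hgapup (k+i) ht2k
    have e1 : ((k+i:ℕ):ℤ) = (k:ℤ) + (i:ℤ) := by push_cast; ring
    rw [e1] at hg
    rw [hqe] at hg
    have : 0 ≤ 5 * m1 := by linarith
    have e2 : P ((k:ℤ)+(i:ℤ)+1) = P ((k:ℤ)+(i:ℤ)+1) := rfl
    have : (k:ℤ) + (i:ℤ) + 1 = ((k:ℤ)+(i:ℤ)) + 1 := by ring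
    rw [this]
    linarith
  · -- coverage
    intro T hT1 hT2
    by_cases hcase : T ≤ P (k0:ℤ) - P (k:ℤ)
    · have hex : ∃ s : ℕ, 1 ≤ s ∧ k + s ≤ k0 ∧ T ≤ P ((k:ℤ)+(s:ℕ)) - P (k:ℤ) := by
        refine ⟨k0 - k, by omega, by omega, ?_⟩
        have e : (k:ℤ) + ((k0-k:ℕ):ℤ) = (k0:ℤ) := by omega
        rw [e]
        exact hcase
      have hspec := Nat.find_spec hex
      set s := Nat.find hex with hsdef
      obtain ⟨hs1, hsk0, hsT⟩ := hspec
      refine ⟨s, hs1, hsk0, ?_⟩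
      rw [abs_of_nonneg (by linarith)]
      by_cases hs2 : s = 1
      · rw [hs2] at hsT ⊢
        have : 0 ≤ (qZ - 1) * m1 := mul_nonneg (by linarith) (by linarith)
        have e : (k:ℤ) + ((1:ℕ):ℤ) = (k:ℤ) + 1 := by push_cast; ring
        rw [e] at hsT ⊢
        linarith
      · have hslt : s - 1 < s := by omega
        have hprev := Nat.find_min hex hslt
        push_neg at hprev
        have hprevT : P ((k:ℤ)+((s-1:ℕ):ℤ)) - P (k:ℤ) < T :=
          hprev (by omega) (by omega)
        have e0 : ((k + (s-1):ℕ):ℤ) = (k:ℤ) + ((s-1:ℕ):ℤ) := by push_cast; ring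
        have e1 : ((k + (s-1):ℕ):ℤ) + 1 = (k:ℤ) + (s:ℤ) := by omega
        have hg := hgapup (k + (s-1)) (by omega)
        rw [e1, e0] at hg
        rw [hqe] at hg
        linarith
    · push_neg at hcase
      refine ⟨k0 - k, by omega, by omega, ?_⟩
      have e : (k:ℤ) + ((k0-k:ℕ):ℤ) = (k0:ℤ) := by omega
      rw [e]
      rw [abs_of_nonpos (by linarith)]
      linarith
end
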